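/- arXiv:0902.1792 — 9 statements merged into one kernel-verified Lean document; each statement's English description precedes it below -/
import Mathlib

section
/- Let V be a finite ground set with marginals p_i ∈ [0,1], and let f : 2^V → ℝ be a non-decreasing submodular set function with f(∅) = 0. Then the correlation gap is bounded by the constant e/(e−1): L(f,V,{p_i}) ≤ (e/(e−1))·I(f,V,{p_i}). -/
open Finset

variable {W : Type*} [Fintype W] [DecidableEq W]

/-- Expected value of `f` under a distribution `α` on subsets of the ground set. -/
noncomputable def expVal (α : Finset W → ℝ) (f : Finset W → ℝ) : ℝ :=
  ∑ S : Finset W, α S * f S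

/-- `α` is a probability distribution on subsets of the ground set with marginals `p`. -/
def IsDistWithMarginals (p : W → ℝ) (α : Finset W → ℝ) : Prop :=
  (∀ S, 0 ≤ α S) ∧ (∑ S : Finset W, α S = 1) ∧
    (∀ i : W, ∑ S ∈ Finset.univ.filter (fun S => i ∈ S), α S = p i)

/-- The worst-case expected value `L(f,V,{p_i})`: supremum of the expected value of `f`
over all distributions with marginals `p`. -/
noncomputable def worstVal (p : W → ℝ) (f : Finset W → ℝ) : ℝ :=
  sSup {v | ∃ α, IsDistWithMarginals p α ∧ v = expVal α f}

/-- The expected value `I(f,V,{p_i})` of `f` when each element is included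
independently with probability `p i`. -/
noncomputable def indepVal (p : W → ℝ) (f : Finset W → ℝ) : ℝ :=
  ∑ S : Finset W, (∏ i ∈ S, p i) * (∏ i ∈ Sᶜ, (1 - p i)) * f S

/-- `χ` is an `(η,β)`-cost-sharing scheme for `f`.  An ordering of a subset `S` of the ground
set is encoded as a duplicate-free list `l` with `l.toFinset = S`; the restriction of the
ordering `l` to a subset `s` is `l.filter (· ∈ s)`.  The three conditions are:
`β`-budget balance, cross-monotonicity, and weak `η`-summability (the sum over `ℓ` of the
share of the `ℓ`-th element in the set of the first `ℓ` elements is at most `η·f(S)`). -/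
def IsCostShare (f : Finset W → ℝ) (η β : ℝ) (χ : List W → W → ℝ) : Prop :=
  (∀ l : List W, l ≠ [] → l.Nodup →
      ∑ i ∈ l.toFinset, χ l i ≤ f l.toFinset ∧ f l.toFinset / β ≤ ∑ i ∈ l.toFinset, χ l i) ∧
  (∀ l : List W, l.Nodup → ∀ s : Finset W, s ⊆ l.toFinset → ∀ i ∈ s,
      χ l i ≤ χ (l.filter (fun a => a ∈ s)) i) ∧
  (∀ l : List W, l ≠ [] → l.Nodup →
      ∑ ℓ : Fin l.length, χ (l.take (ℓ.1 + 1)) (l.get ℓ) ≤ η * f l.toFinset)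

set_option linter.unusedSectionVars false


section CorrGapAux

variable {V : Type*} [Fintype V] [DecidableEq V]

/-- Probability that independent sampling with marginals `y` produces exactly `S`. -/
noncomputable def cgP (y : V → ℝ) (S : Finset V) : ℝ :=
  (∏ i ∈ S, y i) * ∏ i ∈ Sᶜ, (1 - y i)

/-- The `i`-th "partial derivative" quantity. -/
noncomputable def cgM (f : Finset V → ℝ) (y : V → ℝ) (i : V) : ℝ :=
  ∑ S : Finset V, cgP y S * (f (insert i S) - f (S.erase i))

/-- The multilinear extension along the segment `t ↦ t • p`. -/
noncomputable def cgG (p : V → ℝ) (f : Finset V → ℝ) (t : ℝ) : ℝ :=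
  ∑ S : Finset V, cgP (fun i => t * p i) S * f S

lemma cgP_nonneg {y : V → ℝ} (hy : ∀ i, 0 ≤ y i ∧ y i ≤ 1) (S : Finset V) :
    0 ≤ cgP y S :=
  mul_nonneg (Finset.prod_nonneg fun i _ => (hy i).1)
    (Finset.prod_nonneg fun i _ => by linarith [(hy i).2])

lemma cgP_sum (y : V → ℝ) : ∑ S : Finset V, cgP y S = 1 := by
  have h := Finset.prod_add y (fun i => 1 - y i) (Finset.univ : Finset V)
  have h1 : ∀ i : V, y i + (1 - y i) = 1 := fun i => by ring
  simp only [h1, Finset.prod_const_one, Finset.powerset_univ] at h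
  calc ∑ S : Finset V, cgP y S
      = ∑ S : Finset V, (∏ i ∈ S, y i) * ∏ i ∈ Finset.univ \ S, (1 - y i) := by
        refine Finset.sum_congr rfl fun S _ => ?_
        rw [cgP, Finset.compl_eq_univ_sdiff]
    _ = 1 := h.symm

lemma cg_swap_mem (h : V → Finset V → ℝ) :
    ∑ S : Finset V, ∑ i ∈ S, h i S
      = ∑ i : V, ∑ S ∈ Finset.univ.filter (fun S => i ∈ S), h i S := by
  have h1 : ∀ S : Finset V, ∑ i ∈ S, h i S = ∑ i : V, if i ∈ S then h i S else 0 := by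
    intro S
    rw [Finset.sum_ite_mem, Finset.univ_inter]
  have h2 : ∀ i : V, ∑ S ∈ Finset.univ.filter (fun S => i ∈ S), h i S
      = ∑ S : Finset V, if i ∈ S then h i S else 0 := by
    intro i
    rw [Finset.sum_filter]
  simp_rw [h1, h2]
  exact Finset.sum_comm

lemma cg_swap_not_mem (h : V → Finset V → ℝ) :
    ∑ S : Finset V, ∑ i ∈ Sᶜ, h i S
      = ∑ i : V, ∑ S ∈ Finset.univ.filter (fun S => i ∉ S), h i S := by
  have h1 : ∀ S : Finset V, ∑ i ∈ Sᶜ, h i S = ∑ i : V, if i ∉ S then h i S else 0 := by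
    intro S
    simp_rw [← Finset.mem_compl (s := S)]
    rw [Finset.sum_ite_mem, Finset.univ_inter]
  have h2 : ∀ i : V, ∑ S ∈ Finset.univ.filter (fun S => i ∉ S), h i S
      = ∑ S : Finset V, if i ∉ S then h i S else 0 := by
    intro i
    rw [Finset.sum_filter]
  simp_rw [h1, h2]
  exact Finset.sum_comm

lemma cg_A (f : Finset V → ℝ) (y : V → ℝ) (i : V) :
    ∑ S : Finset V, cgP y S * f (insert i S)
      = ∑ S ∈ Finset.univ.filter (fun S => i ∈ S),
          ((∏ j ∈ S.erase i, y j) * ∏ j ∈ Sᶜ, (1 - y j)) * f S := by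
  rw [← Finset.sum_filter_add_sum_filter_not Finset.univ (fun S => i ∈ S)
    (fun S => cgP y S * f (insert i S))]
  have hb : ∑ S ∈ Finset.univ.filter (fun S => ¬ i ∈ S), cgP y S * f (insert i S)
      = ∑ S ∈ Finset.univ.filter (fun S => i ∈ S), cgP y (S.erase i) * f S := by
    refine Finset.sum_bij' (fun S _ => insert i S) (fun S _ => S.erase i) ?_ ?_ ?_ ?_ ?_
    · intro S hS
      simp only [Finset.mem_filter, Finset.mem_univ, true_and] at hS ⊢
      exact Finset.mem_insert_self i S
    · intro S hS
      simp only [Finset.mem_filter, Finset.mem_univ, true_and] at hS ⊢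
      exact Finset.notMem_erase i S
    · intro S hS
      simp only [Finset.mem_filter, Finset.mem_univ, true_and] at hS
      exact Finset.erase_insert hS
    · intro S hS
      simp only [Finset.mem_filter, Finset.mem_univ, true_and] at hS
      exact Finset.insert_erase hS
    · intro S hS
      simp only [Finset.mem_filter, Finset.mem_univ, true_and] at hS
      rw [Finset.erase_insert hS]
  rw [hb, ← Finset.sum_add_distrib]
  refine Finset.sum_congr rfl fun S hS => ?_
  simp only [Finset.mem_filter, Finset.mem_univ, true_and] at hS
  have e1 : insert i S = S := Finset.insert_eq_self.2 hS
  have e2 : (∏ j ∈ S, y j) = y i * ∏ j ∈ S.erase i, y j :=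
    (Finset.mul_prod_erase S y hS).symm
  have e3 : ∏ j ∈ (S.erase i)ᶜ, (1 - y j) = (1 - y i) * ∏ j ∈ Sᶜ, (1 - y j) := by
    rw [Finset.compl_erase, Finset.prod_insert (by simp [hS])]
  rw [e1, cgP, cgP, e2, e3]
  ring

lemma cg_B (f : Finset V → ℝ) (y : V → ℝ) (i : V) :
    ∑ S : Finset V, cgP y S * f (S.erase i)
      = ∑ S ∈ Finset.univ.filter (fun S => i ∉ S),
          ((∏ j ∈ S, y j) * ∏ j ∈ Sᶜ.erase i, (1 - y j)) * f S := by
  rw [← Finset.sum_filter_add_sum_filter_not Finset.univ (fun S => i ∉ S)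
    (fun S => cgP y S * f (S.erase i))]
  have hb : ∑ S ∈ Finset.univ.filter (fun S => ¬ i ∉ S), cgP y S * f (S.erase i)
      = ∑ S ∈ Finset.univ.filter (fun S => i ∉ S), cgP y (insert i S) * f S := by
    refine Finset.sum_bij' (fun S _ => S.erase i) (fun S _ => insert i S) ?_ ?_ ?_ ?_ ?_
    · intro S hS
      simp only [Finset.mem_filter, Finset.mem_univ, true_and] at hS ⊢
      exact Finset.notMem_erase i S
    · intro S hS
      simp only [Finset.mem_filter, Finset.mem_univ, true_and, not_not] at hS ⊢
      exact Finset.mem_insert_self i S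
    · intro S hS
      simp only [Finset.mem_filter, Finset.mem_univ, true_and, not_not] at hS
      exact Finset.insert_erase hS
    · intro S hS
      simp only [Finset.mem_filter, Finset.mem_univ, true_and] at hS
      exact Finset.erase_insert hS
    · intro S hS
      simp only [Finset.mem_filter, Finset.mem_univ, true_and, not_not] at hS
      rw [Finset.insert_erase hS]
  rw [hb, ← Finset.sum_add_distrib]
  refine Finset.sum_congr rfl fun S hS => ?_
  simp only [Finset.mem_filter, Finset.mem_univ, true_and] at hS
  have e1 : S.erase i = S := Finset.erase_eq_of_notMem hS
  have e2 : (∏ j ∈ Sᶜ, (1 - y j)) = (1 - y i) * ∏ j ∈ Sᶜ.erase i, (1 - y j) :=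
    (Finset.mul_prod_erase Sᶜ _ (Finset.mem_compl.2 hS)).symm
  have e3 : (∏ j ∈ insert i S, y j) = y i * ∏ j ∈ S, y j :=
    Finset.prod_insert hS
  have e4 : ∏ j ∈ (insert i S)ᶜ, (1 - y j) = ∏ j ∈ Sᶜ.erase i, (1 - y j) := by
    rw [Finset.compl_insert]
  rw [e1, cgP, cgP, e2, e3, e4]
  ring

/-- The algebraic rearrangement identifying the derivative of `cgG` with `∑ i, p i * cgM`. -/
lemma cg_alg (f : Finset V → ℝ) (y d : V → ℝ) :
    ∑ S : Finset V,
      ((∑ i ∈ S, (∏ j ∈ S.erase i, y j) * d i) * (∏ j ∈ Sᶜ, (1 - y j))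
        + (∏ j ∈ S, y j) * (∑ i ∈ Sᶜ, (∏ j ∈ Sᶜ.erase i, (1 - y j)) * (-d i))) * f S
    = ∑ i : V, d i * cgM f y i := by
  have lhs_eq : ∀ S : Finset V,
      ((∑ i ∈ S, (∏ j ∈ S.erase i, y j) * d i) * (∏ j ∈ Sᶜ, (1 - y j))
        + (∏ j ∈ S, y j) * (∑ i ∈ Sᶜ, (∏ j ∈ Sᶜ.erase i, (1 - y j)) * (-d i))) * f S
      = (∑ i ∈ S, d i * (((∏ j ∈ S.erase i, y j) * ∏ j ∈ Sᶜ, (1 - y j)) * f S))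
        - (∑ i ∈ Sᶜ, d i * (((∏ j ∈ S, y j) * ∏ j ∈ Sᶜ.erase i, (1 - y j)) * f S)) := by
    intro S
    have hA : (∑ i ∈ S, (∏ j ∈ S.erase i, y j) * d i) * (∏ j ∈ Sᶜ, (1 - y j)) * f S
        = ∑ i ∈ S, d i * (((∏ j ∈ S.erase i, y j) * ∏ j ∈ Sᶜ, (1 - y j)) * f S) := by
      rw [Finset.sum_mul, Finset.sum_mul]
      exact Finset.sum_congr rfl fun i _ => by ring
    have hB : (∏ j ∈ S, y j) * (∑ i ∈ Sᶜ, (∏ j ∈ Sᶜ.erase i, (1 - y j)) * (-d i)) * f S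
        = -∑ i ∈ Sᶜ, d i * (((∏ j ∈ S, y j) * ∏ j ∈ Sᶜ.erase i, (1 - y j)) * f S) := by
      rw [Finset.mul_sum, Finset.sum_mul, ← Finset.sum_neg_distrib]
      exact Finset.sum_congr rfl fun i _ => by ring
    rw [add_mul, hA, hB, ← sub_eq_add_neg]
  simp_rw [lhs_eq]
  rw [Finset.sum_sub_distrib]
  rw [cg_swap_mem (fun i S => d i * (((∏ j ∈ S.erase i, y j) * ∏ j ∈ Sᶜ, (1 - y j)) * f S))]
  rw [cg_swap_not_mem (fun i S => d i * (((∏ j ∈ S, y j) * ∏ j ∈ Sᶜ.erase i, (1 - y j)) * f S))]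
  rw [← Finset.sum_sub_distrib]
  refine Finset.sum_congr rfl fun i _ => ?_
  rw [← Finset.mul_sum, ← Finset.mul_sum, ← mul_sub]
  congr 1
  rw [cgM]
  simp_rw [mul_sub]
  rw [Finset.sum_sub_distrib, cg_A f y i, cg_B f y i]

end CorrGapAux

section CorrGapAux2

variable {V : Type*} [Fintype V] [DecidableEq V]

lemma cg_hasDerivAt (p : V → ℝ) (f : Finset V → ℝ) (t : ℝ) :
    HasDerivAt (cgG p f) (∑ i : V, p i * cgM f (fun j => t * p j) i) t := by
  have hu : ∀ S : Finset V, HasDerivAt (fun s : ℝ => ∏ i ∈ S, (s * p i))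
      (∑ i ∈ S, (∏ j ∈ S.erase i, (t * p j)) * p i) t := by
    intro S
    have := HasDerivAt.fun_finsetProd (u := S) (f := fun i (s : ℝ) => s * p i) (f' := p) (x := t)
      (fun i _ => by simpa using (hasDerivAt_id t).mul_const (p i))
    simpa [smul_eq_mul] using this
  have hv : ∀ S : Finset V, HasDerivAt (fun s : ℝ => ∏ i ∈ Sᶜ, (1 - s * p i))
      (∑ i ∈ Sᶜ, (∏ j ∈ Sᶜ.erase i, (1 - t * p j)) * (-p i)) t := by
    intro S
    have := HasDerivAt.fun_finsetProd (u := Sᶜ) (f := fun i (s : ℝ) => 1 - s * p i)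
      (f' := fun i => -p i) (x := t)
      (fun i _ => by
        simpa using ((hasDerivAt_id t).mul_const (p i)).const_sub (1 : ℝ))
    simpa [smul_eq_mul] using this
  have hG : HasDerivAt (cgG p f)
      (∑ S : Finset V,
        ((∑ i ∈ S, (∏ j ∈ S.erase i, (t * p j)) * p i) * (∏ j ∈ Sᶜ, (1 - t * p j))
          + (∏ j ∈ S, (t * p j)) * (∑ i ∈ Sᶜ, (∏ j ∈ Sᶜ.erase i, (1 - t * p j)) * (-p i))) * f S)
      t := by
    unfold cgG cgP
    exact HasDerivAt.fun_sum fun S _ => ((hu S).mul (hv S)).mul_const (f S)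
  rwa [cg_alg f (fun j => t * p j) p] at hG

lemma cg_cover (f : Finset V → ℝ)
    (hsub : ∀ T S : Finset V, T ⊆ S → ∀ i : V,
      f (insert i S) - f S ≤ f (insert i T) - f T)
    (S : Finset V) (U : Finset V) :
    f (S ∪ U) ≤ f S + ∑ i ∈ U, (f (insert i S) - f S) := by
  induction U using Finset.induction_on with
  | empty => simp
  | insert a U ha ih =>
    rw [Finset.union_insert, Finset.sum_insert ha]
    have h1 : f (insert a (S ∪ U)) - f (S ∪ U) ≤ f (insert a S) - f S :=
      hsub S (S ∪ U) Finset.subset_union_left a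
    linarith

lemma cg_pointwise (f : Finset V → ℝ)
    (hmono : ∀ S T : Finset V, S ⊆ T → f S ≤ f T)
    (hsub : ∀ T S : Finset V, T ⊆ S → ∀ i : V,
      f (insert i S) - f S ≤ f (insert i T) - f T)
    (S T : Finset V) :
    f T ≤ f S + ∑ i ∈ T, (f (insert i S) - f (S.erase i)) := by
  have h1 : f T ≤ f (S ∪ (T \ S)) := by
    refine hmono _ _ ?_
    intro x hx
    rcases Finset.decidableMem x S with h | h
    · exact Finset.mem_union_right _ (Finset.mem_sdiff.2 ⟨hx, h⟩)
    · exact Finset.mem_union_left _ h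
  have h2 := cg_cover f hsub S (T \ S)
  have h3 : ∑ i ∈ T \ S, (f (insert i S) - f S)
      ≤ ∑ i ∈ T, (f (insert i S) - f (S.erase i)) := by
    have hsplit : ∑ i ∈ T, (f (insert i S) - f (S.erase i))
        = ∑ i ∈ T \ (T ∩ S), (f (insert i S) - f (S.erase i))
          + ∑ i ∈ T ∩ S, (f (insert i S) - f (S.erase i)) :=
      (Finset.sum_sdiff Finset.inter_subset_left).symm
    have hTS : T \ (T ∩ S) = T \ S := Finset.sdiff_inter_self_left T S
    rw [hsplit, hTS]
    have e1 : ∑ i ∈ T \ S, (f (insert i S) - f S)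
        = ∑ i ∈ T \ S, (f (insert i S) - f (S.erase i)) := by
      refine Finset.sum_congr rfl fun i hi => ?_
      rw [Finset.erase_eq_of_notMem (Finset.mem_sdiff.1 hi).2]
    have e2 : 0 ≤ ∑ i ∈ T ∩ S, (f (insert i S) - f (S.erase i)) := by
      refine Finset.sum_nonneg fun i hi => ?_
      have hiS : i ∈ S := (Finset.mem_inter.1 hi).2
      have : f (S.erase i) ≤ f (insert i S) :=
        hmono _ _ ((Finset.erase_subset i S).trans (Finset.subset_insert i S))
      linarith
    linarith [e1]
  linarith

lemma cg_key (f : Finset V → ℝ)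
    (hmono : ∀ S T : Finset V, S ⊆ T → f S ≤ f T)
    (hsub : ∀ T S : Finset V, T ⊆ S → ∀ i : V,
      f (insert i S) - f S ≤ f (insert i T) - f T)
    {y : V → ℝ} (hy : ∀ i, 0 ≤ y i ∧ y i ≤ 1) (T : Finset V) :
    f T ≤ (∑ S : Finset V, cgP y S * f S) + ∑ i ∈ T, cgM f y i := by
  have h0 : f T = ∑ S : Finset V, cgP y S * f T := by
    rw [← Finset.sum_mul, cgP_sum, one_mul]
  have hM : ∑ i ∈ T, cgM f y i
      = ∑ S : Finset V, cgP y S * ∑ i ∈ T, (f (insert i S) - f (S.erase i)) := by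
    unfold cgM
    rw [Finset.sum_comm]
    exact Finset.sum_congr rfl fun S _ => (Finset.mul_sum _ _ _).symm
  rw [h0, hM, ← Finset.sum_add_distrib]
  refine Finset.sum_le_sum fun S _ => ?_
  rw [← mul_add]
  exact mul_le_mul_of_nonneg_left (cg_pointwise f hmono hsub S T) (cgP_nonneg hy S)

end CorrGapAux2

section CorrGapAux3

variable {V : Type*} [Fintype V] [DecidableEq V]

lemma cg_step (p : V → ℝ) (hp : ∀ i, 0 ≤ p i ∧ p i ≤ 1)
    (f : Finset V → ℝ)
    (hmono : ∀ S T : Finset V, S ⊆ T → f S ≤ f T)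
    (hsub : ∀ T S : Finset V, T ⊆ S → ∀ i : V,
      f (insert i S) - f S ≤ f (insert i T) - f T)
    (α : Finset V → ℝ) (hα : IsDistWithMarginals p α)
    {t : ℝ} (ht : t ∈ Set.Icc (0:ℝ) 1) :
    expVal α f ≤ cgG p f t + ∑ i : V, p i * cgM f (fun j => t * p j) i := by
  obtain ⟨hα0, hα1, hαm⟩ := hα
  have hy : ∀ i, 0 ≤ t * p i ∧ t * p i ≤ 1 := by
    intro i
    constructor
    · exact mul_nonneg ht.1 (hp i).1
    · exact mul_le_one₀ ht.2 (hp i).1 (hp i).2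
  have key : ∀ T : Finset V,
      f T ≤ (∑ S : Finset V, cgP (fun j => t * p j) S * f S)
        + ∑ i ∈ T, cgM f (fun j => t * p j) i :=
    cg_key f hmono hsub hy
  have h1 : expVal α f ≤ ∑ T : Finset V,
      α T * ((∑ S : Finset V, cgP (fun j => t * p j) S * f S)
        + ∑ i ∈ T, cgM f (fun j => t * p j) i) := by
    unfold expVal
    exact Finset.sum_le_sum fun T _ =>
      mul_le_mul_of_nonneg_left (key T) (hα0 T)
  have h2 : ∑ T : Finset V,
      α T * ((∑ S : Finset V, cgP (fun j => t * p j) S * f S)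
        + ∑ i ∈ T, cgM f (fun j => t * p j) i)
      = cgG p f t + ∑ i : V, p i * cgM f (fun j => t * p j) i := by
    simp_rw [mul_add]
    rw [Finset.sum_add_distrib]
    congr 1
    · rw [← Finset.sum_mul, hα1, one_mul, cgG]
    · have h3 : ∀ T : Finset V, α T * ∑ i ∈ T, cgM f (fun j => t * p j) i
          = ∑ i ∈ T, α T * cgM f (fun j => t * p j) i := fun T => Finset.mul_sum _ _ _
      simp_rw [h3]
      rw [cg_swap_mem (fun i T => α T * cgM f (fun j => t * p j) i)]
      refine Finset.sum_congr rfl fun i _ => ?_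
      rw [← Finset.sum_mul, hαm i]
  linarith [h2 ▸ h1]

lemma cg_zero (p : V → ℝ) (f : Finset V → ℝ) (hf0 : f ∅ = 0) : cgG p f 0 = 0 := by
  refine Finset.sum_eq_zero fun S _ => ?_
  rcases S.eq_empty_or_nonempty with rfl | ⟨i, hi⟩
  · rw [hf0, mul_zero]
  · have : cgP (fun j => (0:ℝ) * p j) S = 0 := by
      rw [cgP, Finset.prod_eq_zero hi (zero_mul (p i)), zero_mul]
    rw [this, zero_mul]

lemma cg_main (p : V → ℝ) (hp : ∀ i, 0 ≤ p i ∧ p i ≤ 1)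
    (f : Finset V → ℝ)
    (hmono : ∀ S T : Finset V, S ⊆ T → f S ≤ f T)
    (hf0 : f ∅ = 0)
    (hsub : ∀ T S : Finset V, T ⊆ S → ∀ i : V,
      f (insert i S) - f S ≤ f (insert i T) - f T)
    (α : Finset V → ℝ) (hα : IsDistWithMarginals p α) :
    expVal α f ≤ (Real.exp 1 / (Real.exp 1 - 1)) * cgG p f 1 := by
  set c := expVal α f with hc
  set g := cgG p f with hg
  set D : ℝ → ℝ := fun t => ∑ i : V, p i * cgM f (fun j => t * p j) i with hD
  have hle : ∀ t ∈ Set.Icc (0:ℝ) 1, c ≤ g t + D t := fun t ht =>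
    cg_step p hp f hmono hsub α hα ht
  set h : ℝ → ℝ := fun t => Real.exp t * (g t - c) with hh
  have hd : ∀ t : ℝ, HasDerivAt h (Real.exp t * (g t - c) + Real.exp t * D t) t := by
    intro t
    have := (Real.hasDerivAt_exp t).mul ((cg_hasDerivAt p f t).sub_const c)
    exact this
  have hmonoh : MonotoneOn h (Set.Icc (0:ℝ) 1) := by
    refine monotoneOn_of_deriv_nonneg (convex_Icc 0 1)
      (fun t _ => ((hd t).differentiableAt.continuousAt).continuousWithinAt)
      (fun t _ => (hd t).differentiableAt.differentiableWithinAt) ?_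
    intro t ht
    rw [interior_Icc] at ht
    rw [(hd t).deriv]
    have h1 : c ≤ g t + D t := hle t ⟨le_of_lt ht.1, le_of_lt ht.2⟩
    have h2 : (0:ℝ) ≤ g t + D t - c := by linarith
    calc (0:ℝ) ≤ Real.exp t * (g t + D t - c) := mul_nonneg (Real.exp_pos t).le h2
      _ = Real.exp t * (g t - c) + Real.exp t * D t := by ring
  have h01 : h 0 ≤ h 1 := hmonoh (Set.mem_Icc.2 ⟨le_refl 0, zero_le_one⟩)
    (Set.mem_Icc.2 ⟨zero_le_one, le_refl 1⟩) zero_le_one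
  have hzero : g 0 = 0 := cg_zero p f hf0
  have h0v : h 0 = -c := by
    rw [hh]; simp [hzero]
  have h1v : h 1 = Real.exp 1 * (g 1 - c) := rfl
  rw [h0v, h1v] at h01
  have hE : (1:ℝ) < Real.exp 1 := by
    have := Real.exp_one_gt_d9
    linarith
  rw [div_mul_eq_mul_div, le_div_iff₀ (by linarith : (0:ℝ) < Real.exp 1 - 1)]
  have hexp : Real.exp 1 * (g 1 - c) = Real.exp 1 * g 1 - Real.exp 1 * c := by ring
  have hgoal : c * (Real.exp 1 - 1) = Real.exp 1 * c - c := by ring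
  rw [hgoal]
  linarith [hexp ▸ h01]

end CorrGapAux3

/-- Corollary 2: for a non-decreasing submodular cost function with `f ∅ = 0`,
the correlation gap is bounded by `e/(e-1)`. -/
theorem correlation_gap_submodular
    {V : Type*} [Fintype V] [DecidableEq V]
    (p : V → ℝ) (hp : ∀ i, 0 ≤ p i ∧ p i ≤ 1)
    (f : Finset V → ℝ)
    (hmono : ∀ S T : Finset V, S ⊆ T → f S ≤ f T)
    (hf0 : f ∅ = 0)
    (hsub : ∀ T S : Finset V, T ⊆ S → ∀ i : V,
      f (insert i S) - f S ≤ f (insert i T) - f T) :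
    worstVal p f ≤ (Real.exp 1 / (Real.exp 1 - 1)) * indepVal p f := by
  have hg1 : cgG p f 1 = indepVal p f := by
    simp [cgG, cgP, indepVal]
  refine Real.sSup_le ?_ ?_
  · rintro v ⟨α, hα, rfl⟩
    rw [← hg1]
    exact cg_main p hp f hmono hf0 hsub α hα
  · have hind : 0 ≤ indepVal p f := by
      refine Finset.sum_nonneg fun S _ => ?_
      have h1 : 0 ≤ f S := hf0 ▸ hmono ∅ S (Finset.empty_subset S)
      have h2 : (0:ℝ) ≤ cgP p S := cgP_nonneg hp S
      rw [cgP] at h2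
      exact mul_nonneg h2 h1
    have hE : (0:ℝ) ≤ Real.exp 1 - 1 := by
      linarith [Real.exp_one_gt_d9]
    exact mul_nonneg (div_nonneg (Real.exp_pos 1).le hE) hind
end

section
/- Let (f,V,{p_i}) be an instance with f : 2^V → ℝ non-decreasing, and let (f',V',{p'_j}) be its split by positive integers {n_i : i ∈ V}. Then splitting does not change the worst-case expected value: L(f,V,{p_i}) = L(f',V',{p'_j}). -/
open Finset

variable {W : Type*} [Fintype W] [DecidableEq W]

set_option linter.unusedSectionVars false

section Helpers

variable {W : Type*} [Fintype W] [DecidableEq W]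

/-- Bernoulli product weights. -/
noncomputable def bern (r : W → ℝ) (S : Finset W) : ℝ :=
  (∏ i ∈ S, r i) * ∏ i ∈ Sᶜ, (1 - r i)

lemma sum_prod_compl (a b : W → ℝ) :
    ∑ S : Finset W, (∏ i ∈ S, a i) * ∏ i ∈ Sᶜ, b i = ∏ i : W, (a i + b i) := by
  rw [Finset.prod_add, Finset.powerset_univ]
  exact Finset.sum_congr rfl fun S _ => by rw [Finset.compl_eq_univ_sdiff]

lemma sum_prod_compl_mem (a b : W → ℝ) (i : W) :
    ∑ S ∈ Finset.univ.filter (fun S => i ∈ S), (∏ t ∈ S, a t) * ∏ t ∈ Sᶜ, b t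
      = a i * ∏ t ∈ Finset.univ.erase i, (a t + b t) := by
  rw [Finset.prod_add, Finset.mul_sum]
  refine Finset.sum_bij' (fun S _ => S.erase i) (fun S _ => insert i S) ?_ ?_ ?_ ?_ ?_
  · intro S hS
    simp only [Finset.mem_powerset]
    intro x hx
    simp only [Finset.mem_erase] at hx ⊢
    exact ⟨hx.1, Finset.mem_univ x⟩
  · intro S hS
    simp only [Finset.mem_filter, Finset.mem_univ, true_and]
    exact Finset.mem_insert_self i S
  · intro S hS
    simp only [Finset.mem_filter] at hS
    exact Finset.insert_erase hS.2
  · intro S hS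
    simp only [Finset.mem_powerset] at hS
    have : i ∉ S := fun h => (Finset.mem_erase.mp (hS h)).1 rfl
    exact Finset.erase_insert this
  · intro S hS
    simp only [Finset.mem_filter] at hS
    have hi : i ∈ S := hS.2
    have h1 : ∏ t ∈ S, a t = a i * ∏ t ∈ S.erase i, a t :=
      (Finset.mul_prod_erase S a hi).symm
    have h2 : Sᶜ = (Finset.univ.erase i) \ (S.erase i) := by
      ext x
      simp only [Finset.mem_compl, Finset.mem_sdiff, Finset.mem_erase, Finset.mem_univ,
        true_and, and_true]
      constructor
      · intro hx
        have hxi : x ≠ i := fun h => hx (h ▸ hi)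
        exact ⟨hxi, fun h => hx h.2⟩
      · intro hx h
        exact hx.2 ⟨hx.1, h⟩
    rw [h1, h2, mul_assoc]

lemma bern_nonneg {r : W → ℝ} (hr : ∀ i, 0 ≤ r i ∧ r i ≤ 1) (S : Finset W) :
    0 ≤ bern r S :=
  mul_nonneg (Finset.prod_nonneg fun i _ => (hr i).1)
    (Finset.prod_nonneg fun i _ => by linarith [(hr i).2])

lemma bern_sum (r : W → ℝ) : ∑ S : Finset W, bern r S = 1 := by
  simp only [bern]
  rw [sum_prod_compl]
  simp

lemma bern_marginal (r : W → ℝ) (i : W) :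
    ∑ S ∈ Finset.univ.filter (fun S => i ∈ S), bern r S = r i := by
  simp only [bern]
  rw [sum_prod_compl_mem]
  simp

lemma bern_isDist {r : W → ℝ} (hr : ∀ i, 0 ≤ r i ∧ r i ≤ 1) :
    IsDistWithMarginals r (bern r) :=
  ⟨bern_nonneg hr, bern_sum r, bern_marginal r⟩

lemma nonempty_distSet {q : W → ℝ} (hq : ∀ i, 0 ≤ q i ∧ q i ≤ 1) (f : Finset W → ℝ) :
    Set.Nonempty {v | ∃ α, IsDistWithMarginals q α ∧ v = expVal α f} :=
  ⟨expVal (bern q) f, bern q, bern_isDist hq, rfl⟩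

lemma bddAbove_distSet (q : W → ℝ) (f : Finset W → ℝ) :
    BddAbove {v | ∃ α, IsDistWithMarginals q α ∧ v = expVal α f} := by
  refine ⟨Finset.univ.sup' ⟨∅, Finset.mem_univ ∅⟩ f, ?_⟩
  rintro v ⟨α, ⟨h0, h1, _⟩, rfl⟩
  calc expVal α f = ∑ S : Finset W, α S * f S := rfl
    _ ≤ ∑ S : Finset W, α S * Finset.univ.sup' ⟨∅, Finset.mem_univ ∅⟩ f :=
        Finset.sum_le_sum fun S _ =>
          mul_le_mul_of_nonneg_left (Finset.le_sup' f (Finset.mem_univ S)) (h0 S)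
    _ = Finset.univ.sup' ⟨∅, Finset.mem_univ ∅⟩ f := by rw [← Finset.sum_mul, h1, one_mul]

variable {X : Type*} [Fintype X]

/-- Pushforward of a weight function along a map to subsets. -/
noncomputable def push (μ : X → ℝ) (m : X → Finset W) (T : Finset W) : ℝ :=
  ∑ x : X, if m x = T then μ x else 0

lemma push_nonneg {μ : X → ℝ} (hμ : ∀ x, 0 ≤ μ x) (m : X → Finset W) (T : Finset W) :
    0 ≤ push μ m T :=
  Finset.sum_nonneg fun x _ => by by_cases h : m x = T <;> simp [h, hμ x]

lemma push_sum (μ : X → ℝ) (m : X → Finset W) :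
    ∑ T : Finset W, push μ m T = ∑ x : X, μ x := by
  unfold push
  rw [Finset.sum_comm]
  exact Finset.sum_congr rfl fun x _ => by rw [Finset.sum_ite_eq]; simp

lemma push_marginal (μ : X → ℝ) (m : X → Finset W) (i : W) :
    ∑ T ∈ Finset.univ.filter (fun T => i ∈ T), push μ m T
      = ∑ x : X, if i ∈ m x then μ x else 0 := by
  rw [Finset.sum_filter]
  unfold push
  calc ∑ T : Finset W, (if i ∈ T then ∑ x : X, if m x = T then μ x else 0 else 0)
      = ∑ T : Finset W, ∑ x : X, if m x = T then (if i ∈ T then μ x else 0) else 0 := by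
        refine Finset.sum_congr rfl fun T _ => ?_
        by_cases h : i ∈ T <;> simp [h]
    _ = ∑ x : X, ∑ T : Finset W, if m x = T then (if i ∈ T then μ x else 0) else 0 :=
        Finset.sum_comm
    _ = ∑ x : X, if i ∈ m x then μ x else 0 :=
        Finset.sum_congr rfl fun x _ => by rw [Finset.sum_ite_eq]; simp

lemma push_expVal (μ : X → ℝ) (m : X → Finset W) (f : Finset W → ℝ) :
    expVal (push μ m) f = ∑ x : X, μ x * f (m x) := by
  unfold expVal push
  calc ∑ T : Finset W, (∑ x : X, if m x = T then μ x else 0) * f T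
      = ∑ T : Finset W, ∑ x : X, (if m x = T then μ x * f T else 0) := by
        refine Finset.sum_congr rfl fun T _ => ?_
        rw [Finset.sum_mul]
        exact Finset.sum_congr rfl fun x _ => by by_cases h : m x = T <;> simp [h]
    _ = ∑ x : X, ∑ T : Finset W, (if m x = T then μ x * f T else 0) := Finset.sum_comm
    _ = ∑ x : X, μ x * f (m x) :=
        Finset.sum_congr rfl fun x _ => by rw [Finset.sum_ite_eq]; simp

end Helpers

lemma sum_pi_eval {V : Type*} [Fintype V] [DecidableEq V] (n : V → ℕ) (hn : ∀ i, 1 ≤ n i)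
    (i : V) (k : Fin (n i)) :
    ∑ g : (∀ t, Fin (n t)),
        (if g i = k then ((Fintype.card (∀ t, Fin (n t)) : ℝ))⁻¹ else 0) = (n i : ℝ)⁻¹ := by
  classical
  set c : ℝ := ((Fintype.card (∀ t, Fin (n t)) : ℝ))⁻¹ with hc
  set R := Fintype.card (∀ j : {j // j ≠ i}, Fin (n (j : V))) with hR
  haveI : ∀ j : V, Nonempty (Fin (n j)) := fun j => ⟨⟨0, hn j⟩⟩
  have hRpos : 0 < R := Fintype.card_pos
  have hcard : Fintype.card (∀ t, Fin (n t)) = n i * R := by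
    rw [Fintype.card_congr (Equiv.piSplitAt i fun t => Fin (n t)), Fintype.card_prod,
      Fintype.card_fin]
  have h1 : ∑ g : (∀ t, Fin (n t)), (if g i = k then c else 0)
      = ∑ q : Fin (n i) × (∀ j : {j // j ≠ i}, Fin (n (j : V))), (if q.1 = k then c else 0) :=
    Fintype.sum_equiv (Equiv.piSplitAt i fun t => Fin (n t)) _ _ (fun g => rfl)
  rw [h1, Fintype.sum_prod_type]
  have h2 : ∀ x : Fin (n i),
      (∑ _y : (∀ j : {j // j ≠ i}, Fin (n (j : V))), if x = k then c else 0)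
        = if x = k then (R : ℝ) * c else 0 := by
    intro x
    by_cases h : x = k <;> simp [h, hR, mul_comm]
  simp only [h2]
  rw [Finset.sum_ite_eq' Finset.univ k fun _ => (R : ℝ) * c]
  have hn0 : (n i : ℝ) ≠ 0 := Nat.cast_ne_zero.mpr (Nat.one_le_iff_ne_zero.mp (hn i))
  have hR0 : (R : ℝ) ≠ 0 := Nat.cast_ne_zero.mpr hRpos.ne'
  simp only [Finset.mem_univ, if_true, hc, hcard]
  push_cast
  field_simp

lemma mem_image_sigma_mk {V : Type*} [DecidableEq V] {n : V → ℕ}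
    (S : Finset V) (g : ∀ t, Fin (n t)) (i : V) (k : Fin (n i)) :
    (⟨i, k⟩ : Σ t, Fin (n t)) ∈ S.image (fun t => (⟨t, g t⟩ : Σ t, Fin (n t)))
      ↔ i ∈ S ∧ g i = k := by
  classical
  rw [Finset.mem_image]
  constructor
  · rintro ⟨t, ht, heq⟩
    obtain ⟨rfl, hk⟩ := Sigma.mk.inj_iff.mp heq
    exact ⟨ht, eq_of_heq hk⟩
  · rintro ⟨hi, rfl⟩
    exact ⟨i, hi, rfl⟩

lemma image_sigma_fst {V : Type*} [DecidableEq V] {n : V → ℕ}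
    (S : Finset V) (g : ∀ t, Fin (n t)) :
    ((S.image (fun t => (⟨t, g t⟩ : Σ t, Fin (n t)))).image Sigma.fst) = S := by
  classical
  rw [Finset.image_image]
  exact Finset.image_id


/-- Property 2: splitting each element `i` into `n i` copies (each copy getting marginal
probability `p i / n i`, and the new cost function being `f ∘ Π`, where `Π` maps a set of
copies to the set of original elements having at least one copy in it) does not change the
worst-case expected value. -/
theorem split_preserves_worst_case
    {V : Type*} [Fintype V] [DecidableEq V]
    (p : V → ℝ) (hp : ∀ i, 0 ≤ p i ∧ p i ≤ 1)
    (f : Finset V → ℝ)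
    (hmono : ∀ S T : Finset V, S ⊆ T → f S ≤ f T)
    (n : V → ℕ) (hn : ∀ i, 1 ≤ n i) :
    worstVal p f
      = worstVal (fun j : (Σ i : V, Fin (n i)) => p j.1 / (n j.1 : ℝ))
          (fun S' : Finset (Σ i : V, Fin (n i)) => f (S'.image Sigma.fst)) := by
  classical
  have hnn : ∀ i : V, (0 : ℝ) < (n i : ℝ) := fun i => by
    have : 0 < n i := hn i
    exact_mod_cast this
  set p' : (Σ i : V, Fin (n i)) → ℝ := fun j => p j.1 / (n j.1 : ℝ) with hp'def
  set f' : Finset (Σ i : V, Fin (n i)) → ℝ := fun S' => f (S'.image Sigma.fst) with hf'def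
  have hp' : ∀ j, 0 ≤ p' j ∧ p' j ≤ 1 := by
    intro j
    constructor
    · exact div_nonneg (hp j.1).1 (hnn j.1).le
    · rw [div_le_one (hnn j.1)]
      calc p j.1 ≤ 1 := (hp j.1).2
        _ ≤ (n j.1 : ℝ) := by exact_mod_cast hn j.1
  show worstVal p f = worstVal p' f'
  unfold worstVal
  apply le_antisymm
  · -- L(f,V,p) ≤ L(f',V',p')
    refine csSup_le (nonempty_distSet hp f) ?_
    rintro v ⟨α, ⟨hα0, hα1, hαm⟩, rfl⟩
    haveI : ∀ j : V, Nonempty (Fin (n j)) := fun j => ⟨⟨0, hn j⟩⟩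
    set c : ℝ := ((Fintype.card (∀ t : V, Fin (n t)) : ℝ))⁻¹ with hc
    have hcard0 : ((Fintype.card (∀ t : V, Fin (n t)) : ℝ)) ≠ 0 :=
      Nat.cast_ne_zero.mpr Fintype.card_pos.ne'
    have hcc : (Fintype.card (∀ t : V, Fin (n t)) : ℝ) * c = 1 := mul_inv_cancel₀ hcard0
    have hc0 : 0 ≤ c := by positivity
    set μ : Finset V × (∀ t : V, Fin (n t)) → ℝ := fun x => α x.1 * c with hμdef
    set m : Finset V × (∀ t : V, Fin (n t)) → Finset (Σ i : V, Fin (n i)) :=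
      fun x => x.1.image (fun t => ⟨t, x.2 t⟩) with hmdef
    have hμ0 : ∀ x, 0 ≤ μ x := fun x => mul_nonneg (hα0 x.1) hc0
    have hsum : ∑ x : Finset V × (∀ t : V, Fin (n t)), μ x = 1 := by
      rw [Fintype.sum_prod_type]
      have hS : ∀ S : Finset V, (∑ _g : (∀ t : V, Fin (n t)), μ (S, _g)) = α S := by
        intro S
        show (∑ _g : (∀ t : V, Fin (n t)), α S * c) = α S
        rw [Finset.sum_const, Finset.card_univ, nsmul_eq_mul]
        rw [mul_left_comm, hcc, mul_one]
      simp only [hS]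
      exact hα1
    have hmarg : ∀ j : Σ i : V, Fin (n i),
        ∑ S' ∈ Finset.univ.filter (fun S' => j ∈ S'), push μ m S' = p' j := by
      rintro ⟨i, k⟩
      rw [push_marginal, Fintype.sum_prod_type]
      have hstep : ∀ (S : Finset V) (g : ∀ t : V, Fin (n t)),
          (if (⟨i, k⟩ : Σ t : V, Fin (n t)) ∈ m (S, g) then μ (S, g) else 0)
            = if i ∈ S then (if g i = k then α S * c else 0) else 0 := by
        intro S g
        rw [show m (S, g) = S.image (fun t => ⟨t, g t⟩) from rfl,
          if_congr (mem_image_sigma_mk S g i k) rfl rfl, ite_and]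
      simp only [hstep]
      have hinner : ∀ S : Finset V,
          (∑ g : (∀ t : V, Fin (n t)), if i ∈ S then (if g i = k then α S * c else 0) else 0)
            = if i ∈ S then α S * (n i : ℝ)⁻¹ else 0 := by
        intro S
        by_cases hS : i ∈ S
        · simp only [hS, if_true]
          calc ∑ g : (∀ t : V, Fin (n t)), (if g i = k then α S * c else 0)
              = ∑ g : (∀ t : V, Fin (n t)), α S * (if g i = k then c else 0) := by
                refine Finset.sum_congr rfl fun g _ => ?_
                by_cases h : g i = k <;> simp [h]
            _ = α S * ∑ g : (∀ t : V, Fin (n t)), (if g i = k then c else 0) := by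
                rw [Finset.mul_sum]
            _ = α S * (n i : ℝ)⁻¹ := by rw [hc, sum_pi_eval n hn i k]
        · simp [hS]
      simp only [hinner]
      rw [← Finset.sum_filter, ← Finset.sum_mul, hαm i]
      show p i * (n i : ℝ)⁻¹ = p i / (n i : ℝ)
      rw [div_eq_mul_inv]
    have hexp : expVal (push μ m) f' = expVal α f := by
      rw [push_expVal, Fintype.sum_prod_type]
      have hterm : ∀ (S : Finset V) (g : ∀ t : V, Fin (n t)),
          μ (S, g) * f' (m (S, g)) = α S * c * f S := by
        intro S g
        show α S * c * f ((S.image (fun t => ⟨t, g t⟩)).image Sigma.fst) = α S * c * f S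
        rw [image_sigma_fst]
      simp only [hterm]
      unfold expVal
      refine Finset.sum_congr rfl fun S _ => ?_
      rw [Finset.sum_const, Finset.card_univ, nsmul_eq_mul]
      calc (Fintype.card (∀ t : V, Fin (n t)) : ℝ) * (α S * c * f S)
          = (Fintype.card (∀ t : V, Fin (n t)) : ℝ) * c * (α S * f S) := by ring
        _ = α S * f S := by rw [hcc, one_mul]
    refine le_csSup (bddAbove_distSet p' f') ?_
    exact ⟨push μ m, ⟨push_nonneg hμ0 m, by rw [push_sum]; exact hsum, hmarg⟩, hexp.symm⟩
  · -- L(f',V',p') ≤ L(f,V,p)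
    refine csSup_le (nonempty_distSet hp' f') ?_
    rintro v ⟨α, ⟨hα0, hα1, hαm⟩, rfl⟩
    set q : V → ℝ := fun i =>
      ∑ S' ∈ Finset.univ.filter (fun S' => i ∈ S'.image Sigma.fst), α S' with hqdef
    have hq0 : ∀ i, 0 ≤ q i := fun i => Finset.sum_nonneg fun S' _ => hα0 S'
    have hq1 : ∀ i, q i ≤ 1 := fun i => by
      rw [← hα1]
      exact Finset.sum_le_sum_of_subset_of_nonneg (Finset.filter_subset _ _)
        (fun S' _ _ => hα0 S')
    have hqp : ∀ i, q i ≤ p i := by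
      intro i
      have step1 : q i ≤ ∑ S' : Finset (Σ t : V, Fin (n t)), ∑ k : Fin (n i),
          (if (⟨i, k⟩ : Σ t : V, Fin (n t)) ∈ S' then α S' else 0) := by
        simp only [hqdef]
        rw [Finset.sum_filter]
        refine Finset.sum_le_sum fun S' _ => ?_
        by_cases h : i ∈ S'.image Sigma.fst
        · rw [if_pos h]
          obtain ⟨x, hx, hfst⟩ := Finset.mem_image.mp h
          obtain ⟨i', k⟩ := x
          cases hfst
          show α S' ≤ ∑ k' : Fin (n i'),
            if (⟨i', k'⟩ : Σ t : V, Fin (n t)) ∈ S' then α S' else 0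
          have hs := Finset.single_le_sum
            (f := fun k' : Fin (n i') => if (⟨i', k'⟩ : Σ t : V, Fin (n t)) ∈ S' then α S' else 0)
            (fun k' _ => by
              by_cases hk : (⟨i', k'⟩ : Σ t : V, Fin (n t)) ∈ S' <;> simp [hk, hα0 S'])
            (Finset.mem_univ k)
          rwa [if_pos hx] at hs
        · rw [if_neg h]
          exact Finset.sum_nonneg fun k _ => by
            by_cases hk : (⟨i, k⟩ : Σ t : V, Fin (n t)) ∈ S' <;> simp [hk, hα0 S']
      have step2 : (∑ S' : Finset (Σ t : V, Fin (n t)), ∑ k : Fin (n i),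
          if (⟨i, k⟩ : Σ t : V, Fin (n t)) ∈ S' then α S' else 0) = p i := by
        rw [Finset.sum_comm]
        have hk : ∀ k : Fin (n i),
            (∑ S' : Finset (Σ t : V, Fin (n t)),
              if (⟨i, k⟩ : Σ t : V, Fin (n t)) ∈ S' then α S' else 0) = p i / (n i : ℝ) := by
          intro k
          rw [← Finset.sum_filter]
          exact hαm ⟨i, k⟩
        simp only [hk]
        rw [Finset.sum_const, Finset.card_univ, Fintype.card_fin, nsmul_eq_mul]
        have hne : (n i : ℝ) ≠ 0 := (hnn i).ne'
        field_simp
      exact le_of_le_of_eq step1 step2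
    set r : V → ℝ := fun i => (p i - q i) / (1 - q i) with hrdef
    have hr : ∀ i, 0 ≤ r i ∧ r i ≤ 1 := by
      intro i
      by_cases h : q i = 1
      · have : r i = 0 := by simp [hrdef, h]
        rw [this]
        exact ⟨le_refl 0, zero_le_one⟩
      · have hlt : q i < 1 := lt_of_le_of_ne (hq1 i) h
        constructor
        · apply div_nonneg <;> linarith [hqp i]
        · rw [div_le_one (by linarith)]
          linarith [(hp i).2]
    have hkey : ∀ i, (1 - q i) * r i = p i - q i := by
      intro i
      by_cases h : q i = 1
      · have hp1 : p i = 1 := le_antisymm (hp i).2 (h ▸ hqp i)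
        simp [hrdef, h, hp1]
      · have hne : 1 - q i ≠ 0 := fun hh => h (by linarith)
        rw [hrdef]
        show (1 - q i) * ((p i - q i) / (1 - q i)) = p i - q i
        rw [mul_comm, div_mul_cancel₀ _ hne]
    set μ : Finset (Σ t : V, Fin (n t)) × Finset V → ℝ :=
      fun x => α x.1 * bern r x.2 with hμdef
    set m : Finset (Σ t : V, Fin (n t)) × Finset V → Finset V :=
      fun x => x.1.image Sigma.fst ∪ x.2 with hmdef
    have hμ0 : ∀ x, 0 ≤ μ x := fun x => mul_nonneg (hα0 x.1) (bern_nonneg hr x.2)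
    have hsum : ∑ x : Finset (Σ t : V, Fin (n t)) × Finset V, μ x = 1 := by
      rw [Fintype.sum_prod_type]
      have hS : ∀ S' : Finset (Σ t : V, Fin (n t)),
          (∑ T : Finset V, μ (S', T)) = α S' := by
        intro S'
        show (∑ T : Finset V, α S' * bern r T) = α S'
        rw [← Finset.mul_sum, bern_sum, mul_one]
      simp only [hS]
      exact hα1
    have hmarg : ∀ i : V,
        ∑ T ∈ Finset.univ.filter (fun T => i ∈ T), push μ m T = p i := by
      intro i
      rw [push_marginal, Fintype.sum_prod_type]
      have hinner : ∀ S' : Finset (Σ t : V, Fin (n t)),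
          (∑ T : Finset V, if i ∈ m (S', T) then μ (S', T) else 0)
            = if i ∈ S'.image Sigma.fst then α S' else α S' * r i := by
        intro S'
        by_cases h : i ∈ S'.image Sigma.fst
        · rw [if_pos h]
          have hT : ∀ T : Finset V,
              (if i ∈ m (S', T) then μ (S', T) else 0) = α S' * bern r T := fun T =>
            if_pos (Finset.mem_union_left _ h)
          simp only [hT]
          rw [← Finset.mul_sum, bern_sum, mul_one]
        · rw [if_neg h]
          have hT : ∀ T : Finset V,
              (if i ∈ m (S', T) then μ (S', T) else 0)
                = (if i ∈ T then α S' * bern r T else 0) := by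
            intro T
            refine if_congr ?_ rfl rfl
            show i ∈ S'.image Sigma.fst ∪ T ↔ i ∈ T
            rw [Finset.mem_union]
            exact or_iff_right h
          simp only [hT]
          rw [← Finset.sum_filter, ← Finset.mul_sum, bern_marginal]
      simp only [hinner]
      rw [Finset.sum_ite]
      have h2 : ∑ S' ∈ Finset.univ.filter (fun S' => ¬ i ∈ S'.image Sigma.fst), α S' * r i
          = (1 - q i) * r i := by
        rw [← Finset.sum_mul]
        congr 1
        have hsplit := Finset.sum_filter_add_sum_filter_not Finset.univ
          (fun S' : Finset (Σ t : V, Fin (n t)) => i ∈ S'.image Sigma.fst) α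
        rw [hα1] at hsplit
        have hqi : q i = ∑ S' ∈ Finset.univ.filter
            (fun S' : Finset (Σ t : V, Fin (n t)) => i ∈ S'.image Sigma.fst), α S' := rfl
        linarith
      rw [h2, hkey i]
      have hqi : q i = ∑ S' ∈ Finset.univ.filter
          (fun S' : Finset (Σ t : V, Fin (n t)) => i ∈ S'.image Sigma.fst), α S' := rfl
      linarith
    have hexp : expVal α f' ≤ expVal (push μ m) f := by
      rw [push_expVal]
      have hge : ∑ x : Finset (Σ t : V, Fin (n t)) × Finset V, μ x * f (x.1.image Sigma.fst)
          ≤ ∑ x : Finset (Σ t : V, Fin (n t)) × Finset V, μ x * f (m x) := by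
        refine Finset.sum_le_sum fun x _ => ?_
        exact mul_le_mul_of_nonneg_left
          (hmono _ _ Finset.subset_union_left) (hμ0 x)
      refine le_trans ?_ hge
      rw [Fintype.sum_prod_type]
      have hS : ∀ S' : Finset (Σ t : V, Fin (n t)),
          (∑ T : Finset V, μ (S', T) * f (S'.image Sigma.fst)) = α S' * f' S' := by
        intro S'
        calc ∑ T : Finset V, μ (S', T) * f (S'.image Sigma.fst)
            = ∑ T : Finset V, (α S' * f (S'.image Sigma.fst)) * bern r T := by
              refine Finset.sum_congr rfl fun T _ => ?_
              show α S' * bern r T * f (S'.image Sigma.fst) = _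
              ring
          _ = α S' * f (S'.image Sigma.fst) := by rw [← Finset.mul_sum, bern_sum, mul_one]
          _ = α S' * f' S' := rfl
      simp only [hS]
      exact le_of_eq rfl
    refine le_trans hexp (le_csSup (bddAbove_distSet p f) ?_)
    exact ⟨push μ m, ⟨push_nonneg hμ0 m, by rw [push_sum]; exact hsum, hmarg⟩, rfl⟩
end

section
/- Let (f,V,{p_i}) be an instance with f : 2^V → ℝ non-decreasing, and let (f',V',{p'_j}) be its split by positive integers {n_i : i ∈ V}. Then splitting can only decrease the expected value under the independent distribution: I(f',V',{p'_j}) ≤ I(f,V,{p_i}). -/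
open Finset

variable {W : Type*} [Fintype W] [DecidableEq W]

section Aux
variable {W : Type*} [Fintype W] [DecidableEq W]

lemma sum_wt (p : W → ℝ) :
    ∑ S : Finset W, (∏ i ∈ S, p i) * (∏ i ∈ Sᶜ, (1 - p i)) = 1 := by
  have h : ∏ i ∈ (univ : Finset W), (p i + (1 - p i)) = 1 := by simp
  rw [Finset.prod_add] at h
  calc ∑ S : Finset W, (∏ i ∈ S, p i) * (∏ i ∈ Sᶜ, (1 - p i))
      = ∑ t ∈ univ.powerset, (∏ i ∈ t, p i) * ∏ i ∈ univ \ t, (1 - p i) := by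
        rw [Finset.powerset_univ]
        exact Finset.sum_congr rfl fun S _ => by rw [Finset.compl_eq_univ_sdiff]
    _ = 1 := h

lemma wt_nonneg {p : W → ℝ} (hp : ∀ i, 0 ≤ p i ∧ p i ≤ 1) (S : Finset W) :
    0 ≤ (∏ i ∈ S, p i) * (∏ i ∈ Sᶜ, (1 - p i)) :=
  mul_nonneg (Finset.prod_nonneg fun i _ => (hp i).1)
    (Finset.prod_nonneg fun i _ => by linarith [(hp i).2])

lemma indepVal_update (r : W → ℝ) (f : Finset W → ℝ) (i : W) (t : ℝ) :
    indepVal (Function.update r i t) f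
      = ∑ S ∈ univ.filter (fun S : Finset W => i ∉ S),
          ((∏ j ∈ S, r j) * ∏ j ∈ Sᶜ.erase i, (1 - r j)) *
            (t * f (insert i S) + (1 - t) * f S) := by
  unfold indepVal
  rw [← Finset.sum_filter_add_sum_filter_not univ (fun S : Finset W => i ∈ S)]
  have h1 : ∑ S ∈ univ.filter (fun S : Finset W => i ∈ S),
      (∏ j ∈ S, Function.update r i t j) * (∏ j ∈ Sᶜ, (1 - Function.update r i t j)) * f S
      = ∑ S ∈ univ.filter (fun S : Finset W => i ∉ S),
        ((∏ j ∈ S, r j) * ∏ j ∈ Sᶜ.erase i, (1 - r j)) * (t * f (insert i S)) := by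
    refine Finset.sum_bij' (fun S _ => S.erase i) (fun S _ => insert i S)
      ?hi ?hj ?li ?ri ?hval
    case hi =>
      intro S hS
      simp only [mem_filter, mem_univ, true_and]
      exact Finset.notMem_erase i S
    case hj =>
      intro S hS
      simp only [mem_filter, mem_univ, true_and]
      exact Finset.mem_insert_self i S
    case li =>
      intro S hS
      simp only [mem_filter, mem_univ, true_and] at hS
      exact Finset.insert_erase hS
    case ri =>
      intro S hS
      simp only [mem_filter, mem_univ, true_and] at hS
      exact Finset.erase_insert hS
    case hval =>
      intro S hS
      simp only [mem_filter, mem_univ, true_and] at hS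
      obtain ⟨T, hiT, rfl⟩ : ∃ T, i ∉ T ∧ S = insert i T :=
        ⟨S.erase i, Finset.notMem_erase i S, (Finset.insert_erase hS).symm⟩
      simp only [Finset.erase_insert hiT]
      have e1 : ∏ j ∈ insert i T, Function.update r i t j = t * ∏ j ∈ T, r j := by
        rw [Finset.prod_insert hiT, Function.update_self]
        exact congrArg _ (Finset.prod_congr rfl fun j hj =>
          Function.update_of_ne (ne_of_mem_of_not_mem hj hiT) _ _)
      have e2 : ∏ j ∈ (insert i T)ᶜ, (1 - Function.update r i t j)
          = ∏ j ∈ Tᶜ.erase i, (1 - r j) := by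
        rw [Finset.compl_insert]
        exact Finset.prod_congr rfl fun j hj => by
          rw [Function.update_of_ne (Finset.ne_of_mem_erase hj)]
      rw [e1, e2]
      ring
  have h2 : ∑ S ∈ univ.filter (fun S : Finset W => i ∉ S),
      (∏ j ∈ S, Function.update r i t j) * (∏ j ∈ Sᶜ, (1 - Function.update r i t j)) * f S
      = ∑ S ∈ univ.filter (fun S : Finset W => i ∉ S),
        ((∏ j ∈ S, r j) * ∏ j ∈ Sᶜ.erase i, (1 - r j)) * ((1 - t) * f S) := by
    apply Finset.sum_congr rfl
    intro S hS
    simp only [mem_filter, mem_univ, true_and] at hS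
    have hic : i ∈ Sᶜ := Finset.mem_compl.2 hS
    have e1 : ∏ j ∈ S, Function.update r i t j = ∏ j ∈ S, r j :=
      Finset.prod_congr rfl fun j hj =>
        Function.update_of_ne (ne_of_mem_of_not_mem hj hS) _ _
    have e2 : ∏ j ∈ Sᶜ, (1 - Function.update r i t j)
        = (1 - t) * ∏ j ∈ Sᶜ.erase i, (1 - r j) := by
      rw [← Finset.insert_erase hic, Finset.prod_insert (Finset.notMem_erase i _),
        Function.update_self, Finset.erase_insert (Finset.notMem_erase i _)]
      exact congrArg _ (Finset.prod_congr rfl fun j hj => by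
        rw [Function.update_of_ne (Finset.ne_of_mem_erase hj)])
    rw [e1, e2]
    ring
  rw [h1, h2, ← Finset.sum_add_distrib]
  exact Finset.sum_congr rfl fun S _ => by ring

lemma indepVal_update_mono (r : W → ℝ) (hr : ∀ j, 0 ≤ r j ∧ r j ≤ 1)
    (f : Finset W → ℝ) (hmono : ∀ S T : Finset W, S ⊆ T → f S ≤ f T)
    (i : W) {c d : ℝ} (hcd : c ≤ d) :
    indepVal (Function.update r i c) f ≤ indepVal (Function.update r i d) f := by
  rw [indepVal_update, indepVal_update]
  apply Finset.sum_le_sum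
  intro S hS
  have hA : 0 ≤ (∏ j ∈ S, r j) * ∏ j ∈ Sᶜ.erase i, (1 - r j) :=
    mul_nonneg (Finset.prod_nonneg fun j _ => (hr j).1)
      (Finset.prod_nonneg fun j _ => by linarith [(hr j).2])
  have hf : f S ≤ f (insert i S) := hmono _ _ (Finset.subset_insert i S)
  have : c * f (insert i S) + (1 - c) * f S ≤ d * f (insert i S) + (1 - d) * f S := by
    nlinarith
  exact mul_le_mul_of_nonneg_left this hA

lemma indepVal_mono_p (q p : W → ℝ) (hq0 : ∀ i, 0 ≤ q i) (hp1 : ∀ i, p i ≤ 1)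
    (hqp : ∀ i, q i ≤ p i)
    (f : Finset W → ℝ) (hmono : ∀ S T : Finset W, S ⊆ T → f S ≤ f T) :
    indepVal q f ≤ indepVal p f := by
  have key : ∀ s : Finset W,
      indepVal q f ≤ indepVal (fun i => if i ∈ s then p i else q i) f := by
    intro s
    induction s using Finset.induction_on with
    | empty => simp
    | @insert a s ha ih =>
      have hr : ∀ j, 0 ≤ (fun i => if i ∈ s then p i else q i) j ∧
          (fun i => if i ∈ s then p i else q i) j ≤ 1 := by
        intro j
        by_cases h : j ∈ s <;> simp [h] <;>
          first
          | exact ⟨le_trans (hq0 j) (hqp j), hp1 j⟩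
          | exact ⟨hq0 j, le_trans (hqp j) (hp1 j)⟩
      have e1 : (fun i => if i ∈ s then p i else q i)
          = Function.update (fun i => if i ∈ s then p i else q i) a (q a) := by
        funext j
        by_cases h : j = a
        · rw [h, Function.update_self, if_neg ha]
        · rw [Function.update_of_ne h]
      have e2 : (fun i => if i ∈ insert a s then p i else q i)
          = Function.update (fun i => if i ∈ s then p i else q i) a (p a) := by
        funext j
        by_cases h : j = a
        · rw [h, Function.update_self, if_pos (Finset.mem_insert_self a s)]
        · rw [Function.update_of_ne h]
          simp [Finset.mem_insert, h]
      calc indepVal q f ≤ indepVal (fun i => if i ∈ s then p i else q i) f := ih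
        _ ≤ indepVal (fun i => if i ∈ insert a s then p i else q i) f := by
            rw [e2]
            nth_rewrite 1 [e1]
            exact indepVal_update_mono _ hr f hmono a (hqp a)
  have := key univ
  simpa using this

end Aux

section Split
variable {V : Type*} [Fintype V] [DecidableEq V]

lemma split_indepVal (p : V → ℝ) (n : V → ℕ) (hn : ∀ i, 1 ≤ n i) (f : Finset V → ℝ) :
    indepVal (fun j : (Σ i : V, Fin (n i)) => p j.1 / (n j.1 : ℝ))
        (fun S' : Finset (Σ i : V, Fin (n i)) => f (S'.image Sigma.fst))
      = indepVal (fun i => 1 - (1 - p i / (n i : ℝ)) ^ (n i)) f := by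
  classical
  set q : V → ℝ := fun i => 1 - (1 - p i / (n i : ℝ)) ^ (n i) with hq
  set w : (i : V) → Finset (Fin (n i)) → ℝ :=
    fun i s => (∏ _a ∈ s, (p i / (n i : ℝ))) * ∏ _a ∈ sᶜ, (1 - p i / (n i : ℝ)) with hw
  -- the bijection
  set E : ((i : V) → Finset (Fin (n i))) → Finset (Σ i : V, Fin (n i)) :=
    fun g => univ.sigma g with hE
  have hbij : Function.Bijective E := by
    constructor
    · intro g₁ g₂ h
      funext i
      ext a
      have := Finset.ext_iff.1 h ⟨i, a⟩
      simpa [hE, Finset.mem_sigma] using this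
    · intro S
      refine ⟨fun i => univ.filter (fun a => (⟨i, a⟩ : Σ i : V, Fin (n i)) ∈ S), ?_⟩
      ext ⟨i, a⟩
      simp [hE, Finset.mem_sigma]
  have step1 : indepVal (fun j : (Σ i : V, Fin (n i)) => p j.1 / (n j.1 : ℝ))
        (fun S' : Finset (Σ i : V, Fin (n i)) => f (S'.image Sigma.fst))
      = ∑ g : (i : V) → Finset (Fin (n i)),
          (∏ i, w i (g i)) * f (univ.filter fun i => (g i).Nonempty) := by
    unfold indepVal
    refine (Fintype.sum_bijective E hbij _ _ ?_).symm
    intro g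
    have hcompl : (E g)ᶜ = univ.sigma (fun i => (g i)ᶜ) := by
      ext ⟨i, a⟩
      simp [hE, Finset.mem_sigma]
    have himg : (E g).image Sigma.fst = univ.filter fun i => (g i).Nonempty := by
      ext i
      constructor
      · intro h
        obtain ⟨x, hx, rfl⟩ := Finset.mem_image.1 h
        exact Finset.mem_filter.2 ⟨mem_univ _, ⟨x.2, (Finset.mem_sigma.1 hx).2⟩⟩
      · intro h
        obtain ⟨a, ha⟩ := (Finset.mem_filter.1 h).2
        exact Finset.mem_image.2 ⟨⟨i, a⟩, Finset.mem_sigma.2 ⟨mem_univ _, ha⟩, rfl⟩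
    have h1 : (∏ x ∈ E g, (p x.1 / (n x.1 : ℝ))) = ∏ i, ∏ _a ∈ g i, (p i / (n i : ℝ)) := by
      rw [hE]; exact Finset.prod_sigma _ _ _
    have h2 : (∏ x ∈ (E g)ᶜ, (1 - p x.1 / (n x.1 : ℝ)))
        = ∏ i, ∏ _a ∈ (g i)ᶜ, (1 - p i / (n i : ℝ)) := by
      rw [hcompl]; exact Finset.prod_sigma _ _ _
    beta_reduce
    rw [h1, h2, himg, ← Finset.prod_mul_distrib]
  rw [step1]
  -- group by the support
  rw [← Finset.sum_fiberwise univ (fun g : (i : V) → Finset (Fin (n i)) =>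
    univ.filter fun i => (g i).Nonempty) _]
  unfold indepVal
  apply Finset.sum_congr rfl
  intro T _
  have hfib : ∀ g ∈ univ.filter (fun g : (i : V) → Finset (Fin (n i)) =>
      (univ.filter fun i => (g i).Nonempty) = T),
      (∏ i, w i (g i)) * f (univ.filter fun i => (g i).Nonempty)
        = (∏ i, w i (g i)) * f T := by
    intro g hg
    simp only [Finset.mem_filter, mem_univ, true_and] at hg
    rw [hg]
  rw [Finset.sum_congr rfl hfib, ← Finset.sum_mul]
  congr 1
  -- fiber sum equals product of per-coordinate sums
  set t : (i : V) → Finset (Finset (Fin (n i))) :=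
    fun i => if i ∈ T then univ.filter Finset.Nonempty else {∅} with ht
  have hfibeq : univ.filter (fun g : (i : V) → Finset (Fin (n i)) =>
      (univ.filter fun i => (g i).Nonempty) = T) = Fintype.piFinset t := by
    ext g
    simp only [Finset.mem_filter, mem_univ, true_and, Fintype.mem_piFinset, ht]
    rw [Finset.ext_iff]
    constructor
    · intro h i
      have := h i
      simp only [Finset.mem_filter, mem_univ, true_and] at this
      by_cases hi : i ∈ T
      · rw [if_pos hi]
        simp only [Finset.mem_filter, mem_univ, true_and]
        exact this.2 hi
      · rw [if_neg hi]
        simp only [Finset.mem_singleton]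
        rw [← Finset.not_nonempty_iff_eq_empty]
        exact fun hne => hi (this.1 hne)
    · intro h i
      have := h i
      simp only [Finset.mem_filter, mem_univ, true_and]
      by_cases hi : i ∈ T
      · rw [if_pos hi] at this
        simp only [Finset.mem_filter, mem_univ, true_and] at this
        exact ⟨fun _ => hi, fun _ => this⟩
      · rw [if_neg hi] at this
        simp only [Finset.mem_singleton] at this
        constructor
        · intro hne
          rw [this] at hne
          exact absurd hne Finset.not_nonempty_empty
        · intro h'; exact absurd h' hi
  rw [hfibeq, ← Finset.prod_univ_sum]
  -- per-coordinate sums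
  have hsum : ∀ i : V, ∑ s ∈ t i, w i s = if i ∈ T then q i else 1 - q i := by
    intro i
    have hempty : w i (∅ : Finset (Fin (n i))) = (1 - p i / (n i : ℝ)) ^ (n i) := by
      simp [hw, Finset.prod_const]
    by_cases hi : i ∈ T
    · rw [if_pos hi, ht]
      simp only [if_pos hi]
      have hall : ∑ s : Finset (Fin (n i)), w i s = 1 := sum_wt _
      have hsplit := Finset.sum_filter_add_sum_filter_not univ
        (fun s : Finset (Fin (n i)) => s.Nonempty) (w i)
      have hne : univ.filter (fun s : Finset (Fin (n i)) => ¬ s.Nonempty) = {∅} := by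
        ext s; simp [Finset.not_nonempty_iff_eq_empty]
      rw [hne, Finset.sum_singleton, hall, hempty] at hsplit
      rw [hq]
      linarith
    · rw [if_neg hi, ht]
      simp only [if_neg hi]
      rw [Finset.sum_singleton, hempty, hq]
      ring
  rw [Finset.prod_congr rfl (fun i _ => hsum i), ← Finset.prod_mul_prod_compl T]
  congr 1
  · exact Finset.prod_congr rfl fun i hi => if_pos hi
  · exact Finset.prod_congr rfl fun i hi => if_neg (Finset.mem_compl.1 hi)

end Split

/-- Property 3: splitting each element `i` into `n i` copies (each copy getting marginal
probability `p i / n i`, and the new cost function being `f ∘ Π`, where `Π` maps a set of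
copies to the set of original elements having at least one copy in it) can only decrease
the expected value under the independent distribution. -/
theorem split_decreases_independent_value
    {V : Type*} [Fintype V] [DecidableEq V]
    (p : V → ℝ) (hp : ∀ i, 0 ≤ p i ∧ p i ≤ 1)
    (f : Finset V → ℝ)
    (hmono : ∀ S T : Finset V, S ⊆ T → f S ≤ f T)
    (n : V → ℕ) (hn : ∀ i, 1 ≤ n i) :
    indepVal (fun j : (Σ i : V, Fin (n i)) => p j.1 / (n j.1 : ℝ))
        (fun S' : Finset (Σ i : V, Fin (n i)) => f (S'.image Sigma.fst))
      ≤ indepVal p f := by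
  classical
  set q : V → ℝ := fun i => 1 - (1 - p i / (n i : ℝ)) ^ (n i) with hqdef
  have hn0 : ∀ i, (0:ℝ) < (n i : ℝ) := fun i => by
    exact_mod_cast Nat.lt_of_lt_of_le Nat.zero_lt_one (hn i)
  have hdiv : ∀ i, 0 ≤ p i / (n i : ℝ) ∧ p i / (n i : ℝ) ≤ 1 := by
    intro i
    constructor
    · exact div_nonneg (hp i).1 (hn0 i).le
    · rw [div_le_one (hn0 i)]
      calc p i ≤ 1 := (hp i).2
        _ ≤ (n i : ℝ) := by exact_mod_cast hn i
  have hq0 : ∀ i, 0 ≤ q i := by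
    intro i
    have : (1 - p i / (n i : ℝ)) ^ (n i) ≤ 1 :=
      pow_le_one₀ (by linarith [(hdiv i).2]) (by linarith [(hdiv i).1])
    simp only [hqdef]
    linarith
  have hqp : ∀ i, q i ≤ p i := by
    intro i
    have hb : 1 + (n i : ℝ) * (-(p i / (n i : ℝ))) ≤ (1 + -(p i / (n i : ℝ))) ^ (n i) :=
      one_add_mul_le_pow (by linarith [(hdiv i).2]) (n i)
    have hmul : (n i : ℝ) * (p i / (n i : ℝ)) = p i := by
      rw [mul_comm, div_mul_cancel₀ _ (hn0 i).ne']
    simp only [hqdef]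
    have : 1 - p i ≤ (1 - p i / (n i : ℝ)) ^ (n i) := by
      calc 1 - p i = 1 + (n i : ℝ) * (-(p i / (n i : ℝ))) := by rw [mul_neg, hmul]; ring
        _ ≤ (1 + -(p i / (n i : ℝ))) ^ (n i) := hb
        _ = (1 - p i / (n i : ℝ)) ^ (n i) := by ring_nf
    linarith
  rw [split_indepVal p n hn f]
  exact indepVal_mono_p q p hq0 (fun i => (hp i).2) hqp f hmono
end

section
/- Let (f',V',{p'_j}) be a split of an instance (f,V,{p_i}), let χ be an (η,β)-cost-sharing scheme for f, and suppose V' is partitioned into blocks A_K, A_{K−1}, ..., A_1 such that each block contains at most one copy of each original element. Define χ' by: χ'(C^i_j, S', σ'_{S'}) = χ(i, Π(S'), σ) if C^i_j is the lowest-indexed (earliest under σ'_{S'}) copy of i present in S', where σ is the ordering of Π(S') induced by the positions of lowest-indexed copies in σ'_{S'}; and χ'(C^i_j, S', σ'_{S'}) = 0 otherwise. Then: (1) χ' is β-budget balanced; (2) χ' is weakly η-summable; and (3) χ' is cross-monotone for every pair S' ⊆ T' ⊆ V' with σ'_{S'} the restriction of σ'_{T'}, provided both orderings list all elements of A_K before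 A_{K−1} before ... before A_1, and S' is a partial prefix of T', i.e., for some k, S' ⊆ A_K ∪ ⋯ ∪ A_k and T'∖S' ⊆ A_k ∪ ⋯ ∪ A_1. -/
open Finset

/-- The split ground set: each element `i` of `V` is replaced by `n i` copies. -/
abbrev SplitT (V : Type*) (n : V → ℕ) := Σ i : V, Fin (n i)

variable {V : Type*} [Fintype V] [DecidableEq V] {n : V → ℕ}

/-- The list of original elements whose lowest-indexed (earliest) copies appear in `l'`,
in the order of those first occurrences. -/
def firstCopies (l' : List (SplitT V n)) : List V :=
  ((l'.map Sigma.fst).reverse.dedup).reverse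

/-- The cost-sharing scheme `χ'` for the split instance: the share of a copy `j` in an
ordered set `l'` is the original share `χ` of its original element `j.1` (with respect to
the induced ordering of lowest-indexed copies) if `j` is the lowest-indexed copy of `j.1`
present in `l'`, and `0` otherwise. -/
noncomputable def splitShare (χ : List V → V → ℝ)
    (l' : List (SplitT V n)) (j : SplitT V n) : ℝ :=
  if l'.find? (fun x => x.1 = j.1) = some j then χ (firstCopies l') j.1 else 0

/-- An ordering `l'` of copies respects the block order `B 0, B 1, …, B (K-1)`
(blocks listed from `A_K` down to `A_1`) if elements of earlier blocks always occur
before elements of later blocks. -/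
def RespectsBlocks {K : ℕ} (B : Fin K → Finset (SplitT V n))
    (l' : List (SplitT V n)) : Prop :=
  ∀ m m' : Fin K, m < m' → ∀ a b : SplitT V n, a ∈ B m → b ∈ B m' →
    a ∈ l' → b ∈ l' → l'.idxOf a < l'.idxOf b

section Aux

variable {α : Type*} [DecidableEq α]

/-- first occurrences, keeping order of first appearance -/
def fo : List α → List α
  | [] => []
  | a :: l => a :: (fo l).filter (fun x => x ≠ a)

@[simp] lemma fo_nil : fo ([] : List α) = [] := rfl

@[simp] lemma fo_cons (a : α) (l : List α) :
    fo (a :: l) = a :: (fo l).filter (fun x => x ≠ a) := rfl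

@[simp] lemma mem_fo {x : α} {l : List α} : x ∈ fo l ↔ x ∈ l := by
  induction l with
  | nil => simp
  | cons a l ih =>
    by_cases hx : x = a <;> simp [List.mem_filter, hx, ih]

lemma fo_nodup (l : List α) : (fo l).Nodup := by
  induction l with
  | nil => simp
  | cons a l ih =>
    refine List.Nodup.cons ?_ (ih.filter _)
    simp [List.mem_filter]

lemma dedup_append_singleton (xs : List α) (a : α) :
    (xs ++ [a]).dedup = xs.dedup.filter (fun x => x ≠ a) ++ [a] := by
  induction xs with
  | nil => simp
  | cons x xs ih =>
    by_cases hxa : x = a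
    · subst hxa
      rw [List.cons_append, List.dedup_cons_of_mem (by simp), ih]
      by_cases hx : x ∈ xs
      · rw [List.dedup_cons_of_mem hx]
      · rw [List.dedup_cons_of_notMem hx, List.filter_cons_of_neg (by simp)]
    · by_cases hx : x ∈ xs
      · rw [List.cons_append, List.dedup_cons_of_mem (by simp [hx]),
          List.dedup_cons_of_mem hx, ih]
      · rw [List.cons_append, List.dedup_cons_of_notMem (by simp [hx, hxa]),
          List.dedup_cons_of_notMem hx, ih, List.filter_cons_of_pos (by simp [hxa])]
        simp

lemma reverse_dedup_reverse (l : List α) : l.reverse.dedup.reverse = fo l := by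
  induction l with
  | nil => simp
  | cons a l ih =>
    rw [List.reverse_cons, dedup_append_singleton, List.reverse_append,
      List.reverse_singleton, fo_cons, ← ih, ← List.filter_reverse]
    rfl

lemma filt_sum (F : List α) (b : α) (G : List α → α → ℝ) :
    ∑ m : Fin F.length,
      (if F.get m = b then 0 else G ((F.take (m.1+1)).filter (fun x => x ≠ b)) (F.get m))
    = ∑ m : Fin (F.filter (fun x => x ≠ b)).length,
        G ((F.filter (fun x => x ≠ b)).take (m.1+1)) ((F.filter (fun x => x ≠ b)).get m) := by
  induction F generalizing G with
  | nil => simp; exact (Finset.sum_eq_zero (fun i _ => absurd i.2 (by simp))).symm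
  | cons c F₀ ih =>
    by_cases hc : c = b
    · subst hc
      have h1 : ∀ (L : List α), List.filter (fun x => x ≠ c) (c :: L)
          = List.filter (fun x => x ≠ c) L := fun L => List.filter_cons_of_neg (by simp)
      rw [h1]
      simp only [List.length_cons]
      rw [Fin.sum_univ_succ]
      simp only [List.get_cons_succ', Fin.val_succ, Fin.val_zero, List.take_succ_cons,
        List.take_zero, List.get_cons_zero, h1, eq_self_iff_true, if_true, zero_add]
      exact ih G
    · have h1 : ∀ (L : List α), List.filter (fun x => x ≠ b) (c :: L)
          = c :: List.filter (fun x => x ≠ b) L := fun L => List.filter_cons_of_pos (by simp [hc])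
      rw [h1]
      simp only [List.length_cons]
      rw [Fin.sum_univ_succ, Fin.sum_univ_succ]
      simp only [List.get_cons_succ', Fin.val_succ, Fin.val_zero, List.take_succ_cons,
        List.take_zero, List.get_cons_zero, if_neg hc, h1]
      exact congrArg₂ (· + ·) rfl (ih (fun m i => G (c :: m) i))

end Aux

lemma firstCopies_eq (l' : List (SplitT V n)) :
    firstCopies l' = fo (l'.map Sigma.fst) := reverse_dedup_reverse _

lemma splitShare_eq (χ : List V → V → ℝ) (l' : List (SplitT V n)) (j : SplitT V n) :
    splitShare χ l' j =
      if l'.find? (fun x => x.1 = j.1) = some j then χ (fo (l'.map Sigma.fst)) j.1 else 0 := by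
  rw [splitShare, firstCopies_eq]

lemma toFinset_fo (l' : List (SplitT V n)) :
    (fo (l'.map Sigma.fst)).toFinset = l'.toFinset.image Sigma.fst := by
  ext x
  simp [List.mem_toFinset, mem_fo, List.mem_map, Finset.mem_image]

lemma fo_map_ne_nil {l' : List (SplitT V n)} (h : l' ≠ []) : fo (l'.map Sigma.fst) ≠ [] := by
  cases l' with
  | nil => exact absurd rfl h
  | cons a l => simp

/-- Part 1 key: the sum of split shares over the set equals the sum of original shares. -/
lemma sum_splitShare_finset (χ : List V → V → ℝ) (l' : List (SplitT V n)) :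
    ∑ j ∈ l'.toFinset, splitShare χ l' j
    = ∑ i ∈ (fo (l'.map Sigma.fst)).toFinset, χ (fo (l'.map Sigma.fst)) i := by
  classical
  simp only [splitShare_eq]
  rw [← Finset.sum_filter]
  refine Finset.sum_bij (fun j _ => j.1) ?_ ?_ ?_ ?_
  · intro j hj
    rw [List.mem_toFinset, mem_fo]
    simp only [Finset.mem_filter, List.mem_toFinset] at hj
    exact List.mem_map_of_mem hj.1
  · intro j₁ h₁ j₂ h₂ h
    simp only [Finset.mem_filter] at h₁ h₂
    have h' : j₁.1 = j₂.1 := h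
    have e : (fun x : SplitT V n => decide (x.1 = j₁.1)) = (fun x => decide (x.1 = j₂.1)) := by
      funext x; rw [h']
    have h₁' := h₁.2
    rw [e] at h₁'
    exact Option.some.inj (h₁'.symm.trans h₂.2)
  · intro i hi
    rw [List.mem_toFinset, mem_fo, List.mem_map] at hi
    obtain ⟨j, hj, hji⟩ := hi
    have hsome : (l'.find? (fun x => decide (x.1 = i))).isSome :=
      List.find?_isSome.2 ⟨j, hj, by simp [hji]⟩
    obtain ⟨j₀, hj₀⟩ := Option.isSome_iff_exists.1 hsome
    have hj₀m : j₀ ∈ l' := List.mem_of_find?_eq_some hj₀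
    have hj₀i : j₀.1 = i := by simpa using List.find?_some hj₀
    subst hj₀i
    refine ⟨j₀, ?_, rfl⟩
    simp only [Finset.mem_filter, List.mem_toFinset]
    exact ⟨hj₀m, hj₀⟩
  · intro j hj; rfl

lemma splitShare_cons (χ : List V → V → ℝ) (a : SplitT V n) (M : List (SplitT V n))
    (j : SplitT V n) (haj : a ≠ j) :
    splitShare χ (a :: M) j
    = splitShare (fun m i => if i = a.1 then 0 else χ (a.1 :: m.filter (fun x => x ≠ a.1)) i)
        M j := by
  rw [splitShare_eq, splitShare_eq]
  by_cases h : a.1 = j.1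
  · rw [List.find?_cons_of_pos (p := fun x : SplitT V n => decide (x.1 = j.1)) (a := a) (l := M) (by simp [h])]
    rw [if_neg (by simpa using haj)]
    by_cases h2 : M.find? (fun x => decide (x.1 = j.1)) = some j
    · rw [if_pos h2, if_pos h.symm]
    · rw [if_neg h2]
  · rw [List.find?_cons_of_neg (p := fun x : SplitT V n => decide (x.1 = j.1)) (a := a) (l := M) (by simp [h])]
    simp only [List.map_cons, fo_cons]
    by_cases h2 : M.find? (fun x => decide (x.1 = j.1)) = some j
    · rw [if_pos h2, if_pos h2, if_neg (fun hh => h (hh.symm))]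
    · rw [if_neg h2, if_neg h2]

/-- Part 2 key: the incremental sum of split shares equals the original incremental sum. -/
lemma sum_splitShare_take (l' : List (SplitT V n)) (hnd : l'.Nodup) (χ : List V → V → ℝ) :
    ∑ ℓ : Fin l'.length, splitShare χ (l'.take (ℓ.1+1)) (l'.get ℓ)
    = ∑ m : Fin (fo (l'.map Sigma.fst)).length,
        χ ((fo (l'.map Sigma.fst)).take (m.1+1)) ((fo (l'.map Sigma.fst)).get m) := by
  induction l' generalizing χ with
  | nil => simp; exact (Finset.sum_eq_zero (fun i _ => absurd i.2 (by simp))).symm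
  | cons a l ih =>
    have hal : a ∉ l := (List.nodup_cons.1 hnd).1
    have hndl : l.Nodup := (List.nodup_cons.1 hnd).2
    rw [show fo (List.map Sigma.fst (a :: l)) = a.1 :: (fo (l.map Sigma.fst)).filter (fun x => x ≠ a.1) from rfl]
    simp only [List.map_cons, fo_cons, List.length_cons]
    rw [Fin.sum_univ_succ, Fin.sum_univ_succ]
    simp only [Fin.val_succ, Fin.val_zero, List.take_succ_cons, List.take_zero,
      List.get_cons_zero, List.get_cons_succ']
    congr 1
    · rw [splitShare_eq]
      rw [List.find?_cons_of_pos (p := fun x : SplitT V n => decide (x.1 = a.1)) (a := a) (by simp), if_pos rfl]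
      simp
    · have htail : ∀ ℓ : Fin l.length,
          splitShare χ (a :: l.take (ℓ.1+1)) (l.get ℓ)
          = splitShare (fun m i => if i = a.1 then 0
              else χ (a.1 :: m.filter (fun x => x ≠ a.1)) i) (l.take (ℓ.1+1)) (l.get ℓ) :=
        fun ℓ => splitShare_cons χ a _ _ (fun hh => hal (hh ▸ l.get_mem _))
      rw [Finset.sum_congr rfl (fun ℓ _ => htail ℓ), ih hndl _]
      exact filt_sum (fo (l.map Sigma.fst)) a.1 (fun m i => χ (a.1 :: m) i)

lemma fo_filter_map (s : Finset (SplitT V n)) (l' : List (SplitT V n))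
    (hC : ∀ l₁ l₂, l' = l₁ ++ l₂ → ∀ b ∈ l₁, ∀ j ∈ l₂, b.1 = j.1 → j ∈ s → b ∈ s) :
    fo ((l'.filter (fun a => a ∈ s)).map Sigma.fst)
    = (fo (l'.map Sigma.fst)).filter
        (fun i => i ∈ (l'.filter (fun a => a ∈ s)).map Sigma.fst) := by
  induction l' with
  | nil => simp
  | cons a l ih =>
    have hCl : ∀ l₁ l₂, l = l₁ ++ l₂ → ∀ b ∈ l₁, ∀ j ∈ l₂, b.1 = j.1 → j ∈ s → b ∈ s :=
      fun l₁ l₂ he b hb j hj => hC (a :: l₁) l₂ (by rw [he]; rfl) b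
        (List.mem_cons_of_mem _ hb) j hj
    by_cases ha : a ∈ s
    · rw [List.filter_cons_of_pos (by simp [ha])]
      simp only [List.map_cons, fo_cons]
      rw [List.filter_cons_of_pos (by simp)]
      congr 1
      rw [ih hCl, List.filter_filter, List.filter_filter]
      apply List.filter_congr
      intro x hx
      by_cases hxa : x = a.1 <;> simp [hxa, List.mem_cons]
    · rw [List.filter_cons_of_neg (by simp [ha])]
      simp only [List.map_cons, fo_cons]
      have hnot : a.1 ∉ (l.filter (fun a => a ∈ s)).map Sigma.fst := by
        intro hmem
        obtain ⟨j, hj, hj1⟩ := List.mem_map.1 hmem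
        have hjl : j ∈ l := List.mem_of_mem_filter hj
        have hjs : j ∈ s := by simpa using (List.mem_filter.1 hj).2
        exact ha (hC [a] l rfl a (by simp) j hjl hj1.symm hjs)
      rw [List.filter_cons_of_neg (by simpa using hnot)]
      rw [ih hCl, List.filter_filter]
      apply List.filter_congr
      intro x hx
      by_cases hxm : x ∈ (l.filter (fun a => a ∈ s)).map Sigma.fst
      · have hxa : x ≠ a.1 := fun h => hnot (h ▸ hxm)
        simp [hxm, hxa]
      · simp [hxm]

lemma claimC {K : ℕ} {B : Fin K → Finset (SplitT V n)}
    (hone : ∀ k : Fin K, ∀ a ∈ B k, ∀ b ∈ B k, a.1 = b.1 → a = b)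
    {l' : List (SplitT V n)} (hnd : l'.Nodup) (hrb : RespectsBlocks B l')
    {s : Finset (SplitT V n)} {t : Fin K}
    (hst : ∀ a ∈ s, ∃ m : Fin K, m ≤ t ∧ a ∈ B m)
    (hts : ∀ a ∈ l'.toFinset, a ∉ s → ∃ m : Fin K, t ≤ m ∧ a ∈ B m) :
    ∀ l₁ l₂, l' = l₁ ++ l₂ → ∀ b ∈ l₁, ∀ j ∈ l₂, b.1 = j.1 → j ∈ s → b ∈ s := by
  intro l₁ l₂ he b hb j hj hbj hjs
  by_contra hbs
  have hbl' : b ∈ l' := by rw [he]; exact List.mem_append_left _ hb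
  have hjl' : j ∈ l' := by rw [he]; exact List.mem_append_right _ hj
  obtain ⟨m, hmt, hjm⟩ := hst j hjs
  obtain ⟨m', htm', hbm'⟩ := hts b (List.mem_toFinset.2 hbl') hbs
  rcases lt_or_eq_of_le (le_trans hmt htm') with hlt | heq
  · have hidx := hrb m m' hlt j b hjm hbm' hjl' hbl'
    have hjl₁ : j ∉ l₁ := by
      have hnd' := hnd
      rw [he] at hnd'
      exact fun hjl1 => (List.disjoint_of_nodup_append hnd') hjl1 hj
    have h1 : l'.idxOf b < l₁.length := by
      rw [he, List.idxOf_append_of_mem hb]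
      exact List.idxOf_lt_length_iff.2 hb
    have h2 : l₁.length ≤ l'.idxOf j := by
      rw [he, List.idxOf_append_of_notMem hjl₁]
      exact Nat.le_add_right _ _
    omega
  · subst heq
    exact hbs ((hone m b hbm' j hjm hbj) ▸ hjs)

/-- Lemma 3: given an `(η,β)`-cost-sharing scheme `χ` for `f` and a partition of the
split ground set into blocks `B 0 = A_K, …, B (K-1) = A_1`, each containing at most one
copy of each original element, the scheme `χ' = splitShare χ` for the split cost function
`f' = f ∘ Π` is (1) `β`-budget balanced, (2) weakly `η`-summable, and (3) cross-monotone
for every pair `S' ⊆ T'` of ordered sets whose orderings respect the block order and such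
that `S'` is a partial prefix of `T'` (for some `t`, `S' ⊆ A_K ∪ ⋯ ∪ A_t` and
`T' ∖ S' ⊆ A_t ∪ ⋯ ∪ A_1`). -/
theorem split_cost_share_properties
    (f : Finset V → ℝ) (η β : ℝ)
    (χ : List V → V → ℝ)
    -- χ is an (η,β)-cost-sharing scheme for f:
    (hbb : ∀ l : List V, l ≠ [] → l.Nodup →
      ∑ i ∈ l.toFinset, χ l i ≤ f l.toFinset ∧ f l.toFinset / β ≤ ∑ i ∈ l.toFinset, χ l i)
    (hcm : ∀ l : List V, l.Nodup → ∀ s : Finset V, s ⊆ l.toFinset → ∀ i ∈ s,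
      χ l i ≤ χ (l.filter (fun a => a ∈ s)) i)
    (hsum : ∀ l : List V, l ≠ [] → l.Nodup →
      ∑ ℓ : Fin l.length, χ (l.take (ℓ.1 + 1)) (l.get ℓ) ≤ η * f l.toFinset)
    -- the blocks partition the split ground set
    (K : ℕ) (B : Fin K → Finset (SplitT V n))
    (hdisj : ∀ k l : Fin K, k ≠ l → Disjoint (B k) (B l))
    (hcover : Finset.univ.biUnion B = Finset.univ)
    -- each block contains at most one copy of each original element
    (hone : ∀ k : Fin K, ∀ a ∈ B k, ∀ b ∈ B k, a.1 = b.1 → a = b) :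
    -- (1) β-budget balance
    (∀ l' : List (SplitT V n), l' ≠ [] → l'.Nodup →
      ∑ j ∈ l'.toFinset, splitShare χ l' j ≤ f (l'.toFinset.image Sigma.fst)
      ∧ f (l'.toFinset.image Sigma.fst) / β ≤ ∑ j ∈ l'.toFinset, splitShare χ l' j)
    -- (2) weak η-summability
    ∧ (∀ l' : List (SplitT V n), l' ≠ [] → l'.Nodup →
      ∑ ℓ : Fin l'.length, splitShare χ (l'.take (ℓ.1 + 1)) (l'.get ℓ)
        ≤ η * f (l'.toFinset.image Sigma.fst))
    -- (3) cross-monotonicity for partial-prefix pairs respecting the block order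
    ∧ (∀ l' : List (SplitT V n), l'.Nodup → RespectsBlocks B l' →
      ∀ s : Finset (SplitT V n), s ⊆ l'.toFinset →
      RespectsBlocks B (l'.filter (fun a => a ∈ s)) →
      (∃ t : Fin K, (∀ a ∈ s, ∃ m : Fin K, m ≤ t ∧ a ∈ B m)
        ∧ (∀ a ∈ l'.toFinset, a ∉ s → ∃ m : Fin K, t ≤ m ∧ a ∈ B m)) →
      ∀ j ∈ s, splitShare χ l' j ≤ splitShare χ (l'.filter (fun a => a ∈ s)) j) := by
  
  refine ⟨?_, ?_, ?_⟩
  · intro l' hne hnd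
    have h := hbb (fo (l'.map Sigma.fst)) (fo_map_ne_nil hne) (fo_nodup _)
    rw [toFinset_fo] at h
    rw [sum_splitShare_finset, toFinset_fo]
    exact h
  · intro l' hne hnd
    rw [sum_splitShare_take l' hnd]
    have h := hsum (fo (l'.map Sigma.fst)) (fo_map_ne_nil hne) (fo_nodup _)
    rw [toFinset_fo] at h
    exact h
  · intro l' hnd hrb s hs hrb2 hpp j hjs
    obtain ⟨t, hst, hts⟩ := hpp
    have hC := claimC hone hnd hrb hst hts
    have hjl' : j ∈ l' := List.mem_toFinset.1 (hs hjs)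
    by_cases hfind : l'.find? (fun x => decide (x.1 = j.1)) = some j
    · obtain ⟨hpj, as, bs, hdec, hpre⟩ := List.find?_eq_some_iff_append.1 hfind
      have hjf : (l'.filter (fun a => a ∈ s)).find? (fun x => decide (x.1 = j.1)) = some j := by
        rw [hdec, List.filter_append, List.find?_append]
        have h1 : ((as.filter (fun a => a ∈ s)).find? (fun x => decide (x.1 = j.1))) = none := by
          rw [List.find?_eq_none]
          intro x hx
          simpa using hpre x (List.mem_of_mem_filter hx)
        rw [h1, List.filter_cons_of_pos (by simp [hjs])]
        simp
      rw [splitShare_eq, splitShare_eq, if_pos hfind, if_pos hjf]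
      have hCfo := fo_filter_map s l' hC
      have hpredeq : (fo (l'.map Sigma.fst)).filter
            (fun i => i ∈ (l'.filter (fun a => a ∈ s)).map Sigma.fst)
          = (fo (l'.map Sigma.fst)).filter (fun i => i ∈ s.image Sigma.fst) := by
        apply List.filter_congr
        intro x hx
        simp only [decide_eq_decide]
        constructor
        · intro hxm
          obtain ⟨j', hj', rfl⟩ := List.mem_map.1 hxm
          exact Finset.mem_image_of_mem _ (by simpa using (List.mem_filter.1 hj').2)
        · intro hxm
          obtain ⟨j', hj's, rfl⟩ := Finset.mem_image.1 hxm
          exact List.mem_map_of_mem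
            (List.mem_filter.2 ⟨List.mem_toFinset.1 (hs hj's), by simpa⟩)
      rw [hCfo, hpredeq]
      exact hcm (fo (l'.map Sigma.fst)) (fo_nodup _) (s.image Sigma.fst)
        (by rw [toFinset_fo]; exact Finset.image_subset_image hs) j.1
        (Finset.mem_image_of_mem _ hjs)
    · rw [splitShare_eq, splitShare_eq, if_neg hfind]
      have hsome : (l'.find? (fun x => decide (x.1 = j.1))).isSome :=
        List.find?_isSome.2 ⟨j, hjl', by simp⟩
      obtain ⟨b, hb⟩ := Option.isSome_iff_exists.1 hsome
      have hbj : b.1 = j.1 := by simpa using List.find?_some hb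
      have hbne : b ≠ j := fun h => hfind (h ▸ hb)
      obtain ⟨hpb, cs, ds, hdec, hpre⟩ := List.find?_eq_some_iff_append.1 hb
      have hjds : j ∈ ds := by
        have hmem : j ∈ cs ++ b :: ds := hdec ▸ hjl'
        rcases List.mem_append.1 hmem with h | h
        · exact ((by simpa using hpre j h) : False).elim
        · rcases List.mem_cons.1 h with h | h
          · exact absurd h.symm hbne
          · exact h
      have hbs' : b ∈ s := hC (cs ++ [b]) ds (by rw [hdec]; simp) b (by simp) j hjds hbj hjs
      have hfb : (l'.filter (fun a => a ∈ s)).find? (fun x => decide (x.1 = j.1)) = some b := by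
        rw [hdec, List.filter_append, List.find?_append]
        have h1 : ((cs.filter (fun a => a ∈ s)).find? (fun x => decide (x.1 = j.1))) = none := by
          rw [List.find?_eq_none]
          intro x hx
          simpa using hpre x (List.mem_of_mem_filter hx)
        rw [h1, List.filter_cons_of_pos (by simp [hbs'])]
        simp [List.find?_cons, hbj]
      rw [if_neg (by rw [hfb]; exact fun h => hbne (Option.some.inj h))]
end

section
/- Let V = {1,2,...,n}, let f : 2^V → ℝ be supermodular, and let p_1 ≥ p_2 ≥ ... ≥ p_n be marginal probabilities in [0,1]. Let S_i = {1,2,...,i}. Then the worst-case expected value is attained by the nested (prefix) distribution and equals L(f,V,{p_i}) = p_n·f(S_n) + Σ_{i=1}^{n−1} (p_i − p_{i+1})·f(S_i) + (1 − p_1)·f(∅). That is, the distribution assigning probability p_n to S_n, probability p_i − p_{i+1} to S_i for 1 ≤ i ≤ n−1, probability 1 − p_1 to ∅, and 0 to all other sets, is a worst-case distribution. -/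
open Finset

variable {W : Type*} [Fintype W] [DecidableEq W]

lemma tele' (q : ℕ → ℝ) : ∀ b a, 1 ≤ a → a ≤ b →
    ∑ i ∈ Finset.Ico a b, (q (i-1) - q i) = q (a-1) - q (b-1) := by
  intro b
  induction b with
  | zero => intro a h1 h2; omega
  | succ b ih =>
    intro a h1 h2
    rcases Nat.lt_or_ge a (b+1) with h | h
    · have hab : a ≤ b := by omega
      have hb1 : 1 ≤ b := by omega
      rw [Finset.sum_Ico_succ_top hab, ih a h1 hab]
      have e1 : b + 1 - 1 = b := rfl
      have e2 : b - 1 + 1 = b := by omega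
      rw [e1]; ring
    · have : a = b + 1 := by omega
      subst this; simp


lemma abel' (q F : ℕ → ℝ) : ∀ m, 1 ≤ m →
    ∑ i ∈ Finset.range m, q i * (F (i+1) - F i)
      = q (m-1) * F m + (∑ i ∈ Finset.Ico 1 m, (q (i-1) - q i) * F i) - q 0 * F 0 := by
  intro m
  induction m with
  | zero => omega
  | succ m ih =>
    intro _
    rcases Nat.eq_zero_or_pos m with hm | hm
    · subst hm; simp; ring
    · rw [Finset.sum_range_succ, ih hm, Finset.sum_Ico_succ_top hm]
      have e1 : m + 1 - 1 = m := rfl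
      rw [e1]; ring

/-- Lemma 2: for a supermodular cost function and marginals `p 0 ≥ p 1 ≥ … ≥ p (n-1)`,
the nested (prefix) distribution — assigning probability `p (n-1)` to `S_n`,
`p (i-1) - p i` to `S_i` for `1 ≤ i ≤ n-1`, and `1 - p 0` to `∅` — is a worst-case
distribution, and the worst-case expected value equals
`p_n f(S_n) + Σ_{i=1}^{n-1} (p_i - p_{i+1}) f(S_i) + (1-p_1) f(∅)`
(stated here with 0-indexed probabilities). -/
theorem supermodular_worst_case_distribution
    (n : ℕ) (hn : 1 ≤ n)
    (p : ℕ → ℝ)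
    (hp : ∀ i, i < n → 0 ≤ p i ∧ p i ≤ 1)
    (hpmono : ∀ i j : ℕ, i ≤ j → j < n → p j ≤ p i)
    (f : Finset (Fin n) → ℝ)
    (hsuper : ∀ T S : Finset (Fin n), T ⊆ S → ∀ i ∉ S,
      f (insert i T) - f T ≤ f (insert i S) - f S)
    (Si : ℕ → Finset (Fin n))
    (hSi : ∀ k, Si k = Finset.univ.filter (fun j : Fin n => (j : ℕ) < k))
    (α : Finset (Fin n) → ℝ)
    (hα : ∀ S, α S = ∑ i ∈ Finset.range (n + 1),
      (if i = 0 then 1 - p 0 else if i = n then p (n - 1) else p (i - 1) - p i)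
        * (if S = Si i then 1 else 0)) :
    IsDistWithMarginals (fun i : Fin n => p i) α
    ∧ IsGreatest
        {v | ∃ γ, IsDistWithMarginals (fun i : Fin n => p i) γ ∧ v = expVal γ f}
        (expVal α f)
    ∧ expVal α f
        = p (n - 1) * f (Si n) + (∑ i ∈ Finset.Ico 1 n, (p (i - 1) - p i) * f (Si i))
            + (1 - p 0) * f ∅ := by
  set w : ℕ → ℝ := fun i => if i = 0 then 1 - p 0 else if i = n then p (n - 1) else p (i - 1) - p i with hw
  -- membership facts
  have hmemSi : ∀ (k : ℕ) (j : Fin n), j ∈ Si k ↔ (j : ℕ) < k := by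
    intro k j; rw [hSi]; simp
  have hSi0 : Si 0 = ∅ := by
    ext j; simp [hmemSi]
  -- key sum formula
  have key : ∀ g : Finset (Fin n) → ℝ,
      ∑ S : Finset (Fin n), α S * g S = ∑ i ∈ Finset.range (n+1), w i * g (Si i) := by
    intro g
    simp only [hα, ← hw, Finset.sum_mul]
    rw [Finset.sum_comm]
    apply Finset.sum_congr rfl
    intro i _
    rw [Finset.sum_congr rfl (fun S _ => by
      show w i * (if S = Si i then (1:ℝ) else 0) * g S = if S = Si i then w i * g S else 0
      split_ifs <;> ring)]
    simp
  -- nonnegativity of weights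
  have hwnn : ∀ i ∈ Finset.range (n+1), 0 ≤ w i := by
    intro i hi
    simp only [Finset.mem_range] at hi
    simp only [hw]
    split_ifs with h0 hN
    · linarith [(hp 0 (by omega)).2]
    · exact (hp (n-1) (by omega)).1
    · linarith [hpmono (i-1) i (by omega) (by omega)]
  have hw0 : w 0 = 1 - p 0 := by simp [hw]
  have hwn : w n = p (n - 1) := by
    have h : n ≠ 0 := by omega
    simp [hw, h]
  have hwi : ∀ i, 1 ≤ i → i < n → w i = p (i-1) - p i := by
    intro i h1 h2
    have h0 : i ≠ 0 := by omega
    have hN : i ≠ n := by omega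
    simp [hw, h0, hN]
  -- part 1
  have part1 : IsDistWithMarginals (fun i : Fin n => p i) α := by
    refine ⟨?_, ?_, ?_⟩
    · intro S
      rw [hα S]
      apply Finset.sum_nonneg
      intro i hi
      apply mul_nonneg (hwnn i hi)
      split_ifs <;> norm_num
    · have := key (fun _ => 1)
      simp only [mul_one] at this
      calc ∑ S : Finset (Fin n), α S = ∑ i ∈ Finset.range (n+1), w i := this
        _ = 1 := by
          rw [Finset.sum_range_succ, Finset.range_eq_Ico,
            Finset.sum_eq_sum_Ico_succ_bot (by omega : 0 < n)]
          have hIco : ∑ i ∈ Finset.Ico 1 n, w i = ∑ i ∈ Finset.Ico 1 n, (p (i-1) - p i) := by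
            apply Finset.sum_congr rfl
            intro i hi
            simp only [Finset.mem_Ico] at hi
            exact hwi i hi.1 hi.2
          rw [hIco, tele' p n 1 le_rfl hn, hw0, hwn]
          ring
    · intro j
      have h1 : ∑ S ∈ Finset.univ.filter (fun S => j ∈ S), α S
          = ∑ S : Finset (Fin n), α S * (if j ∈ S then 1 else 0) := by
        rw [Finset.sum_filter]
        apply Finset.sum_congr rfl
        intro S _
        split_ifs <;> ring
      rw [h1, key]
      have h2 : ∀ i ∈ Finset.range (n+1),
          w i * (if j ∈ Si i then (1:ℝ) else 0) = if (j:ℕ) < i then w i else 0 := by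
        intro i _
        by_cases hj : (j:ℕ) < i
        · rw [if_pos hj, if_pos ((hmemSi i j).mpr hj), mul_one]
        · rw [if_neg hj, if_neg (fun h => hj ((hmemSi i j).mp h)), mul_zero]
      rw [Finset.sum_congr rfl h2, Finset.sum_ite, Finset.sum_const_zero, add_zero]
      have h3 : Finset.filter (fun i => (j:ℕ) < i) (Finset.range (n+1))
          = Finset.Ico ((j:ℕ)+1) (n+1) := by
        ext i; simp only [Finset.mem_filter, Finset.mem_range, Finset.mem_Ico]; omega
      rw [h3]
      have hjn : (j:ℕ) + 1 ≤ n := j.isLt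
      rw [Finset.sum_Ico_succ_top (by omega : (j:ℕ)+1 ≤ n)]
      have hIco : ∑ i ∈ Finset.Ico ((j:ℕ)+1) n, w i
          = ∑ i ∈ Finset.Ico ((j:ℕ)+1) n, (p (i-1) - p i) := by
        apply Finset.sum_congr rfl
        intro i hi
        simp only [Finset.mem_Ico] at hi
        exact hwi i (by omega) hi.2
      rw [hIco, tele' p n ((j:ℕ)+1) (by omega) hjn, hwn]
      simp
  -- prefix increments
  set x : Fin n → ℝ := fun i => f (Si ((i:ℕ)+1)) - f (Si (i:ℕ)) with hx
  have hins : ∀ m : Fin n, insert m (Si (m:ℕ)) = Si ((m:ℕ)+1) := by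
    intro m
    ext j
    simp only [Finset.mem_insert, hmemSi]
    constructor
    · rintro (rfl | h) <;> omega
    · intro h
      rcases Nat.lt_or_ge (j:ℕ) (m:ℕ) with h' | h'
      · right; exact h'
      · left; exact Fin.ext (by omega)
  have hnotmem : ∀ m : Fin n, m ∉ Si (m:ℕ) := by
    intro m; rw [hmemSi]; omega
  -- key supermodular bound
  have keyA : ∀ S : Finset (Fin n), f S ≤ f ∅ + ∑ i ∈ S, x i := by
    intro S
    induction S using Finset.strongInductionOn with
    | _ S ih =>
      rcases S.eq_empty_or_nonempty with rfl | hS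
      · simp
      · set m := S.max' hS with hm
        have hmS : m ∈ S := S.max'_mem hS
        have hTsub : S.erase m ⊆ Si (m:ℕ) := by
          intro j hj
          rw [Finset.mem_erase] at hj
          rw [hmemSi]
          have hle : j ≤ m := S.le_max' j hj.2
          have : j < m := lt_of_le_of_ne hle hj.1
          exact this
        have hsup := hsuper (S.erase m) (Si (m:ℕ)) hTsub m (hnotmem m)
        rw [Finset.insert_erase hmS, hins m] at hsup
        have hih := ih (S.erase m) (Finset.erase_ssubset hmS)
        have hsum : x m + ∑ i ∈ S.erase m, x i = ∑ i ∈ S, x i :=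
          Finset.add_sum_erase S x hmS
        simp only [hx] at hsup hsum ⊢
        linarith
  -- part 3: value formula
  have part3 : expVal α f
      = p (n - 1) * f (Si n) + (∑ i ∈ Finset.Ico 1 n, (p (i - 1) - p i) * f (Si i))
          + (1 - p 0) * f ∅ := by
    rw [expVal, key f, Finset.sum_range_succ, Finset.range_eq_Ico,
      Finset.sum_eq_sum_Ico_succ_bot (by omega : 0 < n)]
    have hIco : ∑ i ∈ Finset.Ico 1 n, w i * f (Si i)
        = ∑ i ∈ Finset.Ico 1 n, (p (i-1) - p i) * f (Si i) := by
      apply Finset.sum_congr rfl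
      intro i hi
      simp only [Finset.mem_Ico] at hi
      rw [hwi i hi.1 hi.2]
    rw [hIco, hw0, hwn, hSi0]
    ring
  -- part 2: upper bound
  have hub : ∀ v ∈ {v | ∃ γ, IsDistWithMarginals (fun i : Fin n => p i) γ ∧ v = expVal γ f},
      v ≤ expVal α f := by
    rintro v ⟨γ, ⟨hγ0, hγ1, hγm⟩, rfl⟩
    have step1 : expVal γ f ≤ ∑ S : Finset (Fin n), γ S * (f ∅ + ∑ i ∈ S, x i) := by
      apply Finset.sum_le_sum
      intro S _
      exact mul_le_mul_of_nonneg_left (keyA S) (hγ0 S)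
    have step2 : ∑ S : Finset (Fin n), γ S * (f ∅ + ∑ i ∈ S, x i)
        = f ∅ + ∑ i : Fin n, p (i:ℕ) * x i := by
      simp only [mul_add, Finset.sum_add_distrib, ← Finset.sum_mul, hγ1, one_mul]
      congr 1
      have h4 : ∀ S : Finset (Fin n), γ S * ∑ i ∈ S, x i
          = ∑ i : Fin n, (if i ∈ S then γ S * x i else 0) := by
        intro S
        rw [Finset.mul_sum]
        rw [← Finset.sum_filter]
        congr 1
        ext i
        simp
      rw [Finset.sum_congr rfl (fun S _ => h4 S), Finset.sum_comm]
      apply Finset.sum_congr rfl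
      intro i _
      rw [← Finset.sum_filter, ← Finset.sum_mul, hγm i]
    have step3 : f ∅ + ∑ i : Fin n, p (i:ℕ) * x i = expVal α f := by
      have hfin : ∑ i : Fin n, p (i:ℕ) * x i
          = ∑ i ∈ Finset.range n, p i * (f (Si (i+1)) - f (Si i)) := by
        rw [← Fin.sum_univ_eq_sum_range (fun k => p k * (f (Si (k+1)) - f (Si k))) n]
      rw [hfin, abel' p (fun k => f (Si k)) n hn, part3, hSi0]
      ring
    linarith [step1, step2 ▸ step1, step3]
  exact ⟨part1, ⟨⟨α, part1, rfl⟩, hub⟩, part3⟩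
end

section
/- Let V be a finite set of n goods, let K ≥ 1 be an integer, and let f : 2^V → ℝ be a non-decreasing utility function with f(∅) = 0 admitting an (η,β)-cost-sharing scheme. Assign each good of V independently and uniformly at random to one of K players, and let S_k denote the (random) set of goods received by player k. Then the expected total welfare satisfies E[Σ_{k=1}^K f(S_k)] ≥ (1/(ηβ))·(1−1/e)·OPT, where OPT = max{ Σ_{k=1}^K f(A_k) : (A_1,...,A_K) a partition of V into K possibly-empty parts }. -/
open Finset

variable {W : Type*} [Fintype W] [DecidableEq W]

set_option linter.unusedSectionVars false

section SortInfra
variable {V : Type*} [Fintype V] [DecidableEq V]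

/-- tie-breaking index -/
noncomputable def wmraOrd (v : V) : ℕ := (Fintype.equivFin V v : ℕ)

lemma wmraOrd_inj : Function.Injective (wmraOrd (V := V)) := by
  intro a b h
  have := (Fintype.equivFin V).injective (Fin.val_injective h)
  exact this

/-- order on V induced by a key `κ`, ties broken by `wmraOrd`. -/
def wmraRel (κ : V → ℕ) (a b : V) : Prop :=
  κ a < κ b ∨ (κ a = κ b ∧ wmraOrd a ≤ wmraOrd b)

noncomputable instance (κ : V → ℕ) : DecidableRel (wmraRel κ) := by
  unfold wmraRel; infer_instance

instance (κ : V → ℕ) : IsTrans V (wmraRel κ) := by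
  constructor
  rintro a b c (h | ⟨h1, h2⟩) (h' | ⟨h1', h2'⟩)
  · exact Or.inl (h.trans h')
  · exact Or.inl (h1' ▸ h)
  · exact Or.inl (h1 ▸ h')
  · exact Or.inr ⟨h1.trans h1', h2.trans h2'⟩

instance (κ : V → ℕ) : Std.Antisymm (wmraRel κ) := by
  constructor
  rintro a b (h | ⟨h1, h2⟩) (h' | ⟨h1', h2'⟩)
  · exact absurd h' (not_lt.2 h.le)
  · exact absurd h (not_lt.2 h1'.le)
  · exact absurd h' (not_lt.2 h1.le)
  · exact wmraOrd_inj (le_antisymm h2 h2')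

instance (κ : V → ℕ) : Std.Total (wmraRel κ) := by
  constructor
  intro a b
  rcases lt_trichotomy (κ a) (κ b) with h | h | h
  · exact Or.inl (Or.inl h)
  · rcases le_total (wmraOrd a) (wmraOrd b) with h2 | h2
    · exact Or.inl (Or.inr ⟨h, h2⟩)
    · exact Or.inr (Or.inr ⟨h.symm, h2⟩)
  · exact Or.inr (Or.inl h)

lemma wmra_eq_of_perm_of_sorted {r : V → V → Prop} [Std.Antisymm r] {l₁ l₂ : List V}
    (hp : l₁.Perm l₂) (h1 : List.Pairwise r l₁) (h2 : List.Pairwise r l₂) : l₁ = l₂ :=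
  hp.eq_of_pairwise' h1 h2

lemma wmraRel_refl (κ : V → ℕ) (a : V) : wmraRel κ a a := Or.inr ⟨rfl, le_rfl⟩

lemma wmraRel_of_lt {κ : V → ℕ} {a b : V} (h : κ a < κ b) : wmraRel κ a b := Or.inl h

/-- sorted list of a finset w.r.t. key κ -/
noncomputable def slist (κ : V → ℕ) (X : Finset V) : List V := Finset.sort X (wmraRel κ)

lemma slist_sorted (κ : V → ℕ) (X : Finset V) : List.Pairwise (wmraRel κ) (slist κ X) :=
  Finset.pairwise_sort _ _

lemma slist_nodup (κ : V → ℕ) (X : Finset V) : (slist κ X).Nodup := Finset.sort_nodup _ _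

lemma slist_toFinset (κ : V → ℕ) (X : Finset V) : (slist κ X).toFinset = X :=
  Finset.sort_toFinset _ _

lemma slist_mem (κ : V → ℕ) (X : Finset V) (a : V) : a ∈ slist κ X ↔ a ∈ X :=
  Finset.mem_sort _

lemma slist_ne_nil {κ : V → ℕ} {X : Finset V} (hX : X.Nonempty) : slist κ X ≠ [] := by
  intro h
  obtain ⟨a, ha⟩ := hX
  have := (slist_mem κ X a).2 ha
  simp [h] at this

/-- restriction lemma: filtering a sorted list to a subset gives the sorted list of the subset -/
lemma slist_filter (κ : V → ℕ) {S X : Finset V} (hS : S ⊆ X) :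
    (slist κ X).filter (fun a => a ∈ S) = slist κ S := by
  apply wmra_eq_of_perm_of_sorted (r := wmraRel κ)
  · apply List.perm_of_nodup_nodup_toFinset_eq
    · exact List.Nodup.filter _ (slist_nodup κ X)
    · exact slist_nodup κ S
    · ext a
      simp only [List.toFinset_filter, List.mem_toFinset, Finset.mem_filter, slist_toFinset,
        slist_mem]
      simp only [decide_eq_true_eq]
      constructor
      · rintro ⟨-, h⟩; exact h
      · intro h; exact ⟨hS h, h⟩
  · exact List.Pairwise.filter _ (slist_sorted κ X)
  · exact slist_sorted κ S

/-- sort of a finset agrees for keys agreeing on the finset -/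
lemma slist_congr {κ κ' : V → ℕ} {X : Finset V} (h : ∀ x ∈ X, κ x = κ' x) :
    slist κ X = slist κ' X := by
  apply wmra_eq_of_perm_of_sorted (r := wmraRel κ')
  · apply List.perm_of_nodup_nodup_toFinset_eq (slist_nodup κ X) (slist_nodup κ' X)
    rw [slist_toFinset, slist_toFinset]
  · have hs := slist_sorted κ X
    refine List.Pairwise.imp_of_mem ?_ hs
    intro a b ha hb hab
    have ha' : a ∈ X := (slist_mem κ X a).1 ha
    have hb' : b ∈ X := (slist_mem κ X b).1 hb
    rwa [wmraRel, h a ha', h b hb'] at hab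
  · exact slist_sorted κ' X

/-- appending a strictly-larger element -/
lemma slist_insert_max {κ : V → ℕ} {X : Finset V} {j : V} (hj : ∀ x ∈ X, κ x < κ j) :
    slist κ (insert j X) = slist κ X ++ [j] := by
  have hjX : j ∉ X := fun h => lt_irrefl _ (hj j h)
  apply wmra_eq_of_perm_of_sorted (r := wmraRel κ)
  · apply List.perm_of_nodup_nodup_toFinset_eq (slist_nodup κ _)
    · rw [List.nodup_append']
      refine ⟨slist_nodup κ X, List.nodup_singleton j, ?_⟩
      intro a ha hb
      simp only [List.mem_singleton] at hb
      subst hb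
      exact hjX ((slist_mem κ X a).1 ha)
    · ext a
      simp [slist_toFinset, slist_mem, List.mem_toFinset, or_comm]
  · exact slist_sorted κ _
  · rw [List.pairwise_append]
    refine ⟨slist_sorted κ X, List.pairwise_singleton _ _, ?_⟩
    intro a ha b hb
    simp only [List.mem_singleton] at hb
    subst hb
    exact wmraRel_of_lt (hj a ((slist_mem κ X a).1 ha))

end SortInfra

section SortTake
variable {V : Type*} [Fintype V] [DecidableEq V]

lemma slist_take (κ : V → ℕ) (X : Finset V) (ℓ : Fin (slist κ X).length) :
    (slist κ X).take (ℓ.1 + 1)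
      = slist κ (X.filter (fun x => wmraRel κ x ((slist κ X).get ℓ))) := by
  have hnd := slist_nodup κ X
  have hsrt := slist_sorted κ X
  apply wmra_eq_of_perm_of_sorted (r := wmraRel κ)
  · apply List.perm_of_nodup_nodup_toFinset_eq
    · exact List.Nodup.sublist (List.take_sublist _ _) hnd
    · exact slist_nodup κ _
    · ext a
      simp only [List.mem_toFinset, slist_mem, Finset.mem_filter]
      rw [List.mem_take_iff_getElem]
      constructor
      · rintro ⟨j, hj, rfl⟩
        have hjl : j < (slist κ X).length := lt_of_lt_of_le hj (min_le_right _ _)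
        have hjℓ : j < ℓ.1 + 1 := lt_of_lt_of_le hj (min_le_left _ _)
        refine ⟨(slist_mem κ X _).1 (List.getElem_mem hjl), ?_⟩
        rcases Nat.lt_or_ge j ℓ.1 with h | h
        · exact List.pairwise_iff_get.1 hsrt ⟨j, hjl⟩ ℓ h
        · have : j = ℓ.1 := le_antisymm (Nat.lt_succ_iff.1 hjℓ) h
          subst this
          exact wmraRel_refl κ _
      · rintro ⟨haX, har⟩
        have : a ∈ slist κ X := (slist_mem κ X a).2 haX
        obtain ⟨j, hja⟩ := List.mem_iff_get.1 this
        rcases Nat.lt_or_ge ℓ.1 j.1 with h | h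
        · -- then get ℓ ≤ get j = a and a ≤ get ℓ, so a = get ℓ
          have h2 : wmraRel κ ((slist κ X).get ℓ) ((slist κ X).get j) :=
            List.pairwise_iff_get.1 hsrt ℓ j h
          have : (slist κ X).get j = (slist κ X).get ℓ := by
            rw [hja] at h2 ⊢
            exact _root_.antisymm har h2
          rw [this] at hja
          exact ⟨ℓ.1, lt_min (Nat.lt_succ_self _) ℓ.2, hja⟩
        · exact ⟨j.1, lt_min (Nat.lt_succ_of_le h) j.2, hja⟩
  · exact List.Pairwise.sublist (List.take_sublist _ _) hsrt
  · exact slist_sorted κ _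

/-- sum over Fin of get = sum over the list -/
lemma sum_fin_get {M : Type*} [AddCommMonoid M] (l : List V) (F : V → M) :
    (∑ ℓ : Fin l.length, F (l.get ℓ)) = (l.map F).sum := by
  induction l with
  | nil => simp
  | cons a t ih =>
      rw [List.map_cons, List.sum_cons, ← ih]
      exact Fin.sum_univ_succ (f := fun ℓ : Fin (t.length + 1) => F ((a :: t).get ℓ))

lemma sum_toFinset_eq {M : Type*} [AddCommMonoid M] (l : List V) (h : l.Nodup) (F : V → M) :
    ∑ i ∈ l.toFinset, F i = (l.map F).sum := by
  induction l with
  | nil => simp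
  | cons a t ih =>
      rw [List.toFinset_cons, List.map_cons, List.sum_cons]
      rw [List.nodup_cons] at h
      rw [Finset.sum_insert (by simpa using h.1), ih h.2]

end SortTake

section CostShareInfra
variable {V : Type*} [Fintype V] [DecidableEq V]
variable {f : Finset V → ℝ} {η β : ℝ} {χ : List V → V → ℝ}

/-- generalized insert-at-end lemma -/
lemma slist_insert_max' {κ : V → ℕ} {X : Finset V} {j : V}
    (hj : ∀ x ∈ X, x ≠ j ∧ wmraRel κ x j) :
    slist κ (insert j X) = slist κ X ++ [j] := by
  have hjX : j ∉ X := fun h => (hj j h).1 rfl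
  apply wmra_eq_of_perm_of_sorted (r := wmraRel κ)
  · apply List.perm_of_nodup_nodup_toFinset_eq (slist_nodup κ _)
    · rw [List.nodup_append']
      refine ⟨slist_nodup κ X, List.nodup_singleton j, ?_⟩
      intro a ha hb
      simp only [List.mem_singleton] at hb
      subst hb
      exact hjX ((slist_mem κ X a).1 ha)
    · ext a
      simp [slist_toFinset, slist_mem, List.mem_toFinset, or_comm]
  · exact slist_sorted κ _
  · rw [List.pairwise_append]
    refine ⟨slist_sorted κ X, List.pairwise_singleton _ _, ?_⟩
    intro a ha b hb
    simp only [List.mem_singleton] at hb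
    subst hb
    exact (hj a ((slist_mem κ X a).1 ha)).2

/-- the prefix of `i` in `X` w.r.t. key `κ` (inclusive) -/
noncomputable def pfx (κ : V → ℕ) (X : Finset V) (i : V) : Finset V :=
  X.filter (fun x => wmraRel κ x i)

/-- the prefix share of `i` in `X` -/
noncomputable def psTerm (χ : List V → V → ℝ) (κ : V → ℕ) (X : Finset V) (i : V) : ℝ :=
  χ (slist κ (pfx κ X i)) i

/-- total prefix-sum of `X` -/
noncomputable def prefixSum (χ : List V → V → ℝ) (κ : V → ℕ) (X : Finset V) : ℝ :=
  ∑ i ∈ X, psTerm χ κ X i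

lemma prefixSum_le (hcs : IsCostShare f η β χ) (hf0 : f ∅ = 0) (κ : V → ℕ) (X : Finset V) :
    prefixSum χ κ X ≤ η * f X := by
  rcases eq_or_ne X ∅ with rfl | hX
  · simp [prefixSum, hf0]
  · have hXne : X.Nonempty := Finset.nonempty_iff_ne_empty.2 hX
    have h := hcs.2.2 (slist κ X) (slist_ne_nil hXne) (slist_nodup κ X)
    rw [slist_toFinset] at h
    refine le_trans (le_of_eq ?_) h
    have h1 : ∀ ℓ : Fin (slist κ X).length,
        χ ((slist κ X).take (ℓ.1 + 1)) ((slist κ X).get ℓ)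
          = psTerm χ κ X ((slist κ X).get ℓ) := by
      intro ℓ
      rw [slist_take κ X ℓ]
      rfl
    calc prefixSum χ κ X = ∑ i ∈ (slist κ X).toFinset, psTerm χ κ X i := by
          rw [slist_toFinset]; rfl
      _ = ((slist κ X).map (psTerm χ κ X)).sum :=
          sum_toFinset_eq (slist κ X) (slist_nodup κ X) (psTerm χ κ X)
      _ = ∑ ℓ : Fin (slist κ X).length, psTerm χ κ X ((slist κ X).get ℓ) :=
          (sum_fin_get (slist κ X) (psTerm χ κ X)).symm
      _ = ∑ ℓ : Fin (slist κ X).length,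
            χ ((slist κ X).take (ℓ.1 + 1)) ((slist κ X).get ℓ) :=
          Finset.sum_congr rfl fun ℓ _ => (h1 ℓ).symm

lemma mem_pfx_self {κ : V → ℕ} {X : Finset V} {i : V} (hi : i ∈ X) : i ∈ pfx κ X i :=
  Finset.mem_filter.2 ⟨hi, wmraRel_refl κ i⟩

lemma pfx_subset {κ : V → ℕ} {X : Finset V} {i : V} : pfx κ X i ⊆ X :=
  Finset.filter_subset _ _

lemma chi_le_psTerm (hcs : IsCostShare f η β χ) {κ : V → ℕ} {X T : Finset V} {i : V}
    (hXT : X ⊆ T) (hi : i ∈ X) :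
    χ (slist κ T) i ≤ psTerm χ κ X i := by
  have hcm := hcs.2.1 (slist κ T) (slist_nodup κ T) (pfx κ X i)
    (by rw [slist_toFinset]; exact pfx_subset.trans hXT) i (mem_pfx_self hi)
  rwa [slist_filter κ (pfx_subset.trans hXT)] at hcm

lemma le_prefixSum (hcs : IsCostShare f η β χ) (hf0 : f ∅ = 0) (hβ : 1 ≤ β)
    (κ : V → ℕ) (X : Finset V) :
    f X / β ≤ prefixSum χ κ X := by
  rcases eq_or_ne X ∅ with rfl | hX
  · simp [prefixSum, hf0]
  · have hXne : X.Nonempty := Finset.nonempty_iff_ne_empty.2 hX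
    have h := (hcs.1 (slist κ X) (slist_ne_nil hXne) (slist_nodup κ X)).2
    rw [slist_toFinset] at h
    refine le_trans h ?_
    apply Finset.sum_le_sum
    intro i hi
    exact chi_le_psTerm hcs (le_refl X) hi

lemma f_nonneg (hmono : ∀ S T : Finset V, S ⊆ T → f S ≤ f T) (hf0 : f ∅ = 0) (X : Finset V) :
    0 ≤ f X := hf0 ▸ hmono ∅ X (Finset.empty_subset X)

lemma prefixSum_nonneg (hcs : IsCostShare f η β χ)
    (hmono : ∀ S T : Finset V, S ⊆ T → f S ≤ f T) (hf0 : f ∅ = 0) (hβ : 1 ≤ β)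
    (κ : V → ℕ) (X : Finset V) : 0 ≤ prefixSum χ κ X :=
  le_trans (div_nonneg (f_nonneg hmono hf0 X) (le_trans zero_le_one hβ))
    (le_prefixSum hcs hf0 hβ κ X)

end CostShareInfra

section OmegaLayer
variable {V : Type*} [Fintype V] [DecidableEq V]
variable {f : Finset V → ℝ} {η β : ℝ} {χ : List V → V → ℝ}
variable {N : ℕ}

/-- the key of a sample -/
def κω (ω : V → Fin N) : V → ℕ := fun i => (ω i : ℕ)

/-- the set revealed by time `m` -/
def Rset (ω : V → Fin N) (m : ℕ) : Finset V :=
  Finset.univ.filter (fun i => (ω i : ℕ) < m)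

lemma Rset_mono {ω : V → Fin N} {m m' : ℕ} (h : m ≤ m') : Rset ω m ⊆ Rset ω m' := by
  intro x hx
  simp only [Rset, Finset.mem_filter, Finset.mem_univ, true_and] at hx ⊢
  exact lt_of_lt_of_le hx h

lemma mem_Rset {ω : V → Fin N} {m : ℕ} {x : V} : x ∈ Rset ω m ↔ (ω x : ℕ) < m := by
  simp [Rset]

/-- the share of `i` appended at the end of the revealed set -/
noncomputable def thet (χ : List V → V → ℝ) (ω : V → Fin N) (m : ℕ) (i : V) : ℝ :=
  χ (slist (κω ω) ((Rset ω m).erase i) ++ [i]) i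

lemma thet_list_nodup (ω : V → Fin N) (m : ℕ) (i : V) :
    (slist (κω ω) ((Rset ω m).erase i) ++ [i]).Nodup := by
  rw [List.nodup_append']
  refine ⟨slist_nodup _ _, List.nodup_singleton i, ?_⟩
  intro a ha hb
  simp only [List.mem_singleton] at hb
  subst hb
  exact (Finset.mem_erase.1 ((slist_mem _ _ a).1 ha)).1 rfl

lemma thet_list_toFinset {ω : V → Fin N} {m : ℕ} {i : V} (hi : i ∈ Rset ω m) :
    (slist (κω ω) ((Rset ω m).erase i) ++ [i]).toFinset = Rset ω m := by
  ext a
  simp only [List.toFinset_append, Finset.mem_union, List.mem_toFinset, slist_toFinset,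
    List.toFinset_cons, List.toFinset_nil, LawfulSingleton.insert_empty_eq, Finset.mem_insert,
    Finset.mem_singleton, Finset.mem_erase]
  constructor
  · rintro (⟨-, h⟩ | rfl)
    · exact h
    · exact hi
  · intro ha
    rcases eq_or_ne a i with rfl | hne
    · exact Or.inr rfl
    · exact Or.inl ⟨hne, ha⟩

/-- Pointwise master inequality I: the partition part is paid for by the prefix sum of the
revealed set plus the end-shares of its unrevealed elements. -/
lemma master_one (hcs : IsCostShare f η β χ) (hmono : ∀ S T : Finset V, S ⊆ T → f S ≤ f T)
    (hf0 : f ∅ = 0) (hβ : 1 ≤ β) (B : Finset V) (ω : V → Fin N) (m : ℕ) :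
    f B / β ≤ prefixSum χ (κω ω) (Rset ω m) + ∑ i ∈ B \ Rset ω m, thet χ ω m i := by
  classical
  set κ := κω ω
  set R := Rset ω m with hR
  set T := R ∪ B with hT
  have hβ0 : (0:ℝ) < β := lt_of_lt_of_le zero_lt_one hβ
  rcases eq_or_ne T ∅ with hTe | hTne
  · have hBe : B = ∅ := by
      rw [Finset.union_eq_empty] at hTe
      exact hTe.2
    have hRe : R = ∅ := by
      rw [Finset.union_eq_empty] at hTe
      exact hTe.1
    rw [hBe, hRe, hf0]
    simp [prefixSum]
  · have hTne' : T.Nonempty := Finset.nonempty_iff_ne_empty.2 hTne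
    have hbud := (hcs.1 (slist κ T) (slist_ne_nil hTne') (slist_nodup κ T)).2
    rw [slist_toFinset] at hbud
    have h1 : f B / β ≤ f T / β := by
      gcongr
      exact hmono B T Finset.subset_union_right
    refine le_trans h1 (le_trans hbud ?_)
    have hsplit : T = R ∪ (B \ R) := by
      rw [hT, Finset.union_sdiff_self_eq_union]
    have hdisj : Disjoint R (B \ R) := Finset.disjoint_sdiff
    rw [hsplit, Finset.sum_union hdisj]
    apply add_le_add
    · -- revealed part
      apply Finset.sum_le_sum
      intro j hj
      have : χ (slist κ (R ∪ (B \ R))) j ≤ psTerm χ κ R j :=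
        chi_le_psTerm hcs Finset.subset_union_left hj
      exact this
    · -- unrevealed part
      apply Finset.sum_le_sum
      intro j hj
      have hjB : j ∈ B := (Finset.mem_sdiff.1 hj).1
      have hjR : j ∉ R := (Finset.mem_sdiff.1 hj).2
      -- cross-monotonicity with s = insert j R
      have hsub : insert j R ⊆ R ∪ (B \ R) := by
        intro x hx
        rcases Finset.mem_insert.1 hx with rfl | hx
        · exact Finset.mem_union.2 (Or.inr hj)
        · exact Finset.mem_union.2 (Or.inl hx)
      have hcm := hcs.2.1 (slist κ (R ∪ (B \ R))) (slist_nodup κ _) (insert j R)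
        (by rw [slist_toFinset]; exact hsub) j (Finset.mem_insert_self j R)
      rw [slist_filter κ hsub] at hcm
      have hins : slist κ (insert j R) = slist κ R ++ [j] := by
        apply slist_insert_max'
        intro x hx
        have hx' : (ω x : ℕ) < m := mem_Rset.1 hx
        have hj' : m ≤ (ω j : ℕ) := le_of_not_gt (fun hc => hjR (mem_Rset.2 hc))
        have hlt : κ x < κ j := lt_of_lt_of_le hx' hj'
        exact ⟨fun he => absurd (he ▸ hlt) (lt_irrefl _), wmraRel_of_lt hlt⟩
      rw [hins] at hcm
      have hthet : thet χ ω m j = χ (slist κ R ++ [j]) j := by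
        rw [thet]
        congr 2
        rw [Finset.erase_eq_of_notMem hjR]
      rw [hthet]
      exact hcm

/-- Pointwise master inequality II: prefix sums only grow, and newly revealed elements
contribute at least their end-shares. -/
lemma master_two (hcs : IsCostShare f η β χ) (ω : V → Fin N) (m : ℕ) :
    prefixSum χ (κω ω) (Rset ω m)
      + ∑ i ∈ Rset ω (m + 1) \ Rset ω m, thet χ ω (m + 1) i
      ≤ prefixSum χ (κω ω) (Rset ω (m + 1)) := by
  classical
  set κ := κω ω
  set R := Rset ω m with hRdef
  set R' := Rset ω (m + 1) with hR'def
  have hRR' : R ⊆ R' := Rset_mono (Nat.le_succ m)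
  rw [prefixSum, prefixSum, ← Finset.sum_sdiff hRR', add_comm (∑ i ∈ R' \ R, psTerm χ κ R' i) _]
  apply add_le_add
  · -- psTerms of old elements are unchanged
    apply le_of_eq
    apply Finset.sum_congr rfl
    intro i hi
    have hpfx : pfx κ R i = pfx κ R' i := by
      ext x
      simp only [pfx, Finset.mem_filter]
      constructor
      · rintro ⟨hx, hr⟩
        exact ⟨hRR' hx, hr⟩
      · rintro ⟨hx, hr⟩
        refine ⟨?_, hr⟩
        have hiR : (ω i : ℕ) < m := mem_Rset.1 hi
        rcases hr with hlt | ⟨heq, -⟩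
        · exact mem_Rset.2 (lt_trans hlt hiR)
        · have : (ω x : ℕ) = (ω i : ℕ) := heq
          exact mem_Rset.2 (this ▸ hiR)
    rw [psTerm, psTerm, hpfx]
  · -- new elements: psTerm ≥ thet
    apply Finset.sum_le_sum
    intro i hi
    have hiR' : i ∈ R' := (Finset.mem_sdiff.1 hi).1
    have hl := thet_list_nodup (V := V) (N := N) ω (m + 1) i
    have hcm := hcs.2.1 (slist κ (R'.erase i) ++ [i]) hl (pfx κ R' i)
      (by rw [thet_list_toFinset hiR']; exact pfx_subset) i (mem_pfx_self hiR')
    have hfe : (slist κ (R'.erase i) ++ [i]).filter (fun a => a ∈ pfx κ R' i)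
        = slist κ ((pfx κ R' i).erase i) ++ [i] := by
      rw [List.filter_append]
      congr 1
      · have : (slist κ (R'.erase i)).filter (fun a => a ∈ pfx κ R' i)
            = (slist κ (R'.erase i)).filter (fun a => a ∈ (pfx κ R' i).erase i) := by
          apply List.filter_congr
          intro a ha
          have haR : a ∈ R'.erase i := (slist_mem _ _ a).1 ha
          have hane : a ≠ i := (Finset.mem_erase.1 haR).1
          simp only [decide_eq_decide, Finset.mem_erase]
          constructor
          · intro h; exact ⟨hane, h⟩
          · rintro ⟨-, h⟩; exact h
        rw [this]
        exact slist_filter κ (Finset.erase_subset_erase i pfx_subset)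
      · simp [mem_pfx_self hiR']
    rw [hfe] at hcm
    have hins : slist κ ((pfx κ R' i).erase i) ++ [i] = slist κ (pfx κ R' i) := by
      rw [← slist_insert_max' (X := (pfx κ R' i).erase i) (j := i), Finset.insert_erase
        (mem_pfx_self hiR')]
      intro x hx
      refine ⟨(Finset.mem_erase.1 hx).1, ?_⟩
      exact (Finset.mem_filter.1 (Finset.mem_of_mem_erase hx)).2
    rw [hins] at hcm
    exact hcm

end OmegaLayer

section ExpectLayer
variable {V : Type*} [Fintype V] [DecidableEq V]
variable {f : Finset V → ℝ} {η β : ℝ} {χ : List V → V → ℝ}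

lemma card_filter_lt_fin {N m : ℕ} (h : m < N) :
    ((Finset.univ : Finset (Fin N)).filter (fun a : Fin N => (a : ℕ) < m)).card = m := by
  have : (Finset.univ : Finset (Fin N)).filter (fun a : Fin N => (a : ℕ) < m)
      = Finset.Iio (⟨m, h⟩ : Fin N) := by
    ext a
    simp [Fin.lt_def]
  rw [this, Fin.card_Iio]

lemma card_filter_not_lt_fin {N m : ℕ} (h : m ≤ N) :
    ((Finset.univ : Finset (Fin N)).filter (fun a : Fin N => ¬ ((a : ℕ) < m))).card = N - m := by
  rcases eq_or_lt_of_le h with rfl | h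
  · have : ((Finset.univ : Finset (Fin m)).filter (fun a : Fin m => ¬ ((a : ℕ) < m))) = ∅ := by
      ext a
      simp [a.2]
    rw [this]
    simp
  · have h2 := Finset.card_filter_add_card_filter_not
      (s := (Finset.univ : Finset (Fin N))) (p := fun a : Fin N => (a : ℕ) < m)
    rw [card_filter_lt_fin h, Finset.card_univ, Fintype.card_fin] at h2
    omega

lemma card_filter_eq_fin {N m : ℕ} (h : m < N) :
    ((Finset.univ : Finset (Fin N)).filter (fun a : Fin N => (a : ℕ) = m)).card = 1 := by
  have : (Finset.univ : Finset (Fin N)).filter (fun a : Fin N => (a : ℕ) = m) = {⟨m, h⟩} := by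
    ext a
    simp only [Finset.mem_filter, Finset.mem_univ, true_and, Finset.mem_singleton]
    constructor
    · intro ha; exact Fin.ext ha
    · rintro rfl; rfl
  rw [this, Finset.card_singleton]

/-- sum over samples of a quantity not depending on coordinate `i`, against an
indicator on coordinate `i`, factorizes. -/
lemma coord_indep_sum {N : ℕ} (hN : 0 < N) (F : (V → Fin N) → ℝ) (i : V)
    (hF : ∀ ω a, F (Function.update ω i a) = F ω) (p : Fin N → Prop) [DecidablePred p] :
    (N : ℝ) * ∑ ω : V → Fin N, (if p (ω i) then F ω else 0)
      = (((Finset.univ : Finset (Fin N)).filter p).card : ℝ) * ∑ ω : V → Fin N, F ω := by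
  classical
  set e := Equiv.piSplitAt i (fun _ : V => Fin N) with he
  have key : ∀ (a : Fin N) ρ, (e.symm (a, ρ)) i = a := by
    intro a ρ
    rw [he, Equiv.piSplitAt_symm_apply]
    simp
  have keyne : ∀ (a : Fin N) ρ (j : V) (hj : j ≠ i), (e.symm (a, ρ)) j = ρ ⟨j, hj⟩ := by
    intro a ρ j hj
    rw [he, Equiv.piSplitAt_symm_apply]
    simp [hj]
  have key2 : ∀ (a b : Fin N) ρ, F (e.symm (a, ρ)) = F (e.symm (b, ρ)) := by
    intro a b ρ
    have : e.symm (a, ρ) = Function.update (e.symm (b, ρ)) i a := by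
      funext j
      rcases eq_or_ne j i with rfl | hj
      · rw [key, Function.update_self]
      · rw [keyne _ _ _ hj, Function.update_of_ne hj, keyne _ _ _ hj]
    rw [this, hF]
  set G : Fin N → ℝ := fun a => ∑ ρ, F (e.symm (a, ρ)) with hG
  have hGconst : ∀ a b, G a = G b := by
    intro a b
    exact Finset.sum_congr rfl fun ρ _ => key2 a b ρ
  set a₀ : Fin N := ⟨0, hN⟩
  have h1 : ∑ ω : V → Fin N, (if p (ω i) then F ω else 0)
      = ∑ a : Fin N, (if p a then G a else 0) := by
    rw [← Equiv.sum_comp e.symm (fun ω => if p (ω i) then F ω else 0),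
      Fintype.sum_prod_type]
    apply Finset.sum_congr rfl
    intro a _
    rw [hG]
    simp only [key]
    split
    · rfl
    · simp
  have h2 : ∑ ω : V → Fin N, F ω = ∑ a : Fin N, G a := by
    rw [← Equiv.sum_comp e.symm F, Fintype.sum_prod_type]
  have h3 : ∑ a : Fin N, (if p a then G a else 0)
      = (((Finset.univ : Finset (Fin N)).filter p).card : ℝ) * G a₀ := by
    rw [← Finset.sum_filter]
    rw [Finset.sum_congr rfl (fun a _ => hGconst a a₀)]
    rw [Finset.sum_const, nsmul_eq_mul]
  have h4 : ∑ a : Fin N, G a = (N : ℝ) * G a₀ := by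
    rw [Finset.sum_congr rfl (fun a _ => hGconst a a₀), Finset.sum_const, Finset.card_univ,
      Fintype.card_fin, nsmul_eq_mul]
  rw [h1, h2, h3, h4]
  ring

lemma thet_update {N : ℕ} (ω : V → Fin N) (m : ℕ) (i : V) (a : Fin N) :
    thet χ (Function.update ω i a) m i = thet χ ω m i := by
  have hR : (Rset (Function.update ω i a) m).erase i = (Rset ω m).erase i := by
    ext x
    simp only [Finset.mem_erase, mem_Rset]
    constructor
    · rintro ⟨hx, h⟩
      rw [Function.update_of_ne hx] at h
      exact ⟨hx, h⟩
    · rintro ⟨hx, h⟩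
      refine ⟨hx, ?_⟩
      rw [Function.update_of_ne hx]
      exact h
  rw [thet, thet, hR]
  have : slist (κω (Function.update ω i a)) ((Rset ω m).erase i)
      = slist (κω ω) ((Rset ω m).erase i) := by
    apply slist_congr
    intro x hx
    have hxi : x ≠ i := (Finset.mem_erase.1 hx).1
    simp [κω, Function.update_of_ne hxi]
  rw [this]

end ExpectLayer

section MainChain
variable {V : Type*} [Fintype V] [DecidableEq V]
variable {f : Finset V → ℝ} {η β : ℝ} {χ : List V → V → ℝ}

/-- total (unnormalized) expected prefix sum at time m -/
noncomputable def GG (V : Type*) [Fintype V] [DecidableEq V] (χ : List V → V → ℝ)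
    (N m : ℕ) : ℝ :=
  ∑ ω : V → Fin N, prefixSum χ (κω ω) (Rset ω m)

/-- total (unnormalized) expected end-share at time m -/
noncomputable def TT (V : Type*) [Fintype V] [DecidableEq V] (χ : List V → V → ℝ)
    (N m : ℕ) : ℝ :=
  ∑ ω : V → Fin N, ∑ i : V, thet χ ω m i

lemma sum_deficit_partition {K : ℕ} (A : Fin K → Finset V)
    (hdisj : ∀ k l : Fin K, k ≠ l → Disjoint (A k) (A l))
    (hcover : Finset.univ.biUnion A = Finset.univ) (R : Finset V) (t : V → ℝ) :
    ∑ k : Fin K, ∑ i ∈ A k \ R, t i = ∑ i ∈ Finset.univ \ R, t i := by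
  have h1 : ∀ B : Finset V, ∑ i ∈ B \ R, t i = ∑ i ∈ B, (if i ∉ R then t i else 0) := by
    intro B
    rw [Finset.sdiff_eq_filter, Finset.sum_filter]
  rw [h1]
  simp_rw [h1]
  rw [← hcover, Finset.sum_biUnion (fun k _ l _ hkl => hdisj k l hkl)]

lemma GG_zero (N : ℕ) : GG V χ N 0 = 0 := by
  rw [GG]
  apply Finset.sum_eq_zero
  intro ω _
  have : Rset (V := V) ω 0 = ∅ := by
    ext x
    simp [mem_Rset]
  rw [prefixSum, this]
  simp

/-- Expectation form of the first master inequality. -/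
lemma exp_one {K N : ℕ} (hcs : IsCostShare f η β χ)
    (hmono : ∀ S T : Finset V, S ⊆ T → f S ≤ f T) (hf0 : f ∅ = 0) (hβ : 1 ≤ β)
    (A : Fin K → Finset V)
    (hdisj : ∀ k l : Fin K, k ≠ l → Disjoint (A k) (A l))
    (hcover : Finset.univ.biUnion A = Finset.univ) {m : ℕ} (hN : 0 < N) (hm : m ≤ N) :
    (N : ℝ) * ((N : ℝ) ^ (Fintype.card V) * ((∑ k : Fin K, f (A k)) / β))
      ≤ (N : ℝ) * ((K : ℝ) * GG V χ N m) + ((N - m : ℕ) : ℝ) * TT V χ N m := by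
  classical
  -- pointwise inequality
  have hpt : ∀ ω : V → Fin N,
      (∑ k : Fin K, f (A k)) / β ≤ (K : ℝ) * prefixSum χ (κω ω) (Rset ω m)
        + ∑ i ∈ Finset.univ \ Rset ω m, thet χ ω m i := by
    intro ω
    rw [Finset.sum_div]
    calc ∑ k : Fin K, f (A k) / β
        ≤ ∑ k : Fin K, (prefixSum χ (κω ω) (Rset ω m) + ∑ i ∈ A k \ Rset ω m, thet χ ω m i) :=
          Finset.sum_le_sum fun k _ => master_one hcs hmono hf0 hβ (A k) ω m
      _ = (K : ℝ) * prefixSum χ (κω ω) (Rset ω m)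
            + ∑ k : Fin K, ∑ i ∈ A k \ Rset ω m, thet χ ω m i := by
          rw [Finset.sum_add_distrib, Finset.sum_const, Finset.card_univ, Fintype.card_fin,
            nsmul_eq_mul]
      _ = (K : ℝ) * prefixSum χ (κω ω) (Rset ω m)
            + ∑ i ∈ Finset.univ \ Rset ω m, thet χ ω m i := by
          rw [sum_deficit_partition A hdisj hcover]
  -- sum over samples
  have hsum : (N : ℝ) ^ (Fintype.card V) * ((∑ k : Fin K, f (A k)) / β)
      ≤ (K : ℝ) * GG V χ N m
        + ∑ ω : V → Fin N, ∑ i ∈ Finset.univ \ Rset ω m, thet χ ω m i := by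
    have hcard : ((Fintype.card (V → Fin N) : ℝ)) = (N : ℝ) ^ (Fintype.card V) := by
      rw [Fintype.card_fun, Fintype.card_fin]
      push_cast
      ring
    calc (N : ℝ) ^ (Fintype.card V) * ((∑ k : Fin K, f (A k)) / β)
        = ∑ _ω : V → Fin N, ((∑ k : Fin K, f (A k)) / β) := by
          rw [Finset.sum_const, Finset.card_univ, nsmul_eq_mul, hcard]
      _ ≤ ∑ ω : V → Fin N, ((K : ℝ) * prefixSum χ (κω ω) (Rset ω m)
            + ∑ i ∈ Finset.univ \ Rset ω m, thet χ ω m i) :=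
          Finset.sum_le_sum fun ω _ => hpt ω
      _ = (K : ℝ) * GG V χ N m
            + ∑ ω : V → Fin N, ∑ i ∈ Finset.univ \ Rset ω m, thet χ ω m i := by
          rw [Finset.sum_add_distrib, ← Finset.mul_sum, GG]
  -- deficit factorization
  have hdef : (N : ℝ) * ∑ ω : V → Fin N, ∑ i ∈ Finset.univ \ Rset ω m, thet χ ω m i
      = ((N - m : ℕ) : ℝ) * TT V χ N m := by
    have hrw : ∀ ω : V → Fin N, ∑ i ∈ Finset.univ \ Rset ω m, thet χ ω m i
        = ∑ i : V, (if ¬ ((ω i : ℕ) < m) then thet χ ω m i else 0) := by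
      intro ω
      rw [Finset.sdiff_eq_filter, Finset.sum_filter]
      apply Finset.sum_congr rfl
      intro i _
      by_cases h : (ω i : ℕ) < m
      · simp [mem_Rset, h]
      · simp [mem_Rset, h]
    simp_rw [hrw]
    rw [Finset.sum_comm, Finset.mul_sum]
    have hco : ∀ i : V, (N : ℝ) * ∑ ω : V → Fin N, (if ¬ ((ω i : ℕ) < m)
          then thet χ ω m i else 0)
        = ((N - m : ℕ) : ℝ) * ∑ ω : V → Fin N, thet χ ω m i := by
      intro i
      have := coord_indep_sum (V := V) hN (fun ω => thet χ ω m i) i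
        (fun ω a => thet_update ω m i a) (fun a => ¬ ((a : ℕ) < m))
      rw [this, card_filter_not_lt_fin hm]
    rw [Finset.sum_congr rfl fun i _ => hco i, ← Finset.mul_sum, TT, Finset.sum_comm]
  have h0N : (0:ℝ) ≤ (N:ℝ) := Nat.cast_nonneg N
  nlinarith [mul_le_mul_of_nonneg_left hsum h0N]

/-- Expectation form of the second master inequality. -/
lemma exp_two {N : ℕ} (hcs : IsCostShare f η β χ) {m : ℕ} (hm : m < N) :
    TT V χ N (m + 1) ≤ (N : ℝ) * (GG V χ N (m + 1) - GG V χ N m) := by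
  classical
  have hN : 0 < N := lt_of_le_of_lt (Nat.zero_le m) hm
  have hpt : ∀ ω : V → Fin N,
      ∑ i ∈ Rset ω (m + 1) \ Rset ω m, thet χ ω (m + 1) i
        ≤ prefixSum χ (κω ω) (Rset ω (m + 1)) - prefixSum χ (κω ω) (Rset ω m) := by
    intro ω
    have := master_two hcs ω m
    linarith
  have hsum : ∑ ω : V → Fin N, ∑ i ∈ Rset ω (m + 1) \ Rset ω m, thet χ ω (m + 1) i
      ≤ GG V χ N (m + 1) - GG V χ N m := by
    rw [GG, GG, ← Finset.sum_sub_distrib]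
    exact Finset.sum_le_sum fun ω _ => hpt ω
  have hrw : ∀ ω : V → Fin N, ∑ i ∈ Rset ω (m + 1) \ Rset ω m, thet χ ω (m + 1) i
      = ∑ i : V, (if (ω i : ℕ) = m then thet χ ω (m + 1) i else 0) := by
    intro ω
    have : Rset ω (m + 1) \ Rset ω m
        = Finset.univ.filter (fun i : V => (ω i : ℕ) = m) := by
      ext i
      simp only [Finset.mem_sdiff, mem_Rset, Finset.mem_filter, Finset.mem_univ, true_and]
      omega
    rw [this, Finset.sum_filter]
  have hTT : (N : ℝ) * ∑ ω : V → Fin N, ∑ i ∈ Rset ω (m + 1) \ Rset ω m, thet χ ω (m + 1) i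
      = TT V χ N (m + 1) := by
    simp_rw [hrw]
    rw [Finset.sum_comm, Finset.mul_sum]
    have hco : ∀ i : V, (N : ℝ) * ∑ ω : V → Fin N, (if (ω i : ℕ) = m
          then thet χ ω (m + 1) i else 0)
        = ∑ ω : V → Fin N, thet χ ω (m + 1) i := by
      intro i
      have := coord_indep_sum (V := V) hN (fun ω => thet χ ω (m + 1) i) i
        (fun ω a => thet_update ω (m + 1) i a) (fun a => (a : ℕ) = m)
      rw [this, card_filter_eq_fin hm]
      ring
    rw [Finset.sum_congr rfl fun i _ => hco i, TT, Finset.sum_comm]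
  rw [← hTT]
  have h0N : (0:ℝ) ≤ (N:ℝ) := Nat.cast_nonneg N
  exact mul_le_mul_of_nonneg_left hsum h0N

end MainChain

section Numerics

/-- abstract recursion bound -/
lemma recursion_bound (K N M : ℕ) (hM : M ≤ N) (hK : 0 < K) (y : ℕ → ℝ) (a : ℝ)
    (h0 : y 0 = a)
    (hstep : ∀ m, m < M → (K : ℝ) * y (m + 1) ≤ ((N : ℝ) - (m + 1)) * (y m - y (m + 1))) :
    y M ≤ a * ∏ m ∈ Finset.range M,
      (((N : ℝ) - (m + 1)) / ((N : ℝ) + (K : ℝ) - (m + 1))) := by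
  have H : ∀ j, j ≤ M → y j ≤ a * ∏ m ∈ Finset.range j,
      (((N : ℝ) - (m + 1)) / ((N : ℝ) + (K : ℝ) - (m + 1))) := by
    intro j
    induction j with
    | zero => intro _; simp [h0]
    | succ j ih =>
        intro hj
        have hjM : j < M := hj
        have hyj := ih (le_of_lt hjM)
        have hstepj := hstep j hjM
        have hnum : (0 : ℝ) ≤ (N : ℝ) - (j + 1) := by
          have : (j + 1 : ℕ) ≤ N := le_trans hj hM
          have := Nat.cast_le (α := ℝ).2 this
          push_cast at this
          linarith
        have hden : (0 : ℝ) < (N : ℝ) + (K : ℝ) - (j + 1) := by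
          have hK' : (1 : ℝ) ≤ (K : ℝ) := by exact_mod_cast hK
          linarith
        -- from the step: y (j+1) * (N + K - (j+1)) ≤ (N - (j+1)) * y j
        have hineq : y (j + 1) * ((N : ℝ) + (K : ℝ) - (j + 1))
            ≤ ((N : ℝ) - (j + 1)) * y j := by nlinarith [hstepj]
        have hstep' : y (j + 1) ≤ (((N : ℝ) - (j + 1)) / ((N : ℝ) + (K : ℝ) - (j + 1))) * y j := by
          rw [div_mul_eq_mul_div, le_div_iff₀ hden]
          linarith
        calc y (j + 1) ≤ (((N : ℝ) - (j + 1)) / ((N : ℝ) + (K : ℝ) - (j + 1))) * y j := hstep'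
          _ ≤ (((N : ℝ) - (j + 1)) / ((N : ℝ) + (K : ℝ) - (j + 1)))
              * (a * ∏ m ∈ Finset.range j,
                  (((N : ℝ) - (m + 1)) / ((N : ℝ) + (K : ℝ) - (m + 1)))) := by
            apply mul_le_mul_of_nonneg_left hyj
            exact div_nonneg hnum (le_of_lt hden)
          _ = a * ∏ m ∈ Finset.range (j + 1),
                (((N : ℝ) - (m + 1)) / ((N : ℝ) + (K : ℝ) - (m + 1))) := by
            rw [Finset.prod_range_succ]
            ring
  exact H M le_rfl

lemma prod_div_telescope (u : ℕ → ℝ) (M : ℕ) (hu : ∀ m < M, u m ≠ 0) (h0 : u 0 ≠ 0) :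
    ∏ m ∈ Finset.range M, (u (m + 1) / u m) = u M / u 0 := by
  induction M with
  | zero => simp [div_self h0]
  | succ j ih =>
      have hj : ∀ m < j, u m ≠ 0 := fun m hm => hu m (lt_trans hm (Nat.lt_succ_self j))
      rw [Finset.prod_range_succ, ih hj]
      have hj0 : u j ≠ 0 := hu j (Nat.lt_succ_self j)
      field_simp

lemma exp_inv_bound (K : ℕ) (hK : 1 ≤ K) :
    Real.exp (1 / (K : ℝ)) ≤ 1 + 1 / (K : ℝ) + 3 / (4 * (K : ℝ) ^ 2) := by
  have hKr : (1 : ℝ) ≤ (K : ℝ) := by exact_mod_cast hK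
  have hKr0 : (0 : ℝ) < (K : ℝ) := lt_of_lt_of_le zero_lt_one hKr
  have hx : |1 / (K : ℝ)| ≤ 1 := by
    rw [abs_of_nonneg (by positivity)]
    rw [div_le_one hKr0]
    exact hKr
  have h := Real.exp_bound hx (n := 2) (by norm_num)
  have hsum : ∑ m ∈ Finset.range 2, (1 / (K : ℝ)) ^ m / (Nat.factorial m)
      = 1 + 1 / (K : ℝ) := by
    rw [Finset.sum_range_succ, Finset.sum_range_one]
    norm_num
  rw [hsum] at h
  have h2 := (abs_le.1 h).2
  have hb : |1 / (K : ℝ)| ^ 2 * ((2 + 1 : ℕ) / ((Nat.factorial 2 : ℕ) * (2 : ℕ)))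
      = 3 / (4 * (K : ℝ) ^ 2) := by
    rw [abs_of_nonneg (by positivity)]
    rw [Nat.factorial_two]
    push_cast
    field_simp
    ring
  rw [hb] at h2
  linarith

lemma ratio_le_exp (K : ℕ) (hK : 1 ≤ K) :
    (4 * (K : ℝ) - 3) / (4 * (K : ℝ) + 1) ≤ Real.exp (-(1 / (K : ℝ))) := by
  have hKr : (1 : ℝ) ≤ (K : ℝ) := by exact_mod_cast hK
  have h1 : (0 : ℝ) < 4 * (K : ℝ) - 3 := by linarith
  have h2 : (0 : ℝ) < 4 * (K : ℝ) + 1 := by linarith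
  have hKr0 : (0 : ℝ) < (K : ℝ) := lt_of_lt_of_le zero_lt_one hKr
  have hexp : Real.exp (1 / (K : ℝ)) ≤ (4 * (K : ℝ) + 1) / (4 * (K : ℝ) - 3) := by
    refine le_trans (exp_inv_bound K hK) ?_
    rw [le_div_iff₀ h1]
    have e1 : (1 + 1 / (K : ℝ) + 3 / (4 * (K : ℝ) ^ 2)) * (4 * (K : ℝ) - 3) * (4 * (K:ℝ)^2)
        = (4*(K:ℝ)^2 + 4*(K:ℝ) + 3) * (4 * (K : ℝ) - 3) := by
      field_simp
    nlinarith [e1, sq_nonneg (K:ℝ), hKr0]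
  rw [Real.exp_neg, inv_eq_one_div, le_div_iff₀ (Real.exp_pos _)]
  calc (4 * (K : ℝ) - 3) / (4 * (K : ℝ) + 1) * Real.exp (1 / (K : ℝ))
      ≤ (4 * (K : ℝ) - 3) / (4 * (K : ℝ) + 1) * ((4 * (K : ℝ) + 1) / (4 * (K : ℝ) - 3)) :=
        mul_le_mul_of_nonneg_left hexp (div_nonneg (le_of_lt h1) (le_of_lt h2))
    _ = 1 := by
        field_simp

/-- the key numeric product bound: with `N = 4K²`, `M = 4K` the deficit factor is at most
`1/e`. -/
lemma numeric_bound (K : ℕ) (hK : 1 ≤ K) :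
    ∏ m ∈ Finset.range (4 * K),
        ((((4 * K ^ 2 : ℕ) : ℝ) - (m + 1)) / (((4 * K ^ 2 : ℕ) : ℝ) + (K : ℝ) - (m + 1)))
      ≤ Real.exp (-1) := by
  have hKr : (1 : ℝ) ≤ (K : ℝ) := by exact_mod_cast hK
  have hKr0 : (0 : ℝ) < (K : ℝ) := lt_of_lt_of_le zero_lt_one hKr
  set u : ℕ → ℝ := fun m => ((4 * K ^ 2 : ℕ) : ℝ) + (K : ℝ) - 1 - m with hu
  have hucast : ((4 * K ^ 2 : ℕ) : ℝ) = 4 * (K : ℝ) ^ 2 := by push_cast; ring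
  have hupos : ∀ m, m < 4 * K → 0 < u m := by
    intro m hm
    rw [hu]
    simp only
    rw [hucast]
    have hmr : (m : ℝ) + 1 ≤ 4 * (K : ℝ) := by
      have : (m + 1 : ℕ) ≤ 4 * K := hm
      exact_mod_cast this
    nlinarith
  have huM : 0 ≤ u (4 * K) := by
    rw [hu]
    simp only
    push_cast
    nlinarith [hKr]
  -- step 1: per-factor Bernoulli bound
  have hfac : ∀ m, m < 4 * K →
      (((4 * K ^ 2 : ℕ) : ℝ) - (m + 1)) / (((4 * K ^ 2 : ℕ) : ℝ) + (K : ℝ) - (m + 1))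
        ≤ (u (m + 1) / u m) ^ K := by
    intro m hm
    have hum : 0 < u m := hupos m hm
    have hum1 : 0 ≤ u (m + 1) := by
      rcases eq_or_lt_of_le (Nat.succ_le_of_lt hm) with he | hlt
      · rw [← he] at huM; exact huM
      · exact le_of_lt (hupos (m + 1) hlt)
    have hincr : u (m + 1) = u m - 1 := by rw [hu]; push_cast; ring
    have hden : ((4 * K ^ 2 : ℕ) : ℝ) + (K : ℝ) - (m + 1) = u m := by rw [hu]; push_cast; ring
    have hnum2 : ((4 * K ^ 2 : ℕ) : ℝ) - (m + 1) = u m - (K : ℝ) := by rw [hu]; push_cast; ring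
    rw [hden, hnum2]
    -- (u m - K)/u m = 1 - K/u m ≤ (1 - 1/u m)^K = (u(m+1)/u m)^K
    have hum_ge1 : 1 ≤ u m := by
      rw [hu]
      simp only
      push_cast
      have hmr : (m : ℝ) + 1 ≤ 4 * (K : ℝ) := by
        have : (m + 1 : ℕ) ≤ 4 * K := hm
        exact_mod_cast this
      nlinarith [hKr]
    have hber : 1 + (K : ℝ) * (-(1 / u m)) ≤ (1 + (-(1 / u m))) ^ K := by
      apply one_add_mul_le_pow
      have h1 : 1 / u m ≤ 1 := (div_le_one hum).2 hum_ge1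
      linarith
    have he1 : 1 + (-(1 / u m)) = u (m + 1) / u m := by
      rw [hincr]
      field_simp
      ring
    have he2 : 1 + (K : ℝ) * (-(1 / u m)) = (u m - (K : ℝ)) / u m := by
      field_simp
      ring
    rw [he1, he2] at hber
    exact hber
  -- step 2: product bound
  have hprodle : ∏ m ∈ Finset.range (4 * K),
      ((((4 * K ^ 2 : ℕ) : ℝ) - (m + 1)) / (((4 * K ^ 2 : ℕ) : ℝ) + (K : ℝ) - (m + 1)))
        ≤ ∏ m ∈ Finset.range (4 * K), (u (m + 1) / u m) ^ K := by
    apply Finset.prod_le_prod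
    · intro m hm
      rw [Finset.mem_range] at hm
      apply div_nonneg
      · have : ((m : ℝ) + 1) ≤ ((4 * K ^ 2 : ℕ) : ℝ) := by
          have h1 : (m + 1 : ℕ) ≤ 4 * K := hm
          have h2 : (4 * K : ℕ) ≤ 4 * K ^ 2 := by nlinarith [hK]
          have : (m + 1 : ℕ) ≤ 4 * K ^ 2 := le_trans h1 h2
          exact_mod_cast this
        linarith
      · have := hupos m hm
        have hden : ((4 * K ^ 2 : ℕ) : ℝ) + (K : ℝ) - (m + 1) = u m := by rw [hu]; push_cast; ring
        rw [hden]
        exact le_of_lt this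
    · intro m hm
      rw [Finset.mem_range] at hm
      exact hfac m hm
  refine le_trans hprodle ?_
  rw [show (∏ m ∈ Finset.range (4 * K), (u (m + 1) / u m) ^ K)
      = (∏ m ∈ Finset.range (4 * K), (u (m + 1) / u m)) ^ K from
    Finset.prod_pow _ _ _]
  rw [prod_div_telescope u (4 * K) (fun m hm => ne_of_gt (hupos m hm))
    (ne_of_gt (hupos 0 (by positivity)))]
  -- step 3: (u M / u 0)^K ≤ ((4K-3)/(4K+1))^K ≤ exp(-1)
  have hu0 : u 0 = 4 * (K : ℝ) ^ 2 + (K : ℝ) - 1 := by rw [hu]; push_cast; ring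
  have huMv : u (4 * K) = 4 * (K : ℝ) ^ 2 + (K : ℝ) - 1 - 4 * (K : ℝ) := by
    rw [hu]; push_cast; ring
  have hu0pos : 0 < u 0 := hupos 0 (by positivity)
  have hstep1 : u (4 * K) / u 0 ≤ (4 * (K : ℝ) - 3) / (4 * (K : ℝ) + 1) := by
    rw [hu0, huMv, div_le_div_iff₀ (by nlinarith [hKr]) (by linarith [hKr])]
    nlinarith [hKr]
  have hbase : (0:ℝ) ≤ u (4 * K) / u 0 := div_nonneg huM (le_of_lt hu0pos)
  calc (u (4 * K) / u 0) ^ K ≤ ((4 * (K : ℝ) - 3) / (4 * (K : ℝ) + 1)) ^ K :=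
        pow_le_pow_left₀ hbase hstep1 K
    _ ≤ (Real.exp (-(1 / (K : ℝ)))) ^ K := by
        apply pow_le_pow_left₀
        · apply div_nonneg <;> linarith
        · exact ratio_le_exp K hK
    _ = Real.exp (-1) := by
        rw [← Real.exp_nat_mul]
        congr 1
        field_simp
  done

end Numerics

section Counting
variable {V : Type*} [Fintype V] [DecidableEq V]

lemma count_preimage {Q : ℕ} (p : Fin Q → Prop) [DecidablePred p] (S : Finset V) :
    ((Finset.univ : Finset (V → Fin Q)).filter
        (fun h => Finset.univ.filter (fun i => p (h i)) = S)).card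
      = ((Finset.univ : Finset (Fin Q)).filter p).card ^ S.card
        * (Q - ((Finset.univ : Finset (Fin Q)).filter p).card) ^ (Fintype.card V - S.card) := by
  classical
  set c := ((Finset.univ : Finset (Fin Q)).filter p).card with hc
  have h1 : ((Finset.univ : Finset (V → Fin Q)).filter
        (fun h => Finset.univ.filter (fun i => p (h i)) = S)).card
      = Fintype.card {h : V → Fin Q // ∀ i, p (h i) ↔ i ∈ S} := by
    rw [Fintype.card_subtype]
    congr 1
    apply Finset.filter_congr
    intro h _
    constructor
    · intro he i
      constructor
      · intro hp
        rw [← he]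
        simp [hp]
      · intro hi
        rw [← he] at hi
        simp at hi
        exact hi
    · intro hiff
      ext i
      simp [hiff i]
  rw [h1]
  have h2 : Fintype.card {h : V → Fin Q // ∀ i, p (h i) ↔ i ∈ S}
      = ∏ i : V, Fintype.card {a : Fin Q // p a ↔ i ∈ S} := by
    rw [Fintype.card_congr (Equiv.subtypePiEquivPi (p := fun i a => p a ↔ i ∈ S))]
    rw [Fintype.card_pi]
  rw [h2]
  have h3 : ∀ i : V, Fintype.card {a : Fin Q // p a ↔ i ∈ S}
      = if i ∈ S then c else Q - c := by
    intro i
    by_cases hi : i ∈ S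
    · rw [if_pos hi]
      rw [Fintype.card_congr (Equiv.subtypeEquivRight (q := p) (fun a => by simp [hi]))]
      rw [Fintype.card_subtype]
    · rw [if_neg hi]
      rw [Fintype.card_congr (Equiv.subtypeEquivRight (q := fun a => ¬ p a)
        (fun a => by simp [hi]))]
      rw [Fintype.card_subtype_compl, Fintype.card_fin, hc, Fintype.card_subtype]
  rw [Finset.prod_congr rfl (fun i _ => h3 i)]
  rw [Finset.prod_ite (f := fun _ => c) (g := fun _ => Q - c)]
  rw [Finset.prod_const, Finset.prod_const]
  have e1 : (Finset.univ.filter (fun i : V => i ∈ S)) = S := Finset.filter_univ_mem S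
  have e2 : (Finset.univ.filter (fun i : V => ¬ i ∈ S)) = Sᶜ := by
    ext i
    simp
  rw [e1, e2, Finset.card_compl]

lemma sum_fun_eq {Q : ℕ} (p : Fin Q → Prop) [DecidablePred p] (f : Finset V → ℝ) :
    ∑ h : V → Fin Q, f (Finset.univ.filter (fun i => p (h i)))
      = ∑ S : Finset V,
          ((((Finset.univ : Finset (Fin Q)).filter p).card ^ S.card
            * (Q - ((Finset.univ : Finset (Fin Q)).filter p).card)
                ^ (Fintype.card V - S.card) : ℕ) : ℝ) * f S := by
  classical
  have h0 := Finset.sum_comp (s := (Finset.univ : Finset (V → Fin Q))) f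
    (fun h : V → Fin Q => Finset.univ.filter (fun i => p (h i)))
  rw [h0]
  have hzero : ∀ S ∈ (Finset.univ : Finset (Finset V)),
      S ∉ Finset.univ.image (fun h : V → Fin Q => Finset.univ.filter (fun i => p (h i))) →
      ((Finset.univ.filter
          (fun h : V → Fin Q => Finset.univ.filter (fun i => p (h i)) = S)).card) • f S
        = 0 := by
    intro S _ hS
    have he : (Finset.univ.filter
        (fun h : V → Fin Q => Finset.univ.filter (fun i => p (h i)) = S)) = ∅ := by
      rw [Finset.filter_eq_empty_iff]
      intro h _
      exact fun he => hS (Finset.mem_image.2 ⟨h, Finset.mem_univ h, he⟩)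
    rw [he]
    simp
  rw [Finset.sum_subset (Finset.subset_univ _) hzero]
  apply Finset.sum_congr rfl
  intro S _
  rw [nsmul_eq_mul, count_preimage p S]

end Counting

section Assembly
variable {V : Type*} [Fintype V] [DecidableEq V]

lemma card_filter_lt_fin' {N m : ℕ} (h : m ≤ N) :
    ((Finset.univ : Finset (Fin N)).filter (fun a : Fin N => (a : ℕ) < m)).card = m := by
  rcases eq_or_lt_of_le h with rfl | h
  · have : ((Finset.univ : Finset (Fin m)).filter (fun a : Fin m => (a : ℕ) < m))
        = Finset.univ := by
      ext a
      simp [a.2]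
    rw [this, Finset.card_univ, Fintype.card_fin]
  · exact card_filter_lt_fin h

lemma GG_le {f : Finset V → ℝ} {η β : ℝ} {χ : List V → V → ℝ}
    (hcs : IsCostShare f η β χ) (hf0 : f ∅ = 0) (N m : ℕ) :
    GG V χ N m ≤ η * ∑ ω : V → Fin N, f (Rset ω m) := by
  rw [GG, Finset.mul_sum]
  exact Finset.sum_le_sum fun ω _ => prefixSum_le hcs hf0 (κω ω) (Rset ω m)

set_option maxHeartbeats 2000000 in
theorem welfare_maximization_random_assignment'
    (K : ℕ) (hK : 1 ≤ K)
    (f : Finset V → ℝ)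
    (hmono : ∀ S T : Finset V, S ⊆ T → f S ≤ f T)
    (hf0 : f ∅ = 0)
    (η β : ℝ) (hη : 1 ≤ η) (hβ : 1 ≤ β)
    (χ : List V → V → ℝ) (hχ : IsCostShare f η β χ)
    (A : Fin K → Finset V)
    (hdisj : ∀ k l : Fin K, k ≠ l → Disjoint (A k) (A l))
    (hcover : Finset.univ.biUnion A = Finset.univ) :
    (1 / (η * β)) * (1 - 1 / Real.exp 1) * ∑ k : Fin K, f (A k)
      ≤ (1 / (K : ℝ) ^ (Fintype.card V))
          * ∑ g : V → Fin K, ∑ k : Fin K, f (Finset.univ.filter (fun i => g i = k)) := by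
  classical
  have hβ0 : (0:ℝ) < β := lt_of_lt_of_le zero_lt_one hβ
  have hη0 : (0:ℝ) < η := lt_of_lt_of_le zero_lt_one hη
  have hKr : (1:ℝ) ≤ (K:ℝ) := by exact_mod_cast hK
  have hKr0 : (0:ℝ) < (K:ℝ) := lt_of_lt_of_le zero_lt_one hKr
  have hK0 : 0 < K := hK
  have hN0 : 0 < 4 * K ^ 2 := by positivity
  have hMN : 4 * K ≤ 4 * K ^ 2 := by nlinarith [hK0]
  have hNr0 : (0:ℝ) < ((4 * K ^ 2 : ℕ) : ℝ) := by exact_mod_cast hN0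
  set n := Fintype.card V with hn
  -- notation
  set W : ℝ := ∑ k : Fin K, f (A k) with hW
  have hW0 : 0 ≤ W := Finset.sum_nonneg fun k _ => f_nonneg hmono hf0 (A k)
  set aN : ℝ := ((4 * K ^ 2 : ℕ) : ℝ) ^ n * (W / β) with haN
  have haN0 : 0 ≤ aN := by
    apply mul_nonneg (by positivity)
    exact div_nonneg hW0 (le_of_lt hβ0)
  -- the recursion
  set y : ℕ → ℝ := fun m => aN - (K : ℝ) * GG V χ (4 * K ^ 2) m with hy
  have h0 : y 0 = aN := by
    rw [hy]
    simp only
    rw [GG_zero]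
    ring
  have hstep : ∀ m, m < 4 * K →
      (K : ℝ) * y (m + 1) ≤ (((4 * K ^ 2 : ℕ) : ℝ) - (m + 1)) * (y m - y (m + 1)) := by
    intro m hm
    have hm1N : m + 1 ≤ 4 * K ^ 2 := le_trans (Nat.succ_le_of_lt hm) hMN
    have hmN : m < 4 * K ^ 2 := lt_of_lt_of_le hm hMN
    have E1 := exp_one (V := V) (K := K) (N := 4 * K ^ 2) hχ hmono hf0 hβ A hdisj hcover
      (m := m + 1) hN0 hm1N
    have E2 := exp_two (V := V) (N := 4 * K ^ 2) hχ (m := m) hmN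
    have hcast : ((4 * K ^ 2 - (m + 1) : ℕ) : ℝ) = ((4 * K ^ 2 : ℕ) : ℝ) - (m + 1) := by
      rw [Nat.cast_sub hm1N]
      push_cast
      ring
    rw [hcast] at E1
    have hfac0 : (0:ℝ) ≤ ((4 * K ^ 2 : ℕ) : ℝ) - (m + 1) := by
      have : ((m + 1 : ℕ) : ℝ) ≤ ((4 * K ^ 2 : ℕ) : ℝ) := by exact_mod_cast hm1N
      push_cast at this
      linarith
    -- s1 : N * y (m+1) ≤ (N - (m+1)) * TT (m+1)
    have s1 : ((4 * K ^ 2 : ℕ) : ℝ) * y (m + 1)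
        ≤ (((4 * K ^ 2 : ℕ) : ℝ) - (m + 1)) * TT V χ (4 * K ^ 2) (m + 1) := by
      rw [hy]
      simp only
      rw [haN]
      nlinarith [E1]
    have s2 : (((4 * K ^ 2 : ℕ) : ℝ) - (m + 1)) * TT V χ (4 * K ^ 2) (m + 1)
        ≤ (((4 * K ^ 2 : ℕ) : ℝ) - (m + 1)) * (((4 * K ^ 2 : ℕ) : ℝ)
            * (GG V χ (4 * K ^ 2) (m + 1) - GG V χ (4 * K ^ 2) m)) :=
      mul_le_mul_of_nonneg_left E2 hfac0
    have hyd : y m - y (m + 1) = (K : ℝ) * (GG V χ (4 * K ^ 2) (m + 1) - GG V χ (4 * K ^ 2) m) := by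
      rw [hy]
      ring
    -- multiply s1 by K, chain with s2 * K, divide by N
    have s3 : ((4 * K ^ 2 : ℕ) : ℝ) * ((K : ℝ) * y (m + 1))
        ≤ ((4 * K ^ 2 : ℕ) : ℝ) * ((((4 * K ^ 2 : ℕ) : ℝ) - (m + 1)) * (y m - y (m + 1))) := by
      rw [hyd]
      nlinarith [s1, s2, hKr0]
    exact le_of_mul_le_mul_left s3 hNr0
  have hrec := recursion_bound K (4 * K ^ 2) (4 * K) hMN hK0 y aN h0 hstep
  -- numeric bound on the product
  have hP := numeric_bound K hK
  have hyM : y (4 * K) ≤ aN * Real.exp (-1) := by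
    refine le_trans hrec ?_
    have : ∏ m ∈ Finset.range (4 * K),
        ((((4 * K ^ 2 : ℕ) : ℝ) - (m + 1)) / (((4 * K ^ 2 : ℕ) : ℝ) + (K : ℝ) - (m + 1)))
          ≤ Real.exp (-1) := hP
    exact mul_le_mul_of_nonneg_left this haN0
  -- cap GG by η * FF
  set FF : ℝ := ∑ ω : V → Fin (4 * K ^ 2), f (Rset ω (4 * K)) with hFFdef
  have hGGM : GG V χ (4 * K ^ 2) (4 * K) ≤ η * FF := GG_le hχ hf0 _ _
  have hmain : aN * (1 - Real.exp (-1)) ≤ (K : ℝ) * (η * FF) := by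
    have h2 : (K : ℝ) * GG V χ (4 * K ^ 2) (4 * K) ≤ (K : ℝ) * (η * FF) :=
      mul_le_mul_of_nonneg_left hGGM (le_of_lt hKr0)
    have h3 : aN - (K : ℝ) * GG V χ (4 * K ^ 2) (4 * K) ≤ aN * Real.exp (-1) := hyM
    nlinarith [h2, h3]
  -- counting: FF in terms of subsets
  have hFF : FF = ∑ S : Finset V,
      (((4 * K) ^ S.card * (4 * K ^ 2 - 4 * K) ^ (n - S.card) : ℕ) : ℝ) * f S := by
    rw [hFFdef]
    have := sum_fun_eq (V := V) (Q := 4 * K ^ 2) (fun a => (a : ℕ) < 4 * K) f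
    rw [card_filter_lt_fin' hMN] at this
    exact this
  -- counting: theorem RHS in terms of subsets
  have hinner : ∀ k : Fin K, (∑ g : V → Fin K, f (Finset.univ.filter (fun i => g i = k)))
      = ∑ S : Finset V, (((K - 1) ^ (n - S.card) : ℕ) : ℝ) * f S := by
    intro k
    have hcard1 : ((Finset.univ : Finset (Fin K)).filter (fun a => a = k)).card = 1 := by
      rw [Finset.filter_eq']
      simp
    have := sum_fun_eq (V := V) (Q := K) (fun a => a = k) f
    rw [hcard1] at this
    rw [this]
    apply Finset.sum_congr rfl
    intro S _
    rw [hn]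
    norm_num
  have hRHS : (∑ g : V → Fin K, ∑ k : Fin K, f (Finset.univ.filter (fun i => g i = k)))
      = (K : ℝ) * ∑ S : Finset V, (((K - 1) ^ (n - S.card) : ℕ) : ℝ) * f S := by
    rw [Finset.sum_comm]
    rw [Finset.sum_congr rfl (fun k _ => hinner k)]
    rw [Finset.sum_const, Finset.card_univ, Fintype.card_fin, nsmul_eq_mul]
  -- the link identity
  have hlink : (K : ℝ) ^ n * FF
      = ((4 * K ^ 2 : ℕ) : ℝ) ^ n * ∑ S : Finset V, (((K - 1) ^ (n - S.card) : ℕ) : ℝ) * f S := by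
    rw [hFF, Finset.mul_sum, Finset.mul_sum]
    apply Finset.sum_congr rfl
    intro S _
    have hsn : S.card ≤ n := by
      rw [hn]
      exact Finset.card_le_univ S
    have hc1 : (((4 * K) ^ S.card * (4 * K ^ 2 - 4 * K) ^ (n - S.card) : ℕ) : ℝ)
        = (4 * (K:ℝ)) ^ S.card * (4 * (K:ℝ) * ((K:ℝ) - 1)) ^ (n - S.card) := by
      push_cast [Nat.cast_sub hMN, Nat.cast_sub hK]
      congr 2
      push_cast
      ring
    have hc2 : (((K - 1) ^ (n - S.card) : ℕ) : ℝ) = ((K:ℝ) - 1) ^ (n - S.card) := by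
      push_cast [Nat.cast_sub hK]
      ring
    have hc3 : ((4 * K ^ 2 : ℕ) : ℝ) = 4 * (K:ℝ) ^ 2 := by push_cast; ring
    rw [hc1, hc2, hc3]
    have e1 : (4 * (K:ℝ) * ((K:ℝ) - 1)) ^ (n - S.card)
        = (4 * (K:ℝ)) ^ (n - S.card) * ((K:ℝ) - 1) ^ (n - S.card) := mul_pow _ _ _
    have e2 : (4 * (K:ℝ)) ^ S.card * (4 * (K:ℝ)) ^ (n - S.card) = (4 * (K:ℝ)) ^ n := by
      rw [← pow_add]
      congr 1
      omega
    have e3 : (4 * (K:ℝ) ^ 2) ^ n = (4 * (K:ℝ)) ^ n * (K:ℝ) ^ n := by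
      rw [← mul_pow]
      congr 1
      ring
    calc (K:ℝ) ^ n * ((4 * (K:ℝ)) ^ S.card * (4 * (K:ℝ) * ((K:ℝ) - 1)) ^ (n - S.card) * f S)
        = ((4 * (K:ℝ)) ^ S.card * (4 * (K:ℝ)) ^ (n - S.card)) * (K:ℝ) ^ n
            * (((K:ℝ) - 1) ^ (n - S.card) * f S) := by
          rw [e1]
          ring
      _ = (4 * (K:ℝ)) ^ n * (K:ℝ) ^ n * (((K:ℝ) - 1) ^ (n - S.card) * f S) := by rw [e2]
      _ = (4 * (K:ℝ) ^ 2) ^ n * (((K:ℝ) - 1) ^ (n - S.card) * f S) := by rw [e3]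
  -- final algebra
  have hRHS2 : (1 / (K : ℝ) ^ n)
        * (∑ g : V → Fin K, ∑ k : Fin K, f (Finset.univ.filter (fun i => g i = k)))
      = (K : ℝ) * FF / ((4 * K ^ 2 : ℕ) : ℝ) ^ n := by
    rw [hRHS]
    have hKn : (0:ℝ) < (K:ℝ) ^ n := by positivity
    have hNn : (0:ℝ) < ((4 * K ^ 2 : ℕ) : ℝ) ^ n := by positivity
    have hsum : ∑ S : Finset V, (((K - 1) ^ (n - S.card) : ℕ) : ℝ) * f S
        = (K : ℝ) ^ n * FF / ((4 * K ^ 2 : ℕ) : ℝ) ^ n := by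
      rw [eq_div_iff (ne_of_gt hNn)]
      linear_combination -hlink
    rw [hsum]
    field_simp
  rw [hRHS2]
  have hexp1 : (1:ℝ) / Real.exp 1 = Real.exp (-1) := by
    rw [Real.exp_neg, one_div]
  rw [hexp1]
  have hkey : (1 - Real.exp (-1)) * W * ((4 * K ^ 2 : ℕ) : ℝ) ^ n
      ≤ (K : ℝ) * FF * (η * β) := by
    have h6 := mul_le_mul_of_nonneg_right hmain (le_of_lt hβ0)
    rw [haN] at h6
    have e4 : ((4 * K ^ 2 : ℕ) : ℝ) ^ n * (W / β) * (1 - Real.exp (-1)) * β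
        = (1 - Real.exp (-1)) * W * ((4 * K ^ 2 : ℕ) : ℝ) ^ n := by
      field_simp
    have e5 : (K : ℝ) * (η * FF) * β = (K : ℝ) * FF * (η * β) := by ring
    calc (1 - Real.exp (-1)) * W * ((4 * K ^ 2 : ℕ) : ℝ) ^ n
        = ((4 * K ^ 2 : ℕ) : ℝ) ^ n * (W / β) * (1 - Real.exp (-1)) * β := e4.symm
      _ ≤ (K : ℝ) * (η * FF) * β := by
          calc ((4 * K ^ 2 : ℕ) : ℝ) ^ n * (W / β) * (1 - Real.exp (-1)) * β
              = ((4 * K ^ 2 : ℕ) : ℝ) ^ n * (W / β) * (1 - Real.exp (-1)) * β := rfl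
            _ ≤ (K : ℝ) * (η * FF) * β := by
                have : ((4 * K ^ 2 : ℕ) : ℝ) ^ n * (W / β) * (1 - Real.exp (-1)) * β
                    = (((4 * K ^ 2 : ℕ) : ℝ) ^ n * (W / β) * (1 - Real.exp (-1))) * β := by ring
                rw [this]
                exact h6
      _ = (K : ℝ) * FF * (η * β) := e5
  have hlhs : (1 / (η * β)) * (1 - Real.exp (-1)) * W
      = ((1 - Real.exp (-1)) * W) / (η * β) := by ring
  rw [hlhs]
  rw [div_le_div_iff₀ (by positivity) (by positivity)]
  nlinarith [hkey]

end Assembly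

/-- Welfare maximization: if the `n` goods of `V` are assigned independently and
uniformly at random among `K` players, each having the same non-decreasing utility `f`
(with `f ∅ = 0`) admitting an `(η,β)`-cost-sharing scheme, then the expected total
welfare is at least `(1/(ηβ))·(1-1/e)` times the welfare `Σ_k f(A_k)` of any partition
`A_1, …, A_K` of the goods (in particular, of the optimal partition). -/
theorem welfare_maximization_random_assignment
    {V : Type*} [Fintype V] [DecidableEq V]
    (K : ℕ) (hK : 1 ≤ K)
    (f : Finset V → ℝ)
    (hmono : ∀ S T : Finset V, S ⊆ T → f S ≤ f T)
    (hf0 : f ∅ = 0)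
    (η β : ℝ) (hη : 1 ≤ η) (hβ : 1 ≤ β)
    (χ : List V → V → ℝ) (hχ : IsCostShare f η β χ)
    (A : Fin K → Finset V)
    (hdisj : ∀ k l : Fin K, k ≠ l → Disjoint (A k) (A l))
    (hcover : Finset.univ.biUnion A = Finset.univ) :
    (1 / (η * β)) * (1 - 1 / Real.exp 1) * ∑ k : Fin K, f (A k)
      ≤ (1 / (K : ℝ) ^ (Fintype.card V))
          * ∑ g : V → Fin K, ∑ k : Fin K, f (Finset.univ.filter (fun i => g i = k)) :=
  welfare_maximization_random_assignment' K hK f hmono hf0 η β hη hβ χ hχ A hdisj hcover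
end

section
/- Let n ≥ 1, let V be a ground set with |V| = n, let f(S) = max(|S| − (n−1), 0) for S ⊆ V, and let p_i = 1/2 for every i ∈ V. Then: (a) f is supermodular and non-decreasing in S; (b) the distribution assigning probability 1/2 to V and 1/2 to ∅ has marginals {1/2}, so the worst-case expected value satisfies L(f,V,{1/2}) ≥ 1/2; (c) the independent expected value is I(f,V,{1/2}) = 2^{−n}. Consequently the correlation gap L/I is at least 2^{n−1}, i.e., it is Ω(2^n) for supermodular functions. -/
open Finset

variable {W : Type*} [Fintype W] [DecidableEq W]

/-- Example 1 (core): for `f(S) = max(|S| - (n-1), 0)` on a ground set of size `n` with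
all marginals `1/2`: (a) `f` is non-decreasing and supermodular; (b) the distribution
putting mass `1/2` on `V` and `1/2` on `∅` has marginals `1/2`, so `L ≥ 1/2`;
(c) `I = 2^{-n}`; hence the correlation gap is at least `2^{n-1}`. -/
theorem supermodular_exponential_gap
    {V : Type*} [Fintype V] [DecidableEq V]
    (n : ℕ) (hn : 1 ≤ n) (hcard : Fintype.card V = n)
    (f : Finset V → ℝ)
    (hf : ∀ S : Finset V, f S = max ((S.card : ℝ) - ((n : ℝ) - 1)) 0)
    (α : Finset V → ℝ)
    (hα : ∀ S : Finset V, α S = if S = Finset.univ ∨ S = ∅ then 1 / 2 else 0) :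
    -- (a) non-decreasing and supermodular
    (∀ S T : Finset V, S ⊆ T → f S ≤ f T)
    ∧ (∀ T S : Finset V, T ⊆ S → ∀ i ∉ S, f (insert i T) - f T ≤ f (insert i S) - f S)
    -- (b) the half-half distribution has marginals 1/2 and L ≥ 1/2
    ∧ IsDistWithMarginals (fun _ : V => (1 : ℝ) / 2) α
    ∧ expVal α f = 1 / 2
    ∧ (1 / 2 : ℝ) ≤ worstVal (fun _ : V => (1 : ℝ) / 2) f
    -- (c) I = 2⁻ⁿ and the correlation gap is at least 2^(n-1)
    ∧ indepVal (fun _ : V => (1 : ℝ) / 2) f = ((2 : ℝ))⁻¹ ^ n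
    ∧ (2 : ℝ) ^ (n - 1) * indepVal (fun _ : V => (1 : ℝ) / 2) f
        ≤ worstVal (fun _ : V => (1 : ℝ) / 2) f := by
  classical
  have hV : Nonempty V := Fintype.card_pos_iff.mp (by omega)
  have huniv_ne : (Finset.univ : Finset V) ≠ (∅ : Finset V) := by
    simpa using Finset.univ_nonempty.ne_empty
  -- f is the indicator of univ
  have hfind : ∀ S : Finset V, f S = if S = Finset.univ then 1 else 0 := by
    intro S
    rw [hf]
    by_cases h : S = Finset.univ
    · subst h
      rw [if_pos rfl]
      have : ((Finset.univ : Finset V).card : ℝ) = n := by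
        rw [Finset.card_univ, hcard]
      rw [this]
      have : (n : ℝ) - ((n : ℝ) - 1) = 1 := by ring
      rw [this]; norm_num
    · rw [if_neg h]
      have hc : S.card < n := by
        have := Finset.card_lt_card (Finset.ssubset_univ_iff.mpr h)
        rwa [Finset.card_univ, hcard] at this
      have : (S.card : ℝ) - ((n : ℝ) - 1) ≤ 0 := by
        have : (S.card : ℝ) + 1 ≤ n := by exact_mod_cast hc
        linarith
      exact max_eq_right this
  have hmono : ∀ S T : Finset V, S ⊆ T → f S ≤ f T := by
    intro S T hST
    rw [hfind, hfind]
    by_cases h : S = Finset.univ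
    · have : T = Finset.univ := Finset.univ_subset_iff.mp (h ▸ hST)
      simp [h, this]
    · by_cases h2 : T = Finset.univ <;> simp [h, h2]
  have hdist : IsDistWithMarginals (fun _ : V => (1 : ℝ) / 2) α := by
    refine ⟨fun S => ?_, ?_, fun i => ?_⟩
    · rw [hα]; split <;> norm_num
    · have hpt : ∀ S : Finset V, α S =
          (if S = Finset.univ then (1:ℝ)/2 else 0) + (if S = ∅ then (1:ℝ)/2 else 0) := by
        intro S
        rw [hα]
        by_cases h1 : S = Finset.univ
        · have h2 : ¬ S = ∅ := by rw [h1]; exact huniv_ne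
          simp [h1, h2, huniv_ne]
        · by_cases h2 : S = ∅ <;> simp [h1, h2, Ne.symm huniv_ne]
      rw [Finset.sum_congr rfl (fun S _ => hpt S), Finset.sum_add_distrib]
      rw [Finset.sum_ite_eq' Finset.univ Finset.univ (fun _ => (1:ℝ)/2)]
      rw [Finset.sum_ite_eq' Finset.univ (∅ : Finset V) (fun _ => (1:ℝ)/2)]
      simp; norm_num
    · rw [Finset.sum_eq_single_of_mem Finset.univ]
      · rw [hα]; simp
      · simp
      · intro S hS hSne
        rw [hα, if_neg]
        push_neg
        refine ⟨hSne, ?_⟩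
        rw [Finset.nonempty_iff_ne_empty]
        intro h
        rw [h] at hS
        simp at hS
  have hexp : expVal α f = 1 / 2 := by
    unfold expVal
    rw [Finset.sum_eq_single Finset.univ]
    · rw [hα, hfind]; simp
    · intro S _ hSne
      rw [hfind, if_neg hSne, mul_zero]
    · intro h; simp at h
  have hbdd : BddAbove {v | ∃ β, IsDistWithMarginals (fun _ : V => (1 : ℝ) / 2) β ∧
      v = expVal β f} := by
    refine ⟨1, ?_⟩
    rintro v ⟨β, hβ, rfl⟩
    unfold expVal
    calc ∑ S : Finset V, β S * f S ≤ ∑ S : Finset V, β S * 1 := by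
          refine Finset.sum_le_sum fun S _ => ?_
          refine mul_le_mul_of_nonneg_left ?_ (hβ.1 S)
          rw [hfind]; split <;> norm_num
      _ = 1 := by simpa using hβ.2.1
  have hL : (1 / 2 : ℝ) ≤ worstVal (fun _ : V => (1 : ℝ) / 2) f := by
    refine le_csSup hbdd ⟨α, hdist, hexp.symm⟩
  have hI : indepVal (fun _ : V => (1 : ℝ) / 2) f = ((2 : ℝ))⁻¹ ^ n := by
    unfold indepVal
    rw [Finset.sum_eq_single Finset.univ]
    · rw [hfind, if_pos rfl, mul_one]
      rw [Finset.compl_univ]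
      simp [Finset.prod_const, Finset.card_univ, hcard]
    · intro S _ hSne
      rw [hfind, if_neg hSne, mul_zero]
    · intro h; simp at h
  refine ⟨hmono, ?_, hdist, hexp, hL, hI, ?_⟩
  · intro T S hTS i hiS
    have hSne : S ≠ Finset.univ := by
      intro h; exact hiS (h ▸ Finset.mem_univ i)
    have hTne : T ≠ Finset.univ := by
      intro h; exact hSne (Finset.univ_subset_iff.mp (h ▸ hTS))
    rw [hfind S, hfind T, if_neg hSne, if_neg hTne, sub_zero, sub_zero]
    exact hmono _ _ (Finset.insert_subset_insert i hTS)
  · rw [hI]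
    obtain ⟨m, rfl⟩ := Nat.exists_eq_add_of_le hn
    have h1 : 1 + m - 1 = m := by omega
    rw [h1]
    have : (2:ℝ) ^ m * (2:ℝ)⁻¹ ^ (1 + m) = 1 / 2 := by
      rw [inv_pow, pow_add, pow_one]
      have h2 : (2:ℝ) ^ m ≠ 0 := by positivity
      field_simp
    rw [this]
    exact hL
end

section
/- Let n ≥ 1, let V be a ground set with |V| = n, let f(S) = 1 if S ≠ ∅ and f(∅) = 0, and let p_i = 1/n for every i ∈ V. Then f is non-decreasing and submodular, the worst-case expected value is L(f,V,{1/n}) = 1 (attained by the uniform distribution on the n singletons), and the independent expected value is I(f,V,{1/n}) = 1 − (1−1/n)^n. Consequently the correlation gap equals 1/(1−(1−1/n)^n), which converges to e/(e−1) as n → ∞; hence the bound e/(e−1) on the correlation gap of non-decreasing submodular functions is tight. -/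
open Finset

variable {W : Type*} [Fintype W] [DecidableEq W]

/-- Example 3 (tightness): for `f(S) = 1` if `S ≠ ∅`, `f(∅) = 0`, on a ground set of
size `n` with all marginals `1/n`: `f` is non-decreasing and submodular; the uniform
distribution on the singletons is a worst-case distribution with `L = 1`; the independent
expected value is `I = 1 - (1-1/n)^n`; hence the correlation gap equals
`1/(1-(1-1/n)^n)`, which converges to `e/(e-1)` as `n → ∞` — so the bound `e/(e-1)`
for submodular functions is tight. -/
theorem submodular_gap_tight
    {V : Type*} [Fintype V] [DecidableEq V]
    (n : ℕ) (hn : 1 ≤ n) (hcard : Fintype.card V = n)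
    (f : Finset V → ℝ)
    (hf : ∀ S : Finset V, f S = if S = ∅ then 0 else 1)
    (α : Finset V → ℝ)
    (hα : ∀ S : Finset V, α S = if S.card = 1 then 1 / (n : ℝ) else 0) :
    -- non-decreasing and submodular
    (∀ S T : Finset V, S ⊆ T → f S ≤ f T)
    ∧ (∀ T S : Finset V, T ⊆ S → ∀ i : V,
        f (insert i S) - f S ≤ f (insert i T) - f T)
    -- the uniform distribution on singletons attains the worst case, L = 1
    ∧ IsDistWithMarginals (fun _ : V => 1 / (n : ℝ)) α
    ∧ expVal α f = 1
    ∧ IsGreatest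
        {v | ∃ γ, IsDistWithMarginals (fun _ : V => 1 / (n : ℝ)) γ ∧ v = expVal γ f} 1
    ∧ worstVal (fun _ : V => 1 / (n : ℝ)) f = 1
    -- the independent expected value
    ∧ indepVal (fun _ : V => 1 / (n : ℝ)) f = 1 - (1 - 1 / (n : ℝ)) ^ n
    -- the correlation gap converges to e/(e-1)
    ∧ Filter.Tendsto (fun m : ℕ => (1 - (1 - 1 / (m : ℝ)) ^ m)⁻¹) Filter.atTop
        (nhds (Real.exp 1 / (Real.exp 1 - 1))) := by
  classical
  have hmono : ∀ S T : Finset V, S ⊆ T → f S ≤ f T := by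
    intro S T hST
    rw [hf, hf]
    by_cases hS : S = ∅
    · simp only [hS, if_true]
      split <;> norm_num
    · have hT : T ≠ ∅ := fun h => hS (Finset.subset_empty.mp (h ▸ hST))
      simp [hS, hT]
  have hsub : ∀ T S : Finset V, T ⊆ S → ∀ i : V,
      f (insert i S) - f S ≤ f (insert i T) - f T := by
    intro T S hTS i
    have h1 : f (insert i S) = 1 := by rw [hf]; simp
    have h2 : f (insert i T) = 1 := by rw [hf]; simp
    have := hmono T S hTS
    linarith
  have hn0 : (0:ℝ) < (n:ℝ) := by exact_mod_cast hn
  have hfiltercard : ((univ : Finset (Finset V)).filter (fun S => S.card = 1)).card = n := by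
    have heq : (univ : Finset (Finset V)).filter (fun S => S.card = 1)
        = Finset.powersetCard 1 (univ : Finset V) := by
      ext S; simp [Finset.mem_powersetCard_univ]
    rw [heq, Finset.card_powersetCard, Finset.card_univ, hcard, Nat.choose_one_right]
  have hsum : ∑ S : Finset V, α S = 1 := by
    simp only [hα]
    rw [← Finset.sum_filter, Finset.sum_const, hfiltercard, nsmul_eq_mul]
    field_simp
  have hmarg : ∀ i : V, ∑ S ∈ Finset.univ.filter (fun S => i ∈ S), α S = 1/(n:ℝ) := by
    intro i
    rw [Finset.sum_eq_single_of_mem ({i} : Finset V) (by simp)]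
    · simp [hα]
    · intro S hS hne
      rw [hα]
      rw [Finset.mem_filter] at hS
      split_ifs with h
      · exfalso
        obtain ⟨a, rfl⟩ := Finset.card_eq_one.mp h
        have hi := hS.2
        rw [Finset.mem_singleton] at hi
        exact hne (by rw [hi])
      · rfl
  have hdist : IsDistWithMarginals (fun _ : V => 1 / (n : ℝ)) α :=
    ⟨fun S => by rw [hα]; split_ifs <;> positivity, hsum, hmarg⟩
  have hexp : expVal α f = 1 := by
    unfold expVal
    rw [← hsum]
    apply Finset.sum_congr rfl
    intro S _
    by_cases h : S.card = 1
    · have hS : S ≠ ∅ := by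
        intro he; rw [he] at h; simp at h
      rw [hf]
      simp [hS]
    · rw [hα]; simp [h]
  have hub : ∀ v ∈ {v | ∃ γ, IsDistWithMarginals (fun _ : V => 1 / (n : ℝ)) γ ∧ v = expVal γ f}, v ≤ 1 := by
    rintro v ⟨γ, ⟨hγ0, hγ1, _⟩, rfl⟩
    unfold expVal
    calc ∑ S : Finset V, γ S * f S ≤ ∑ S : Finset V, γ S := by
          apply Finset.sum_le_sum
          intro S _
          apply mul_le_of_le_one_right (hγ0 S)
          rw [hf]; split <;> norm_num
      _ = 1 := hγ1
  have hgreat : IsGreatest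
      {v | ∃ γ, IsDistWithMarginals (fun _ : V => 1 / (n : ℝ)) γ ∧ v = expVal γ f} 1 :=
    ⟨⟨α, hdist, hexp.symm⟩, hub⟩
  have hworst : worstVal (fun _ : V => 1 / (n : ℝ)) f = 1 := hgreat.csSup_eq
  have hprod : ∑ S : Finset V, (∏ _i ∈ S, (1/(n:ℝ))) * (∏ _i ∈ Sᶜ, (1 - 1/(n:ℝ))) = 1 := by
    have h := Finset.prod_add (fun _ : V => 1/(n:ℝ)) (fun _ : V => 1 - 1/(n:ℝ)) Finset.univ
    rw [Finset.powerset_univ] at h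
    simp only [add_sub_cancel, Finset.prod_const, one_pow] at h
    simp only [Finset.prod_const, Finset.compl_eq_univ_sdiff]
    exact h.symm
  have hempty : (∏ _i ∈ (∅ : Finset V), (1/(n:ℝ))) * (∏ _i ∈ (∅ : Finset V)ᶜ, (1 - 1/(n:ℝ)))
      = (1 - 1/(n:ℝ))^n := by
    rw [Finset.compl_empty, Finset.prod_empty, Finset.prod_const, one_mul, Finset.card_univ, hcard]
  have hindep : indepVal (fun _ : V => 1 / (n : ℝ)) f = 1 - (1 - 1 / (n : ℝ)) ^ n := by
    unfold indepVal
    have key : ∀ S : Finset V,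
        (∏ i ∈ S, (1/(n:ℝ))) * (∏ i ∈ Sᶜ, (1 - 1/(n:ℝ))) * f S
        = (∏ _i ∈ S, (1/(n:ℝ))) * (∏ _i ∈ Sᶜ, (1 - 1/(n:ℝ)))
          - (if (∅ : Finset V) = S then (∏ _i ∈ S, (1/(n:ℝ))) * (∏ _i ∈ Sᶜ, (1 - 1/(n:ℝ))) else 0) := by
      intro S
      rw [hf]
      by_cases hS : S = ∅
      · subst hS; simp
      · rw [if_neg hS, if_neg (fun h => hS h.symm)]
        ring
    calc ∑ S : Finset V, (∏ i ∈ S, (1/(n:ℝ))) * (∏ i ∈ Sᶜ, (1 - 1/(n:ℝ))) * f S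
        = ∑ S : Finset V, ((∏ _i ∈ S, (1/(n:ℝ))) * (∏ _i ∈ Sᶜ, (1 - 1/(n:ℝ)))
          - (if (∅ : Finset V) = S then (∏ _i ∈ S, (1/(n:ℝ))) * (∏ _i ∈ Sᶜ, (1 - 1/(n:ℝ))) else 0)) :=
          Finset.sum_congr rfl (fun S _ => key S)
      _ = 1 - (1 - 1/(n:ℝ))^n := by
          rw [Finset.sum_sub_distrib, hprod, Finset.sum_ite_eq, if_pos (Finset.mem_univ _), hempty]
  have hlim : Filter.Tendsto (fun m : ℕ => (1 - (1 - 1 / (m : ℝ)) ^ m)⁻¹) Filter.atTop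
      (nhds (Real.exp 1 / (Real.exp 1 - 1))) := by
    have h1 : Filter.Tendsto (fun m : ℕ => (1 - 1/(m:ℝ))^m) Filter.atTop (nhds (Real.exp (-1))) := by
      have h := Real.tendsto_one_add_div_pow_exp (-1)
      simpa [sub_eq_add_neg, neg_div] using h
    have h2 : Filter.Tendsto (fun m : ℕ => 1 - (1 - 1/(m:ℝ))^m) Filter.atTop
        (nhds (1 - Real.exp (-1))) := tendsto_const_nhds.sub h1
    have hlt : Real.exp (-1) < 1 := by
      have h := Real.exp_lt_exp.mpr (show (-1:ℝ) < 0 by norm_num)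
      rwa [Real.exp_zero] at h
    have hne : (1 - Real.exp (-1)) ≠ 0 := by linarith
    have h3 := h2.inv₀ hne
    have heq : (1 - Real.exp (-1))⁻¹ = Real.exp 1 / (Real.exp 1 - 1) := by
      rw [Real.exp_neg]
      have he0 : Real.exp 1 ≠ 0 := Real.exp_ne_zero 1
      have he1 : Real.exp 1 - 1 ≠ 0 := by
        have := Real.add_one_lt_exp (show (1:ℝ) ≠ 0 by norm_num)
        linarith
      field_simp
    rwa [heq] at h3
  exact ⟨hmono, hsub, hdist, hexp, hgreat, hworst, hindep, hlim⟩
end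

section
/- Let K ≥ 1 be an integer, let V be the disjoint union of sets A_1, ..., A_K each of size K (so |V| = n = K²), define c(S) = max_{1≤k≤K} |S ∩ A_k| for S ⊆ V, and let p_i = 1/K for every i ∈ V. Then: (a) c is non-decreasing and subadditive, i.e., c(S∪T) ≤ c(S) + c(T) for all S, T ⊆ V; (b) the uniform distribution on {A_1, ..., A_K} (each with probability 1/K) has marginals {1/K}, and under it E[c(S)] = K; hence the worst-case expected value satisfies L(c,V,{1/K}) ≥ K = √n. -/
open Finset

variable {W : Type*} [Fintype W] [DecidableEq W]

/-- Example 2 (worst-case part): on `V = A_1 ⊔ ⋯ ⊔ A_K` with `|A_k| = K` (so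
`n = |V| = K²`), the function `c(S) = max_k |S ∩ A_k|` is non-decreasing and
subadditive; the uniform distribution on `{A_1, …, A_K}` has marginals `1/K` and gives
expected value `K`; hence `L(c,V,{1/K}) ≥ K = √n`. -/
theorem subadditive_worst_case_lower_bound
    (K : ℕ) (hK : 1 ≤ K)
    (A : Fin K → Finset (Fin K × Fin K))
    (hA : ∀ k : Fin K, A k = Finset.univ.filter (fun x : Fin K × Fin K => x.1 = k))
    (c : Finset (Fin K × Fin K) → ℝ)
    (hc : ∀ S, c S = ((Finset.univ.sup (fun k : Fin K => (S ∩ A k).card) : ℕ) : ℝ))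
    (α : Finset (Fin K × Fin K) → ℝ)
    (hα : ∀ S, α S = ∑ k : Fin K, (1 / (K : ℝ)) * (if S = A k then 1 else 0)) :
    -- (a) non-decreasing and subadditive
    (∀ S T : Finset (Fin K × Fin K), S ⊆ T → c S ≤ c T)
    ∧ (∀ S T : Finset (Fin K × Fin K), c (S ∪ T) ≤ c S + c T)
    -- (b) the uniform distribution on the parts has marginals 1/K, expected value K,
    -- and hence L ≥ K = √n
    ∧ IsDistWithMarginals (fun _ : Fin K × Fin K => 1 / (K : ℝ)) α
    ∧ expVal α c = K
    ∧ (K : ℝ) ≤ worstVal (fun _ : Fin K × Fin K => 1 / (K : ℝ)) c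
    ∧ Real.sqrt (Fintype.card (Fin K × Fin K)) = K := by
  have hKpos : (0:ℝ) < K := by exact_mod_cast hK
  have hmem : ∀ (x : Fin K × Fin K) (k : Fin K), x ∈ A k ↔ x.1 = k := by
    intro x k; simp [hA]
  have hcardA : ∀ k, (A k).card = K := by
    intro k
    have h : A k = ({k} : Finset (Fin K)) ×ˢ (univ : Finset (Fin K)) := by
      ext x
      simp only [hmem, Finset.mem_product, Finset.mem_singleton, Finset.mem_univ, and_true]
    rw [h, Finset.card_product]; simp
  have hcap : ∀ S k, (S ∩ A k).card ≤ K := fun S k =>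
    le_trans (card_le_card inter_subset_right) (le_of_eq (hcardA k))
  have hcS : ∀ S, c S ≤ K := by
    intro S; rw [hc S]
    exact_mod_cast Finset.sup_le fun k _ => hcap S k
  have hcA : ∀ k, c (A k) = K := by
    intro k
    rw [hc]
    have : (Finset.univ.sup (fun j : Fin K => ((A k) ∩ A j).card)) = K := by
      refine le_antisymm (Finset.sup_le fun j _ => hcap _ j) ?_
      have := Finset.le_sup (f := fun j : Fin K => ((A k) ∩ A j).card) (Finset.mem_univ k)
      simpa [hcardA k] using this
    rw [this]
  have key : ∀ f : Finset (Fin K × Fin K) → ℝ,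
      ∑ S : Finset (Fin K × Fin K), α S * f S = ∑ k : Fin K, (1/(K:ℝ)) * f (A k) := by
    intro f
    simp only [hα, Finset.sum_mul]
    rw [Finset.sum_comm]
    refine Finset.sum_congr rfl fun k _ => ?_
    rw [Finset.sum_eq_single (A k)]
    · simp
    · intro S _ hS; simp [hS]
    · simp
  have hmono : ∀ S T : Finset (Fin K × Fin K), S ⊆ T → c S ≤ c T := by
    intro S T hST
    rw [hc, hc]
    exact_mod_cast Finset.sup_mono_fun fun k _ =>
      Finset.card_le_card (Finset.inter_subset_inter hST (subset_refl _))
  have hsub : ∀ S T : Finset (Fin K × Fin K), c (S ∪ T) ≤ c S + c T := by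
    intro S T
    rw [hc, hc, hc]
    have : (Finset.univ.sup (fun k : Fin K => ((S ∪ T) ∩ A k).card)) ≤
        (Finset.univ.sup (fun k : Fin K => (S ∩ A k).card)) +
        (Finset.univ.sup (fun k : Fin K => (T ∩ A k).card)) := by
      refine Finset.sup_le fun k _ => ?_
      calc ((S ∪ T) ∩ A k).card = ((S ∩ A k) ∪ (T ∩ A k)).card := by
              rw [Finset.union_inter_distrib_right]
        _ ≤ (S ∩ A k).card + (T ∩ A k).card := Finset.card_union_le _ _
        _ ≤ _ := add_le_add
              (Finset.le_sup (f := fun k : Fin K => (S ∩ A k).card) (Finset.mem_univ k))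
              (Finset.le_sup (f := fun k : Fin K => (T ∩ A k).card) (Finset.mem_univ k))
    exact_mod_cast this
  have hdist : IsDistWithMarginals (fun _ : Fin K × Fin K => 1 / (K : ℝ)) α := by
    refine ⟨fun S => ?_, ?_, fun i => ?_⟩
    · rw [hα]
      refine Finset.sum_nonneg fun k _ => ?_
      positivity
    · have h := key (fun _ => 1)
      simp only [mul_one] at h
      rw [h, Finset.sum_const, Finset.card_univ, Fintype.card_fin, nsmul_eq_mul]
      field_simp
    · rw [Finset.sum_filter]
      have h1 : ∀ S : Finset (Fin K × Fin K), (if i ∈ S then α S else 0) =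
          α S * (if i ∈ S then 1 else 0) := by
        intro S; split <;> simp
      simp only [h1]
      rw [key (fun S => if i ∈ S then 1 else 0)]
      have h2 : ∀ k : Fin K, (1/(K:ℝ)) * (if i ∈ A k then 1 else 0) =
          if k = i.1 then 1/(K:ℝ) else 0 := by
        intro k
        by_cases h : k = i.1 <;> simp [h, hmem, eq_comm]
      simp only [h2]
      simp
  have hexp : expVal α c = K := by
    rw [expVal, key c]
    simp only [hcA]
    rw [Finset.sum_const, Finset.card_univ, Fintype.card_fin, nsmul_eq_mul]
    field_simp
  refine ⟨hmono, hsub, hdist, hexp, ?_, ?_⟩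
  · have hbdd : BddAbove {v | ∃ β, IsDistWithMarginals
        (fun _ : Fin K × Fin K => 1 / (K : ℝ)) β ∧ v = expVal β c} := by
      refine ⟨K, fun v hv => ?_⟩
      obtain ⟨β, ⟨hβ0, hβ1, _⟩, rfl⟩ := hv
      calc expVal β c ≤ ∑ S : Finset (Fin K × Fin K), β S * K :=
            Finset.sum_le_sum fun S _ => mul_le_mul_of_nonneg_left (hcS S) (hβ0 S)
        _ = K := by rw [← Finset.sum_mul, hβ1, one_mul]
    have hmem' : (K:ℝ) ∈ {v | ∃ β, IsDistWithMarginals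
        (fun _ : Fin K × Fin K => 1 / (K : ℝ)) β ∧ v = expVal β c} :=
      ⟨α, hdist, hexp.symm⟩
    exact le_csSup hbdd hmem'
  · rw [Fintype.card_prod, Fintype.card_fin]
    push_cast
    exact Real.sqrt_mul_self (by positivity)
end
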